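/- arXiv:1710.05714 — 7 statements merged into one kernel-verified Lean document; each statement's English description precedes it below -/
import Mathlib

section
/- Let 𝒜 be a downset in B(n), and let ℐ be the set of the first |𝒜| elements of B(n) in the level-colex order. Then m(𝒜) ≤ m(ℐ). -/
open scoped Classical

/-- The set of maximal elements of a family of finite sets (sets of the family
not properly contained in another set of the family). -/
noncomputable def maximals (F : Finset (Finset ℕ)) : Finset (Finset ℕ) :=
  F.filter (fun A => ∀ B ∈ F, A ⊆ B → A = B)

/-- Colex order: `A < B` iff the largest element of `A Δ B` lies in `B`. -/
def colexLT (A B : Finset ℕ) : Prop :=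
  ∃ k, k ∈ B ∧ k ∉ A ∧ ∀ j, k < j → (j ∈ A ↔ j ∈ B)

/-- Level-colex order: first compare cardinalities, then use colex. -/
def lcLT (A B : Finset ℕ) : Prop :=
  A.card < B.card ∨ (A.card = B.card ∧ colexLT A B)

namespace LCProof

open Finset Colex UV
open scoped FinsetFamily

/-- Bridge between our `colexLT` and Mathlib's colex order. -/
lemma colexLT_iff {A B : Finset ℕ} : colexLT A B ↔ toColex A < toColex B := by
  rw [Finset.Colex.lt_iff_exists_filter_lt]
  constructor
  · rintro ⟨k, hkB, hkA, h⟩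
    refine ⟨k, mem_sdiff.2 ⟨hkB, hkA⟩, ?_⟩
    ext j
    simp only [mem_filter]
    constructor
    · rintro ⟨hj, hk⟩; exact ⟨(h j hk).1 hj, hk⟩
    · rintro ⟨hj, hk⟩; exact ⟨(h j hk).2 hj, hk⟩
  · rintro ⟨w, hw, hfil⟩
    rw [mem_sdiff] at hw
    refine ⟨w, hw.1, hw.2, fun j hj => ?_⟩
    have := Finset.ext_iff.1 hfil j
    simp only [mem_filter] at this
    constructor
    · intro hjA; exact (this.1 ⟨hjA, hj⟩).1
    · intro hjB; exact (this.2 ⟨hjB, hj⟩).1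

lemma colexLT_irrefl (A : Finset ℕ) : ¬ colexLT A A := by
  rintro ⟨k, hk, hk', -⟩; exact hk' hk

lemma lcLT_irrefl (A : Finset ℕ) : ¬ lcLT A A := by
  rintro (h | ⟨-, h⟩)
  · exact lt_irrefl _ h
  · exact colexLT_irrefl A h

lemma lcLT_total {A B : Finset ℕ} (h : A ≠ B) : lcLT A B ∨ lcLT B A := by
  rcases lt_trichotomy A.card B.card with hc | hc | hc
  · exact Or.inl (Or.inl hc)
  · have h2 : toColex A ≠ toColex B := by simpa using h
    rcases h2.lt_or_gt with h' | h'
    · exact Or.inl (Or.inr ⟨hc, colexLT_iff.2 h'⟩)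
    · exact Or.inr (Or.inr ⟨hc.symm, colexLT_iff.2 h'⟩)
  · exact Or.inr (Or.inl hc)

/-- The class of compressions we use: replacing `V` by `U` strictly decreases
the level-colex order. -/
def Good (U V : Finset ℕ) : Prop :=
  Disjoint U V ∧ (U.card < V.card ∨
    (U.card = V.card ∧ ∃ (hU : U.Nonempty) (hV : V.Nonempty), U.max' hU < V.max' hV))

/-- Compressing along a `Good` pair strictly decreases `lcLT` (when it moves). -/
lemma compress_lcLT {U V A : Finset ℕ} (hG : Good U V) (h : compress U V A ≠ A) :
    lcLT (compress U V A) A := by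
  have hcond : Disjoint U A ∧ V ≤ A := by
    by_contra hc
    exact h (if_neg hc)
  have hUA : Disjoint U A := hcond.1
  have hVA : V ⊆ A := hcond.2
  have hco : compress U V A = (A ∪ U) \ V := if_pos hcond
  have hVAU : V ⊆ A ∪ U := hVA.trans subset_union_left
  have hcard : (compress U V A).card = A.card + U.card - V.card := by
    rw [hco, card_sdiff_of_subset hVAU, card_union_of_disjoint hUA.symm]
  have hVle : V.card ≤ A.card := card_le_card hVA
  rcases hG.2 with hlt | ⟨heq, hU, hV, hmax⟩
  · left
    rw [hcard]
    omega
  · right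
    constructor
    · rw [hcard]; omega
    · exact colexLT_iff.2 (UV.toColex_compress_lt_toColex hmax h)

/-- A weight function on sets making `lcLT` a subrelation of `<` on weights. -/
def w (n : ℕ) (A : Finset ℕ) : ℕ := 2 ^ (n + 1) * A.card + ∑ a ∈ A, 2 ^ a

lemma sum_range_pow_two (k : ℕ) : ∑ a ∈ Finset.range k, 2 ^ a = 2 ^ k - 1 := by
  induction k with
  | zero => simp
  | succ k ih =>
      rw [Finset.sum_range_succ, ih]
      have h1 : 1 ≤ 2 ^ k := Nat.one_le_two_pow
      have h2 : 2 ^ (k + 1) = 2 ^ k * 2 := pow_succ 2 k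
      omega

lemma sum_pow_lt {n : ℕ} {A : Finset ℕ} (hA : A ⊆ Finset.Icc 1 n) :
    ∑ a ∈ A, 2 ^ a < 2 ^ (n + 1) := by
  have h1 : ∑ a ∈ A, 2 ^ a ≤ ∑ a ∈ Finset.range (n + 1), 2 ^ a := by
    refine Finset.sum_le_sum_of_subset (fun x hx => ?_)
    have := hA hx
    rw [Finset.mem_Icc] at this
    rw [Finset.mem_range]
    omega
  rw [sum_range_pow_two] at h1
  have h2 : 1 ≤ 2 ^ (n + 1) := Nat.one_le_two_pow
  omega

lemma w_lt {n : ℕ} {A B : Finset ℕ} (hA : A ⊆ Finset.Icc 1 n) (hB : B ⊆ Finset.Icc 1 n)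
    (h : lcLT B A) : w n B < w n A := by
  rcases h with hc | ⟨hc, hcol⟩
  · have h1 : ∑ a ∈ B, 2 ^ a < 2 ^ (n + 1) := sum_pow_lt hB
    unfold w
    calc 2 ^ (n + 1) * B.card + ∑ a ∈ B, 2 ^ a
        < 2 ^ (n + 1) * B.card + 2 ^ (n + 1) := Nat.add_lt_add_left h1 _
      _ = 2 ^ (n + 1) * (B.card + 1) := by ring
      _ ≤ 2 ^ (n + 1) * A.card := Nat.mul_le_mul_left _ (by omega)
      _ ≤ 2 ^ (n + 1) * A.card + ∑ a ∈ A, 2 ^ a := Nat.le_add_right _ _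
  · have h2 : ∑ i ∈ B, 2 ^ i < ∑ i ∈ A, 2 ^ i :=
      (Finset.geomSum_lt_geomSum_iff_toColex_lt_toColex (le_refl 2)).2 (colexLT_iff.1 hcol)
    unfold w
    rw [hc]
    exact Nat.add_lt_add_left h2 _

/-- Family measure. -/
def fm (n : ℕ) (F : Finset (Finset ℕ)) : ℕ := ∑ A ∈ F, w n A

/-- Compression preserves living inside the powerset of `Icc 1 n`. -/
lemma compression_subset_powerset {n : ℕ} {U V : Finset ℕ} {F : Finset (Finset ℕ)}
    (hF : F ⊆ (Finset.Icc 1 n).powerset) (hU : U ⊆ Finset.Icc 1 n) :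
    𝓒 U V F ⊆ (Finset.Icc 1 n).powerset := by
  intro B hB
  rw [UV.mem_compression] at hB
  rcases hB with ⟨hB, -⟩ | ⟨-, A, hA, rfl⟩
  · exact hF hB
  · have hA' : A ⊆ Finset.Icc 1 n := Finset.mem_powerset.1 (hF hA)
    rw [Finset.mem_powerset]
    unfold compress
    split_ifs with hc
    · refine Finset.sdiff_subset.trans ?_
      exact Finset.union_subset hA' hU
    · exact hA'

/-- Applying a `Good` compression that moves something strictly decreases the measure. -/
lemma fm_compression_lt {n : ℕ} {U V : Finset ℕ} {F : Finset (Finset ℕ)}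
    (hF : F ⊆ (Finset.Icc 1 n).powerset) (hU : U ⊆ Finset.Icc 1 n) (hG : Good U V)
    (h : 𝓒 U V F ≠ F) : fm n (𝓒 U V F) < fm n F := by
  rw [UV.compression] at h ⊢
  have q : ∀ Q ∈ F.filter (fun A => compress U V A ∉ F), compress U V Q ≠ Q := by
    intro Q hQ hEq
    rw [mem_filter] at hQ
    rw [hEq] at hQ
    exact hQ.2 hQ.1
  have uA : F.filter (fun A => compress U V A ∈ F) ∪ F.filter (fun A => compress U V A ∉ F) = F :=
    filter_union_filter_not_eq _ _
  have ne₂ : (F.filter fun A => compress U V A ∉ F).Nonempty := by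
    refine nonempty_iff_ne_empty.2 fun z => h ?_
    rw [filter_image, z, image_empty, union_empty]
    rwa [z, union_empty] at uA
  rw [fm, fm, sum_union UV.compress_disjoint]
  conv_rhs => rw [← uA]
  rw [sum_union (disjoint_filter_filter_not _ _ _), add_lt_add_iff_left, filter_image,
    sum_image UV.compress_injOn]
  refine sum_lt_sum_of_nonempty ne₂ fun A hA => ?_
  have hAF : A ∈ F := (mem_filter.1 hA).1
  have hAsub : A ⊆ Finset.Icc 1 n := Finset.mem_powerset.1 (hF hAF)
  have hcsub : compress U V A ⊆ Finset.Icc 1 n := by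
    unfold compress
    split_ifs with hc
    · exact Finset.sdiff_subset.trans (Finset.union_subset hAsub hU)
    · exact hAsub
  exact w_lt hAsub hcsub (compress_lcLT hG (q _ hA))

/-- `F` is an initial segment for the level-colex order inside `Icc 1 n`. -/
def IsLCInit (n : ℕ) (F : Finset (Finset ℕ)) : Prop :=
  ∀ A ∈ F, ∀ B ⊆ Finset.Icc 1 n, lcLT B A → B ∈ F

/-- Main compression lemma: any family inside the powerset can be replaced by an
lc-initial segment of the same size whose shadow is no larger. -/
lemma exists_initial (n : ℕ) (F : Finset (Finset ℕ)) (hF : F ⊆ (Finset.Icc 1 n).powerset) :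
    ∃ B : Finset (Finset ℕ), B ⊆ (Finset.Icc 1 n).powerset ∧ (∂ B).card ≤ (∂ F).card ∧
      F.card = B.card ∧ IsLCInit n B := by
  set usable : Finset (Finset ℕ × Finset ℕ) :=
    ((Finset.Icc 1 n).powerset ×ˢ (Finset.Icc 1 n).powerset).filter
      (fun t => Good t.1 t.2 ∧ ¬ IsCompressed t.1 t.2 F) with husable_def
  rcases usable.eq_empty_or_nonempty with husable | husable
  · refine ⟨F, hF, le_rfl, rfl, ?_⟩
    intro A hA B hB hlc
    by_contra hBF
    have hAsub : A ⊆ Finset.Icc 1 n := Finset.mem_powerset.1 (hF hA)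
    -- the pair (B \ A, A \ B) is Good and not compressed
    have hne : B ≠ A := fun hEq => (by rw [hEq] at hlc; exact lcLT_irrefl A hlc)
    have hgood : Good (B \ A) (A \ B) := by
      constructor
      · exact disjoint_sdiff_sdiff
      · rcases hlc with hc | ⟨hc, k, hkA, hkB, hk⟩
        · left
          have e1 : (B \ A).card + (B ∩ A).card = B.card := card_sdiff_add_card_inter B A
          have e2 : (A \ B).card + (A ∩ B).card = A.card := card_sdiff_add_card_inter A B
          rw [Finset.inter_comm] at e1
          omega
        · right
          have hVne : (A \ B).Nonempty := ⟨k, mem_sdiff.2 ⟨hkA, hkB⟩⟩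
          have hUne : (B \ A).Nonempty := by
            rw [sdiff_nonempty]
            intro hsub
            exact hne (Finset.eq_of_subset_of_card_le hsub (le_of_eq hc.symm))
          refine ⟨?_, hUne, hVne, ?_⟩
          · have e1 : (B \ A).card + (B ∩ A).card = B.card := card_sdiff_add_card_inter B A
            have e2 : (A \ B).card + (A ∩ B).card = A.card := card_sdiff_add_card_inter A B
            rw [Finset.inter_comm] at e1
            omega
          · have hkV : k ∈ A \ B := mem_sdiff.2 ⟨hkA, hkB⟩
            have hmax : ∀ u ∈ B \ A, u < k := by
              intro u hu
              rw [mem_sdiff] at hu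
              by_contra hle
              push_neg at hle
              rcases lt_or_eq_of_le hle with hlt | hEq
              · exact hu.2 ((hk u hlt).1 hu.1)
              · exact hkB (hEq ▸ hu.1)
            have h1 : (B \ A).max' hUne < k := (max'_lt_iff _ _).2 hmax
            exact h1.trans_le (le_max' _ k hkV)
    have hnotc : ¬ IsCompressed (B \ A) (A \ B) F := by
      intro hIC
      have h1 : compress (B \ A) (A \ B) A ∈ 𝓒 (B \ A) (A \ B) F :=
        UV.compress_mem_compression hA
      rw [hIC.eq, compress_sdiff_sdiff] at h1
      exact hBF h1
    have : (B \ A, A \ B) ∈ usable := by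
      rw [husable_def, mem_filter, mem_product]
      exact ⟨⟨Finset.mem_powerset.2 (Finset.sdiff_subset.trans hB),
        Finset.mem_powerset.2 (Finset.sdiff_subset.trans hAsub)⟩, hgood, hnotc⟩
    rw [husable] at this
    exact absurd this (notMem_empty _)
  · obtain ⟨⟨U, V⟩, hUV, tmin⟩ := exists_min_image usable (fun t => t.1.card) husable
    rw [husable_def, mem_filter, mem_product] at hUV
    obtain ⟨⟨hUsub', hVsub'⟩, hgood, hnotc⟩ := hUV
    dsimp only at hUsub' hVsub' hgood hnotc
    have hUsub : U ⊆ Finset.Icc 1 n := Finset.mem_powerset.1 hUsub'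
    have hVsub : V ⊆ Finset.Icc 1 n := Finset.mem_powerset.1 hVsub'
    have h₂ : ∀ U₁ V₁ : Finset ℕ, U₁ ⊆ Finset.Icc 1 n → V₁ ⊆ Finset.Icc 1 n →
        Good U₁ V₁ → U₁.card < U.card → IsCompressed U₁ V₁ F := by
      intro U₁ V₁ hU₁ hV₁ hg hlt
      by_contra hc
      have : (U₁, V₁) ∈ usable := by
        rw [husable_def, mem_filter, mem_product]
        exact ⟨⟨Finset.mem_powerset.2 hU₁, Finset.mem_powerset.2 hV₁⟩, hg, hc⟩
      exact absurd (tmin _ this) (by simpa using hlt.not_ge)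
    -- shadow bound
    have hshadow : (∂ (𝓒 U V F)).card ≤ (∂ F).card := by
      refine UV.card_shadow_compression_le _ _ (fun x hx => ?_)
      have hVne : V.Nonempty := by
        rcases hgood.2 with hlt | ⟨-, -, hV, -⟩
        · exact card_pos.1 (by omega)
        · exact hV
      refine ⟨min' V hVne, min'_mem _ _, ?_⟩
      rcases hgood.2 with hlt | ⟨same_size, hU, hV, max_lt⟩
      · -- |U| < |V| : smaller pair still Good
        refine h₂ _ _ ((erase_subset _ _).trans hUsub) ((erase_subset _ _).trans hVsub)
          ⟨hgood.1.mono (erase_subset _ _) (erase_subset _ _), Or.inl ?_⟩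
          (card_erase_lt_of_mem hx)
        have hx1 : 1 ≤ U.card := card_pos.2 ⟨x, hx⟩
        rw [card_erase_of_mem hx, card_erase_of_mem (min'_mem _ _)]
        have := hlt
        set a := U.card
        set b := V.card
        omega
      · -- |U| = |V| : as in Mathlib's Kruskal-Katona
        obtain hU' | hU' := eq_or_lt_of_le (Nat.succ_le_iff.2 hU.card_pos)
        · have hUe : U.erase x = ∅ := by
            rw [← Finset.card_eq_zero, card_erase_of_mem hx, ← hU']
          have hVe : V.erase (min' V hVne) = ∅ := by
            rw [← Finset.card_eq_zero, card_erase_of_mem (min'_mem _ _), ← same_size, ← hU']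
          rw [hUe, hVe]
          exact UV.isCompressed_self _ _
        refine h₂ _ _ ((erase_subset _ _).trans hUsub) ((erase_subset _ _).trans hVsub)
          ⟨hgood.1.mono (erase_subset _ _) (erase_subset _ _), Or.inr ⟨?_, ?_, ?_, ?_⟩⟩
          (card_erase_lt_of_mem hx)
        · rw [card_erase_of_mem (min'_mem _ _), card_erase_of_mem hx, same_size]
        · rwa [← card_pos, card_erase_of_mem hx, tsub_pos_iff_lt]
        · rwa [← Finset.card_pos, card_erase_of_mem (min'_mem _ _), ← same_size, tsub_pos_iff_lt]
        · exact (Finset.max'_subset _ <| erase_subset _ _).trans_lt (max_lt.trans_le <|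
            le_max' _ _ <| mem_erase.2 ⟨(min'_lt_max'_of_card _
              (by rwa [← same_size])).ne', max'_mem _ _⟩)
    have hne : 𝓒 U V F ≠ F := fun hEq => hnotc hEq
    have hdec : fm n (𝓒 U V F) < fm n F := fm_compression_lt hF hUsub hgood hne
    obtain ⟨B, hB1, hB2, hB3, hB4⟩ :=
      exists_initial n (𝓒 U V F) (compression_subset_powerset hF hUsub)
    exact ⟨B, hB1, hB2.trans hshadow, (card_compression _ _ _).symm.trans hB3, hB4⟩
termination_by fm n F
decreasing_by exact hdec

/-- For a downset, the shadow is contained in the family. -/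
lemma shadow_subset_of_down {F : Finset (Finset ℕ)} (hdown : ∀ A ∈ F, ∀ B ⊆ A, B ∈ F) :
    ∂ F ⊆ F := by
  intro A hA
  rw [mem_shadow_iff_insert_mem] at hA
  obtain ⟨a, ha, hins⟩ := hA
  exact hdown _ hins _ (subset_insert _ _)

/-- For a downset, the maximal elements are exactly the family minus its shadow. -/
lemma card_maximals {F : Finset (Finset ℕ)} (hdown : ∀ A ∈ F, ∀ B ⊆ A, B ∈ F) :
    (maximals F).card = F.card - (∂ F).card := by
  have hsub : ∂ F ⊆ F := shadow_subset_of_down hdown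
  have heq : maximals F = F \ ∂ F := by
    ext A
    simp only [maximals, mem_filter, mem_sdiff, mem_shadow_iff_insert_mem]
    constructor
    · rintro ⟨hAF, hmax⟩
      refine ⟨hAF, ?_⟩
      rintro ⟨a, haA, hins⟩
      have h1 := hmax _ hins (subset_insert _ _)
      exact haA (by rw [h1]; exact mem_insert_self a A)
    · rintro ⟨hAF, hsh⟩
      refine ⟨hAF, fun B hBF hAB => ?_⟩
      by_contra hne
      obtain ⟨a, haB, haA⟩ := Finset.exists_of_ssubset (hAB.ssubset_of_ne hne)
      exact hsh ⟨a, haA, hdown _ hBF _ (insert_subset haB hAB)⟩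
  rw [heq, card_sdiff_of_subset hsub]

/-- Two lc-initial segments of the same size coincide. -/
lemma initial_unique {n : ℕ} {B I : Finset (Finset ℕ)} (hBsub : B ⊆ (Finset.Icc 1 n).powerset)
    (hBinit : IsLCInit n B) (hIsub : I ⊆ (Finset.Icc 1 n).powerset) (hIinit : IsLCInit n I)
    (hc : B.card = I.card) : B = I := by
  by_cases hsub : B ⊆ I
  · exact Finset.eq_of_subset_of_card_le hsub (le_of_eq hc.symm)
  · obtain ⟨A, hAB, hAI⟩ := not_subset.1 hsub
    have hIB : I ⊆ B := by
      intro X hX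
      rcases eq_or_ne X A with rfl | hne
      · exact absurd hX hAI
      rcases lcLT_total hne with h | h
      · exact hBinit A hAB X (Finset.mem_powerset.1 (hIsub hX)) h
      · exact absurd (hIinit X hX A (Finset.mem_powerset.1 (hBsub hAB)) h) hAI
    exact (Finset.eq_of_subset_of_card_le hIB (le_of_eq hc)).symm

end LCProof

theorem maximals_le_maximals_initSeg (n : ℕ) (𝒜 ℐ : Finset (Finset ℕ))
    (h𝒜 : ∀ A ∈ 𝒜, A ⊆ Finset.Icc 1 n)
    (hdown : ∀ A ∈ 𝒜, ∀ B ⊆ A, B ∈ 𝒜)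
    (hℐ : ∀ A ∈ ℐ, A ⊆ Finset.Icc 1 n)
    (hinit : ∀ A ∈ ℐ, ∀ B ⊆ Finset.Icc 1 n, lcLT B A → B ∈ ℐ)
    (hcard : ℐ.card = 𝒜.card) :
    (maximals 𝒜).card ≤ (maximals ℐ).card := by
  have hA_sub : 𝒜 ⊆ (Finset.Icc 1 n).powerset := fun A hA => Finset.mem_powerset.2 (h𝒜 A hA)
  have hI_sub : ℐ ⊆ (Finset.Icc 1 n).powerset := fun A hA => Finset.mem_powerset.2 (hℐ A hA)
  have hIdown : ∀ A ∈ ℐ, ∀ B ⊆ A, B ∈ ℐ := by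
    intro A hA B hBA
    rcases eq_or_ne B A with rfl | hne
    · exact hA
    · refine hinit A hA B (hBA.trans (hℐ A hA)) (Or.inl ?_)
      exact Finset.card_lt_card (hBA.ssubset_of_ne hne)
  obtain ⟨B, hB1, hB2, hB3, hB4⟩ := LCProof.exists_initial n 𝒜 hA_sub
  have hBI : B = ℐ := LCProof.initial_unique hB1 hB4 hI_sub hinit (by rw [← hB3, hcard])
  rw [LCProof.card_maximals hdown, LCProof.card_maximals hIdown, hcard]
  refine Nat.sub_le_sub_left ?_ _
  rw [← hBI]
  exact hB2
end

section
/- For every binary downset D of B(n), the width w(D) equals the number of special points contained in D, i.e., w(D) = |{A ∈ D : 2·|A ∩ {1,…,t}| ≤ t for every t ∈ [n]}|. -/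
open scoped Classical

/-- The width of a finite family of finite sets: the maximum size of an
antichain (under inclusion) contained in the family. -/
noncomputable def width (F : Finset (Finset ℕ)) : ℕ :=
  (F.powerset.filter (fun A => ∀ x ∈ A, ∀ y ∈ A, x ≠ y → ¬ x ⊆ y)).sup Finset.card

/-- Binary order: `A <_b B` iff the largest element of `A Δ B` lies in `B`. -/
def binLT (A B : Finset ℕ) : Prop :=
  ∃ k, k ∈ B ∧ k ∉ A ∧ ∀ j, k < j → (j ∈ A ↔ j ∈ B)

/-- A subset `A ⊆ [n]` is a special point if `2·|A ∩ [t]| ≤ t` for all `t ∈ [n]`. -/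
def SpecialPoint (n : ℕ) (A : Finset ℕ) : Prop :=
  ∀ t ∈ Finset.Icc 1 n, 2 * (A ∩ Finset.Icc 1 t).card ≤ t

open Finset

/-- Greene–Kleitman chain minimum. -/
def gkmin : ℕ → Finset ℕ → Finset ℕ
  | 0, _ => ∅
  | (n+1), A =>
    if (n+1) ∈ A then
      (if (A.erase (n+1)).card + (gkmin n (A.erase (n+1))).card = n
       then gkmin n (A.erase (n+1))
       else insert (n+1) (gkmin n (A.erase (n+1))))
    else gkmin n A

lemma special_zero (S : Finset ℕ) : SpecialPoint 0 S := by
  intro t ht; simp only [Finset.mem_Icc] at ht; omega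

lemma special_card {n : ℕ} {S : Finset ℕ} (hS : S ⊆ Icc 1 n) (h : SpecialPoint n S) :
    2 * S.card ≤ n := by
  cases n with
  | zero => simp at hS; simp [hS]
  | succ m =>
    have := h (m+1) (by simp)
    rwa [inter_eq_left.mpr hS] at this

lemma special_mono {n : ℕ} {S : Finset ℕ} (hS : S ⊆ Icc 1 n) (h : SpecialPoint n S) :
    SpecialPoint (n+1) S := by
  intro t ht
  simp only [mem_Icc] at ht
  rcases Nat.lt_or_ge t (n+1) with h1 | h1
  · exact h t (by simp only [mem_Icc]; omega)
  · have ht' : t = n + 1 := by omega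
    subst ht'
    have : S ∩ Icc 1 (n+1) = S := inter_eq_left.mpr (hS.trans (Icc_subset_Icc_right (by omega)))
    rw [this]
    have := special_card hS h
    omega

lemma special_restrict {n : ℕ} {S : Finset ℕ} (hS : S ⊆ Icc 1 n) (h : SpecialPoint (n+1) S) :
    SpecialPoint n S := by
  intro t ht
  simp only [mem_Icc] at ht
  exact h t (by simp only [mem_Icc]; omega)

lemma special_insert {n : ℕ} {S : Finset ℕ} (hS : S ⊆ Icc 1 n) (h : SpecialPoint n S)
    (hcard : 2 * (S.card + 1) ≤ n + 1) : SpecialPoint (n+1) (insert (n+1) S) := by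
  intro t ht
  simp only [mem_Icc] at ht
  rcases Nat.lt_or_ge t (n+1) with h1 | h1
  · have hni : (n+1) ∉ Icc 1 t := by simp only [mem_Icc]; omega
    rw [insert_inter_of_notMem hni]
    exact h t (by simp only [mem_Icc]; omega)
  · have ht' : t = n + 1 := by omega
    subst ht'
    have hsub : insert (n+1) S ⊆ Icc 1 (n+1) := by
      intro x hx
      rcases mem_insert.mp hx with rfl | hx
      · simp
      · exact (hS.trans (Icc_subset_Icc_right (by omega))) hx
    rw [inter_eq_left.mpr hsub, card_insert_of_notMem (fun hc => by
      have := hS hc; simp only [mem_Icc] at this; omega)]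
    omega

lemma special_insert_restrict {n : ℕ} {S : Finset ℕ} (hS : S ⊆ Icc 1 n)
    (h : SpecialPoint (n+1) (insert (n+1) S)) : SpecialPoint n S := by
  intro t ht
  simp only [mem_Icc] at ht
  have := h t (by simp only [mem_Icc]; omega)
  rwa [insert_inter_of_notMem (by simp only [mem_Icc]; omega)] at this

-- L1
lemma gkmin_subset : ∀ (n : ℕ) (A : Finset ℕ), gkmin n A ⊆ A := by
  intro n
  induction n with
  | zero => intro A; simp [gkmin]
  | succ n ih =>
    intro A
    rw [gkmin]
    split_ifs with h1 h2
    · exact (ih _).trans (erase_subset _ _)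
    · intro x hx
      rcases mem_insert.mp hx with rfl | hx
      · exact h1
      · exact (erase_subset _ _) ((ih _) hx)
    · exact ih A

-- L2
lemma gkmin_card : ∀ (n : ℕ) (A : Finset ℕ), A ⊆ Icc 1 n → A.card + (gkmin n A).card ≤ n := by
  intro n
  induction n with
  | zero => intro A hA; simp at hA; simp [hA, gkmin]
  | succ n ih =>
    intro A hA
    rw [gkmin]
    split_ifs with h1 h2
    · have hsub : A.erase (n+1) ⊆ Icc 1 n := by
        intro x hx
        have hx1 := hA (erase_subset _ _ hx)
        simp only [mem_Icc] at hx1 ⊢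
        have := (mem_erase.mp hx).1
        omega
      have hc : A.card = (A.erase (n+1)).card + 1 := by
        rw [card_erase_of_mem h1]; have := card_pos.mpr ⟨_, h1⟩; omega
      omega
    · have hsub : A.erase (n+1) ⊆ Icc 1 n := by
        intro x hx
        have hx1 := hA (erase_subset _ _ hx)
        simp only [mem_Icc] at hx1 ⊢
        have := (mem_erase.mp hx).1
        omega
      have := ih _ hsub
      have hc : A.card = (A.erase (n+1)).card + 1 := by
        rw [card_erase_of_mem h1]; have := card_pos.mpr ⟨_, h1⟩; omega
      have hni : (n+1) ∉ gkmin n (A.erase (n+1)) := fun hc' => by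
        have := (gkmin_subset n _).trans hsub hc'
        simp only [mem_Icc] at this; omega
      rw [card_insert_of_notMem hni]
      omega
    · have hsub : A ⊆ Icc 1 n := by
        intro x hx
        have hx1 := hA hx
        simp only [mem_Icc] at hx1 ⊢
        rcases Nat.lt_or_ge x (n+1) with h | h
        · omega
        · exfalso; have hx2 : x = n+1 := by omega
          exact h1 (hx2 ▸ hx)
      exact Nat.le_succ_of_le (ih _ hsub)

lemma erase_subset_Icc {n : ℕ} {A : Finset ℕ} (hA : A ⊆ Icc 1 (n+1)) :
    A.erase (n+1) ⊆ Icc 1 n := by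
  intro x hx
  have hx1 := hA (erase_subset _ _ hx)
  simp only [mem_Icc] at hx1 ⊢
  have := (mem_erase.mp hx).1
  omega

lemma subset_Icc_of_not_mem {n : ℕ} {A : Finset ℕ} (hA : A ⊆ Icc 1 (n+1)) (h : (n+1) ∉ A) :
    A ⊆ Icc 1 n := by
  intro x hx
  have hx1 := hA hx
  simp only [mem_Icc] at hx1 ⊢
  rcases Nat.lt_or_ge x (n+1) with hl | hl
  · omega
  · exfalso; have hx2 : x = n+1 := by omega
    exact h (hx2 ▸ hx)

-- L3
lemma gkmin_special : ∀ (n : ℕ) (A : Finset ℕ), A ⊆ Icc 1 n → SpecialPoint n (gkmin n A) := by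
  intro n
  induction n with
  | zero => intro A _; exact special_zero _
  | succ n ih =>
    intro A hA
    rw [gkmin]
    split_ifs with h1 h2
    · have hsub := erase_subset_Icc hA
      exact special_mono ((gkmin_subset n _).trans hsub) (ih _ hsub)
    · have hsub := erase_subset_Icc hA
      have hSsub := (gkmin_subset n _).trans hsub
      refine special_insert hSsub (ih _ hsub) ?_
      have hle := gkmin_card n _ hsub
      have hcle : (gkmin n (A.erase (n+1))).card ≤ (A.erase (n+1)).card :=
        card_le_card (gkmin_subset n _)
      omega
    · have hsub := subset_Icc_of_not_mem hA h1
      exact special_mono ((gkmin_subset n _).trans hsub) (ih _ hsub)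

lemma insert_erase_self {n : ℕ} {A : Finset ℕ} (h : n ∈ A) : insert n (A.erase n) = A :=
  Finset.insert_erase h

-- L4 : fibers are chains
lemma gkmin_fiber_chain : ∀ (n : ℕ) (A B : Finset ℕ), A ⊆ Icc 1 n → B ⊆ Icc 1 n →
    gkmin n A = gkmin n B → A ⊆ B ∨ B ⊆ A := by
  intro n
  induction n with
  | zero =>
    intro A B hA hB _
    simp at hA hB
    left; rw [hA, hB]
  | succ n ih =>
    intro A B hA hB heq
    -- helper facts
    have key : ∀ (X Y : Finset ℕ), X ⊆ Icc 1 (n+1) → Y ⊆ Icc 1 (n+1) →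
        (n+1) ∈ X → (n+1) ∉ Y → gkmin (n+1) X = gkmin (n+1) Y → Y ⊆ X := by
      intro X Y hX hY hmX hmY h
      have hYsub := subset_Icc_of_not_mem hY hmY
      have hXsub := erase_subset_Icc hX
      rw [gkmin] at h
      rw [if_pos hmX] at h
      have hY' : gkmin (n+1) Y = gkmin n Y := by rw [gkmin, if_neg hmY]
      rw [hY'] at h
      have hnY : (n+1) ∉ gkmin n Y := fun hc => by
        have := (gkmin_subset n Y).trans hYsub hc
        simp only [mem_Icc] at this; omega
      by_cases htop : (X.erase (n+1)).card + (gkmin n (X.erase (n+1))).card = n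
      · rw [if_pos htop] at h
        have hcomp := ih _ _ hXsub hYsub h
        have hcY := gkmin_card n Y hYsub
        have hcard : Y.card ≤ (X.erase (n+1)).card := by
          rw [h] at htop; omega
        have hYX : Y ⊆ X.erase (n+1) := by
          rcases hcomp with hc | hc
          · have : X.erase (n+1) = Y := Finset.eq_of_subset_of_card_le hc hcard
            rw [this]
          · exact hc
        exact hYX.trans (erase_subset _ _)
      · rw [if_neg htop] at h
        exfalso
        exact hnY (h ▸ mem_insert_self _ _)
    by_cases hmA : (n+1) ∈ A <;> by_cases hmB : (n+1) ∈ B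
    · -- both contain n+1
      have hAsub := erase_subset_Icc hA
      have hBsub := erase_subset_Icc hB
      rw [gkmin, if_pos hmA, gkmin, if_pos hmB] at heq
      have hnA : (n+1) ∉ gkmin n (A.erase (n+1)) := fun hc => by
        have := (gkmin_subset n _).trans hAsub hc
        simp only [mem_Icc] at this; omega
      have hnB : (n+1) ∉ gkmin n (B.erase (n+1)) := fun hc => by
        have := (gkmin_subset n _).trans hBsub hc
        simp only [mem_Icc] at this; omega
      by_cases htA : (A.erase (n+1)).card + (gkmin n (A.erase (n+1))).card = n <;>
        by_cases htB : (B.erase (n+1)).card + (gkmin n (B.erase (n+1))).card = n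
      · rw [if_pos htA, if_pos htB] at heq
        have hcomp := ih _ _ hAsub hBsub heq
        have hcards : (A.erase (n+1)).card = (B.erase (n+1)).card := by
          rw [heq] at htA; omega
        have hAB : A.erase (n+1) = B.erase (n+1) := by
          rcases hcomp with hc | hc
          · exact Finset.eq_of_subset_of_card_le hc (le_of_eq hcards.symm)
          · exact (Finset.eq_of_subset_of_card_le hc (le_of_eq hcards)).symm
        left
        rw [← insert_erase_self hmA, ← insert_erase_self hmB, hAB]
      · rw [if_pos htA, if_neg htB] at heq
        exact absurd (heq ▸ mem_insert_self (n+1) _) hnA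
      · rw [if_neg htA, if_pos htB] at heq
        exact absurd (heq.symm ▸ mem_insert_self (n+1) _) hnB
      · rw [if_neg htA, if_neg htB] at heq
        have heq' : gkmin n (A.erase (n+1)) = gkmin n (B.erase (n+1)) := by
          have := congrArg (fun s => Finset.erase s (n+1)) heq
          simpa [Finset.erase_insert hnA, Finset.erase_insert hnB] using this
        rcases ih _ _ hAsub hBsub heq' with hc | hc
        · left
          rw [← insert_erase_self hmA, ← insert_erase_self hmB]
          exact insert_subset_insert _ hc
        · right
          rw [← insert_erase_self hmA, ← insert_erase_self hmB]
          exact insert_subset_insert _ hc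
    · right; exact key A B hA hB hmA hmB heq
    · left; exact key B A hB hA hmB hmA heq.symm
    · have hAsub := subset_Icc_of_not_mem hA hmA
      have hBsub := subset_Icc_of_not_mem hB hmB
      rw [gkmin, if_neg hmA, gkmin, if_neg hmB] at heq
      exact ih _ _ hAsub hBsub heq

-- L5 : each fiber reaches every level between |S| and n - |S|
lemma gkmin_reach : ∀ (n : ℕ) (S : Finset ℕ), S ⊆ Icc 1 n → SpecialPoint n S →
    ∀ L, S.card ≤ L → L + S.card ≤ n →
    ∃ A, A ⊆ Icc 1 n ∧ A.card = L ∧ gkmin n A = S := by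
  intro n
  induction n with
  | zero =>
    intro S hS _ L hL1 hL2
    simp at hS
    subst hS
    refine ⟨∅, by simp, ?_, by simp [gkmin]⟩
    simp at hL1 hL2 ⊢; omega
  | succ n ih =>
    intro S hS hspec L hL1 hL2
    by_cases hmS : (n+1) ∈ S
    · -- S contains n+1 : pick a non-top element of the fiber of S₀ and insert n+1
      set S₀ := S.erase (n+1) with hS0
      have hS0sub : S₀ ⊆ Icc 1 n := erase_subset_Icc hS
      have hS0spec : SpecialPoint n S₀ := special_insert_restrict hS0sub
        (by rwa [insert_erase_self hmS])
      have hScard : S.card = S₀.card + 1 := by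
        rw [hS0, card_erase_of_mem hmS]
        have := card_pos.mpr ⟨_, hmS⟩; omega
      have h2S := special_card hS hspec
      obtain ⟨A₀, hA₀sub, hA₀card, hA₀gk⟩ := ih S₀ hS0sub hS0spec (L - 1)
        (by omega) (by omega)
      refine ⟨insert (n+1) A₀, ?_, ?_, ?_⟩
      · intro x hx
        rcases mem_insert.mp hx with rfl | hx
        · simp
        · exact (hA₀sub.trans (Icc_subset_Icc_right (by omega))) hx
      · have : (n+1) ∉ A₀ := fun hc => by
          have := hA₀sub hc; simp only [mem_Icc] at this; omega
        rw [card_insert_of_notMem this]; omega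
      · have hmem : (n+1) ∈ insert (n+1) A₀ := mem_insert_self _ _
        have herase : (insert (n+1) A₀).erase (n+1) = A₀ :=
          Finset.erase_insert (fun hc => by
            have := hA₀sub hc; simp only [mem_Icc] at this; omega)
        rw [gkmin, if_pos hmem, herase, hA₀gk]
        have hnottop : ¬ (A₀.card + S₀.card = n) := by omega
        rw [if_neg hnottop, ← hA₀gk]
        rw [hA₀gk, ← insert_erase_self hmS]
    · have hSsub : S ⊆ Icc 1 n := subset_Icc_of_not_mem hS hmS
      have hSspec : SpecialPoint n S := special_restrict hSsub hspec
      have h2S := special_card hSsub hSspec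
      rcases Nat.lt_or_ge (L + S.card) (n+1) with hcase | hcase
      · obtain ⟨A, hAsub, hAcard, hAgk⟩ := ih S hSsub hSspec L hL1 (by omega)
        refine ⟨A, hAsub.trans (Icc_subset_Icc_right (by omega)), hAcard, ?_⟩
        have hmA : (n+1) ∉ A := fun hc => by
          have := hAsub hc; simp only [mem_Icc] at this; omega
        rw [gkmin, if_neg hmA, hAgk]
      · -- L = n + 1 - S.card : take the top
        have hLeq : L = n + 1 - S.card := by omega
        obtain ⟨A', hA'sub, hA'card, hA'gk⟩ := ih S hSsub hSspec (n - S.card)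
          (by omega) (by omega)
        have hmA' : (n+1) ∉ A' := fun hc => by
          have := hA'sub hc; simp only [mem_Icc] at this; omega
        refine ⟨insert (n+1) A', ?_, ?_, ?_⟩
        · intro x hx
          rcases mem_insert.mp hx with rfl | hx
          · simp
          · exact (hA'sub.trans (Icc_subset_Icc_right (by omega))) hx
        · rw [card_insert_of_notMem hmA']; omega
        · have hmem : (n+1) ∈ insert (n+1) A' := mem_insert_self _ _
          have herase : (insert (n+1) A').erase (n+1) = A' := Finset.erase_insert hmA'
          rw [gkmin, if_pos hmem, herase, hA'gk, if_pos (by omega)]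

-- Counting special points of B(m) of small size
lemma special_count (m L : ℕ) (hL : L ≤ m) :
    ((Icc 1 m).powerset.filter
      (fun S => SpecialPoint m S ∧ S.card ≤ min L (m - L))).card = m.choose L := by
  have hc : (Finset.powersetCard L (Icc 1 m)).card = m.choose L := by
    rw [Finset.card_powersetCard, Nat.card_Icc]; simp
  rw [← hc]
  refine (Finset.card_bij (fun A _ => gkmin m A) ?_ ?_ ?_).symm
  · intro A hA
    rw [Finset.mem_powersetCard] at hA
    obtain ⟨hAsub, hAcard⟩ := hA
    rw [mem_filter, mem_powerset]
    have h1 := gkmin_subset m A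
    have h2 := gkmin_card m A hAsub
    have h3 := card_le_card h1
    refine ⟨h1.trans hAsub, gkmin_special m A hAsub, ?_⟩
    simp only [le_min_iff]
    omega
  · intro A hA B hB heq
    rw [Finset.mem_powersetCard] at hA hB
    rcases gkmin_fiber_chain m A B hA.1 hB.1 heq with hc | hc
    · exact Finset.eq_of_subset_of_card_le hc (by omega)
    · exact (Finset.eq_of_subset_of_card_le hc (by omega)).symm
  · intro S hS
    rw [mem_filter, mem_powerset] at hS
    obtain ⟨hSsub, hSspec, hScard⟩ := hS
    simp only [le_min_iff] at hScard
    obtain ⟨A, hAsub, hAcard, hAgk⟩ := gkmin_reach m S hSsub hSspec L hScard.1 (by omega)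
    exact ⟨A, Finset.mem_powersetCard.mpr ⟨hAsub, hAcard⟩, hAgk⟩



lemma binLT_of_ssubset {A B : Finset ℕ} (h : B ⊂ A) : binLT B A := by
  have hne : (A \ B).Nonempty := by
    rw [Finset.sdiff_nonempty]
    exact fun hc => h.2 hc
  refine ⟨(A \ B).max' hne, ?_, ?_, ?_⟩
  · exact (Finset.mem_sdiff.mp ((A \ B).max'_mem hne)).1
  · exact (Finset.mem_sdiff.mp ((A \ B).max'_mem hne)).2
  · intro j hj
    constructor
    · intro hjB; exact h.1 hjB
    · intro hjA
      by_contra hjB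
      have : j ∈ A \ B := Finset.mem_sdiff.mpr ⟨hjA, hjB⟩
      have := Finset.le_max' _ _ this
      omega

lemma downset_closed {n : ℕ} {D : Finset (Finset ℕ)}
    (hD : ∀ A ∈ D, A ⊆ Finset.Icc 1 n)
    (hinit : ∀ A ∈ D, ∀ B ⊆ Finset.Icc 1 n, binLT B A → B ∈ D)
    {A B : Finset ℕ} (hA : A ∈ D) (hBA : B ⊆ A) : B ∈ D := by
  rcases eq_or_ne B A with rfl | hne
  · exact hA
  · exact hinit A hA B (hBA.trans (hD A hA)) (binLT_of_ssubset ⟨hBA, fun hc => hne (Finset.Subset.antisymm hBA hc)⟩)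

lemma upper_bound {n : ℕ} {D : Finset (Finset ℕ)}
    (hD : ∀ A ∈ D, A ⊆ Finset.Icc 1 n)
    (hinit : ∀ A ∈ D, ∀ B ⊆ Finset.Icc 1 n, binLT B A → B ∈ D)
    {𝒜 : Finset (Finset ℕ)} (h𝒜 : 𝒜 ⊆ D)
    (hanti : ∀ x ∈ 𝒜, ∀ y ∈ 𝒜, x ≠ y → ¬ x ⊆ y) :
    𝒜.card ≤ (D.filter (fun A => SpecialPoint n A)).card := by
  apply Finset.card_le_card_of_injOn (gkmin n)
  · intro A hA
    rw [Finset.mem_coe, Finset.mem_filter]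
    have hAD := h𝒜 hA
    have hAsub := hD A hAD
    exact ⟨downset_closed hD hinit hAD (gkmin_subset n A), gkmin_special n A hAsub⟩
  · intro A hA B hB heq
    simp only [Finset.coe_mem, Finset.mem_coe] at hA hB
    rcases gkmin_fiber_chain n A B (hD A (h𝒜 hA)) (hD B (h𝒜 hB)) heq with hc | hc
    · by_contra hne
      exact hanti A hA B hB hne hc
    · by_contra hne
      exact hanti B hB A hA (Ne.symm hne) hc

lemma special_empty (n : ℕ) : SpecialPoint n ∅ := by
  intro t ht; simp only [mem_Icc] at ht; simp

lemma lower_bound (n : ℕ) : ∀ (D : Finset (Finset ℕ)),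
    (∀ A ∈ D, A ⊆ Icc 1 n) →
    (∀ A ∈ D, ∀ B ⊆ Icc 1 n, binLT B A → B ∈ D) →
    ∀ ℓ : ℕ, ∃ 𝒜 : Finset (Finset ℕ), 𝒜 ⊆ D ∧
      (∀ x ∈ 𝒜, ∀ y ∈ 𝒜, x ≠ y → ¬ x ⊆ y) ∧
      (∀ A ∈ 𝒜, A.card ≤ ℓ) ∧
      𝒜.card = (D.filter (fun A => SpecialPoint n A ∧ A.card ≤ ℓ)).card := by
  induction n with
  | zero =>
    intro D hD _ ℓ
    refine ⟨D, le_refl D, ?_, ?_, ?_⟩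
    · intro x hx y hy hxy _
      apply hxy
      have hx0 := hD x hx
      have hy0 := hD y hy
      simp at hx0 hy0
      rw [hx0, hy0]
    · intro A hA
      have := hD A hA
      simp at this
      simp [this]
    · rw [Finset.filter_eq_self.mpr]
      intro A hA
      have := hD A hA
      simp at this
      subst this
      exact ⟨special_zero _, by simp⟩
  | succ n ih =>
    intro D hD hinit ℓ
    by_cases hex : ∃ A₀ ∈ D, (n+1) ∈ A₀
    case neg =>
      -- no element of D contains n+1
      push_neg at hex
      have hD' : ∀ A ∈ D, A ⊆ Icc 1 n := fun A hA =>
        subset_Icc_of_not_mem (hD A hA) (hex A hA)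
      have hinit' : ∀ A ∈ D, ∀ B ⊆ Icc 1 n, binLT B A → B ∈ D := fun A hA B hB h =>
        hinit A hA B (hB.trans (Icc_subset_Icc_right (by omega))) h
      obtain ⟨𝒜, h1, h2, h3, h4⟩ := ih D hD' hinit' ℓ
      refine ⟨𝒜, h1, h2, h3, ?_⟩
      rw [h4]
      congr 1
      apply Finset.filter_congr
      intro A hA
      have hsub := hD' A hA
      constructor
      · rintro ⟨hs, hc⟩; exact ⟨special_mono hsub hs, hc⟩
      · rintro ⟨hs, hc⟩; exact ⟨special_restrict hsub hs, hc⟩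
    case pos =>
    obtain ⟨A₀, hA₀, hmem⟩ := hex
    -- every subset of [n] is in D
    have hall : ∀ B : Finset ℕ, B ⊆ Icc 1 n → B ∈ D := by
      intro B hBsub
      apply hinit A₀ hA₀ B (hBsub.trans (Icc_subset_Icc_right (by omega)))
      refine ⟨n+1, hmem, ?_, ?_⟩
      · intro hc
        have := hBsub hc; simp only [mem_Icc] at this; omega
      · intro j hj
        constructor
        · intro h
          have := hBsub h; simp only [mem_Icc] at this; omega
        · intro h
          have := hD A₀ hA₀ h; simp only [mem_Icc] at this; omega
    by_cases hℓ : ℓ = 0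
    · -- trivial case ℓ = 0
      subst hℓ
      refine ⟨{∅}, ?_, ?_, ?_, ?_⟩
      · simp only [singleton_subset_iff]
        exact hall ∅ (by simp)
      · intro x hx y hy hxy
        simp at hx hy
        subst hx; subst hy; exact absurd rfl hxy
      · intro A hA; simp at hA; simp [hA]
      · have : D.filter (fun A => SpecialPoint (n+1) A ∧ A.card ≤ 0) = {∅} := by
          apply Finset.ext
          intro A
          simp only [mem_filter, mem_singleton, Nat.le_zero, Finset.card_eq_zero]
          constructor
          · rintro ⟨_, _, h⟩; exact h
          · rintro rfl
            exact ⟨hall ∅ (by simp), special_empty _, rfl⟩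
        rw [this]
    -- main case : ℓ ≥ 1
    rcases Nat.eq_zero_or_pos n with rfl | hn
    · -- n + 1 = 1 : D = {∅, {1}}
      have hDeq : D = {∅, {1}} := by
        apply Finset.ext
        intro A
        constructor
        · intro hA
          have := hD A hA
          simp only [Icc_self] at this
          rcases Finset.subset_singleton_iff.mp this with h | h
          · simp [h]
          · simp [h]
        · intro hA
          simp only [mem_insert, mem_singleton] at hA
          rcases hA with rfl | rfl
          · exact hall ∅ (by simp)
          · have : A₀ = {1} := by
              have h1 := hD A₀ hA₀
              simp only [Icc_self] at h1
              rcases Finset.subset_singleton_iff.mp h1 with h | h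
              · rw [h] at hmem; simp at hmem
              · exact h
            rwa [this] at hA₀
      refine ⟨{∅}, ?_, ?_, ?_, ?_⟩
      · simp only [singleton_subset_iff]; exact hall ∅ (by simp)
      · intro x hx y hy hxy
        simp at hx hy
        subst hx; subst hy; exact absurd rfl hxy
      · intro A hA; simp at hA; simp [hA]
      · have hfil : D.filter (fun A => SpecialPoint 1 A ∧ A.card ≤ ℓ) = {∅} := by
          rw [hDeq]
          apply Finset.ext
          intro A
          simp only [mem_filter, mem_insert, mem_singleton]
          constructor
          · rintro ⟨h1 | h1, h2, h3⟩
            · exact h1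
            · exfalso
              subst h1
              have := h2 1 (by simp)
              simp at this
          · rintro rfl
            exact ⟨Or.inl rfl, special_empty _, by simp⟩
        rw [hfil]
    -- now n ≥ 1 and ℓ ≥ 1
    have hℓ1 : 1 ≤ ℓ := Nat.one_le_iff_ne_zero.mpr hℓ
    set D' : Finset (Finset ℕ) := (D.filter (fun A => (n+1) ∈ A)).image (fun A => A.erase (n+1)) with hD'def
    have hD'1 : ∀ A' ∈ D', A' ⊆ Icc 1 n ∧ insert (n+1) A' ∈ D := by
      intro A' hA'
      rw [hD'def, Finset.mem_image] at hA'
      obtain ⟨A, hA, rfl⟩ := hA'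
      rw [mem_filter] at hA
      exact ⟨erase_subset_Icc (hD A hA.1), by rw [insert_erase_self hA.2]; exact hA.1⟩
    have hD'2 : ∀ A' : Finset ℕ, A' ⊆ Icc 1 n → insert (n+1) A' ∈ D → A' ∈ D' := by
      intro A' hsub hins
      rw [hD'def, Finset.mem_image]
      refine ⟨insert (n+1) A', mem_filter.mpr ⟨hins, mem_insert_self _ _⟩, ?_⟩
      exact Finset.erase_insert (fun hc => by have := hsub hc; simp only [mem_Icc] at this; omega)
    have hD'sub : ∀ A ∈ D', A ⊆ Icc 1 n := fun A hA => (hD'1 A hA).1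
    have hD'init : ∀ A ∈ D', ∀ B ⊆ Icc 1 n, binLT B A → B ∈ D' := by
      intro A hA B hB hlt
      obtain ⟨hAsub, hAins⟩ := hD'1 A hA
      apply hD'2 B hB
      apply hinit _ hAins (insert (n+1) B) (by
        intro x hx
        rcases mem_insert.mp hx with rfl | hx
        · simp
        · exact (hB.trans (Icc_subset_Icc_right (by omega))) hx)
      obtain ⟨k, hkA, hkB, hk⟩ := hlt
      have hkn : k ≤ n := by have := hAsub hkA; simp only [mem_Icc] at this; omega
      refine ⟨k, mem_insert_of_mem hkA, ?_, ?_⟩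
      · intro hc
        rcases mem_insert.mp hc with h | h
        · omega
        · exact hkB h
      · intro j hj
        rcases eq_or_ne j (n+1) with rfl | hne
        · simp
        · simp only [mem_insert]
          constructor
          · rintro (rfl | h)
            · exact absurd rfl hne
            · exact Or.inr ((hk j hj).mp h)
          · rintro (rfl | h)
            · exact absurd rfl hne
            · exact Or.inr ((hk j hj).mpr h)
    set ℓ' := min (ℓ - 1) ((n - 1) / 2) with hℓ'def
    set L := if ℓ ≤ n / 2 then ℓ else (n + 1) / 2 with hLdef
    have hLn : L ≤ n := by rw [hLdef]; split_ifs <;> omega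
    have hLℓ : L ≤ ℓ := by rw [hLdef]; split_ifs <;> omega
    have hℓ'L : ℓ' < L := by rw [hℓ'def, hLdef]; split_ifs <;> omega
    obtain ⟨𝒜', h𝒜'1, h𝒜'2, h𝒜'3, h𝒜'4⟩ := ih D' hD'sub hD'init ℓ'
    have h𝒜'Icc : ∀ A' ∈ 𝒜', A' ⊆ Icc 1 n := fun A' h => hD'sub A' (h𝒜'1 h)
    have h𝒜'n : ∀ A' ∈ 𝒜', (n+1) ∉ A' := fun A' h hc => by
      have := h𝒜'Icc A' h hc; simp only [mem_Icc] at this; omega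
    set 𝒜₁ := Finset.powersetCard L (Icc 1 n) with h𝒜₁def
    set 𝒜₂ := 𝒜'.image (insert (n+1)) with h𝒜₂def
    have hmem𝒜₁ : ∀ x : Finset ℕ, x ∈ 𝒜₁ ↔ x ⊆ Icc 1 n ∧ x.card = L := fun x => by
      rw [h𝒜₁def, Finset.mem_powersetCard]
    have hmem𝒜₂ : ∀ x : Finset ℕ, x ∈ 𝒜₂ ↔ ∃ A' ∈ 𝒜', insert (n+1) A' = x := fun x => by
      rw [h𝒜₂def, Finset.mem_image]
    have hdisj : Disjoint 𝒜₁ 𝒜₂ := by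
      rw [Finset.disjoint_left]
      intro x hx1 hx2
      rw [hmem𝒜₁] at hx1
      rw [hmem𝒜₂] at hx2
      obtain ⟨A', hA', rfl⟩ := hx2
      have : (n+1) ∈ Icc 1 n := hx1.1 (mem_insert_self _ _)
      simp only [mem_Icc] at this; omega
    have hcard𝒜₂ : 𝒜₂.card = 𝒜'.card := by
      rw [h𝒜₂def]
      apply Finset.card_image_of_injOn
      intro x hx y hy hxy
      have := congrArg (fun s => Finset.erase s (n+1)) hxy
      simpa [Finset.erase_insert (h𝒜'n x hx), Finset.erase_insert (h𝒜'n y hy)] using this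
    have hcard𝒜₁ : 𝒜₁.card = n.choose L := by
      rw [h𝒜₁def, Finset.card_powersetCard, Nat.card_Icc]; simp
    have hsplit : (D.filter (fun A => SpecialPoint (n+1) A ∧ A.card ≤ ℓ)).card
        = ((D.filter (fun A => SpecialPoint (n+1) A ∧ A.card ≤ ℓ)).filter (fun A => (n+1) ∉ A)).card
        + ((D.filter (fun A => SpecialPoint (n+1) A ∧ A.card ≤ ℓ)).filter (fun A => (n+1) ∈ A)).card := by
      have := Finset.card_filter_add_card_filter_not
        (s := D.filter (fun A => SpecialPoint (n+1) A ∧ A.card ≤ ℓ)) (fun A => (n+1) ∈ A)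
      omega
    have hT1 : (D.filter (fun A => SpecialPoint (n+1) A ∧ A.card ≤ ℓ)).filter (fun A => (n+1) ∉ A)
        = (Icc 1 n).powerset.filter (fun S => SpecialPoint n S ∧ S.card ≤ min L (n - L)) := by
      apply Finset.ext
      intro A
      simp only [mem_filter, mem_powerset]
      constructor
      · rintro ⟨⟨hAD, hAs, hAc⟩, hAn⟩
        have hsub : A ⊆ Icc 1 n := subset_Icc_of_not_mem (hD A hAD) hAn
        have hspec := special_restrict hsub hAs
        have h2 := special_card hsub hspec
        refine ⟨hsub, hspec, ?_⟩
        simp only [le_min_iff]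
        rw [hLdef]
        split_ifs <;> omega
      · rintro ⟨hsub, hspec, hcard⟩
        simp only [le_min_iff] at hcard
        refine ⟨⟨hall A hsub, special_mono hsub hspec, by omega⟩,
          fun hc => by have := hsub hc; simp only [mem_Icc] at this; omega⟩
    have hT2 : ((D.filter (fun A => SpecialPoint (n+1) A ∧ A.card ≤ ℓ)).filter (fun A => (n+1) ∈ A)).card
        = (D'.filter (fun A => SpecialPoint n A ∧ A.card ≤ ℓ')).card := by
      apply Finset.card_bij (fun A _ => A.erase (n+1))
      · intro A hA
        simp only [mem_filter] at hA
        obtain ⟨⟨hAD, hAs, hAc⟩, hAn⟩ := hA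
        have hsub := erase_subset_Icc (hD A hAD)
        have hins : insert (n+1) (A.erase (n+1)) = A := insert_erase_self hAn
        rw [mem_filter]
        have hspec : SpecialPoint n (A.erase (n+1)) := special_insert_restrict hsub (by rwa [hins])
        have h2 : 2 * A.card ≤ n + 1 := special_card (hD A hAD) hAs
        have hc : A.card = (A.erase (n+1)).card + 1 := by
          rw [card_erase_of_mem hAn]; have := card_pos.mpr ⟨_, hAn⟩; omega
        refine ⟨hD'2 _ hsub (by rwa [hins]), hspec, ?_⟩
        rw [hℓ'def]; simp only [le_min_iff]; omega
      · intro A hA B hB heq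
        simp only [mem_filter] at hA hB
        rw [← insert_erase_self hA.2, ← insert_erase_self hB.2, heq]
      · intro A' hA'
        simp only [mem_filter] at hA'
        obtain ⟨hA'D, hA's, hA'c⟩ := hA'
        obtain ⟨hsub, hins⟩ := hD'1 A' hA'D
        have hn1 : (n+1) ∉ A' := fun hc => by
          have := hsub hc; simp only [mem_Icc] at this; omega
        have hbounds : A'.card ≤ ℓ - 1 ∧ 2 * A'.card ≤ n - 1 := by
          rw [hℓ'def] at hA'c
          simp only [le_min_iff] at hA'c
          omega
        refine ⟨insert (n+1) A', ?_, Finset.erase_insert hn1⟩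
        simp only [mem_filter]
        refine ⟨⟨hins, special_insert hsub hA's (by omega), ?_⟩, mem_insert_self _ _⟩
        rw [card_insert_of_notMem hn1]
        omega
    refine ⟨𝒜₁ ∪ 𝒜₂, ?_, ?_, ?_, ?_⟩
    · intro x hx
      rcases mem_union.mp hx with h | h
      · rw [hmem𝒜₁] at h
        exact hall x h.1
      · rw [hmem𝒜₂] at h
        obtain ⟨A', hA', rfl⟩ := h
        exact (hD'1 A' (h𝒜'1 hA')).2
    · intro x hx y hy hxy hsubxy
      rcases mem_union.mp hx with h1 | h1 <;> rcases mem_union.mp hy with h2 | h2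
      · rw [hmem𝒜₁] at h1 h2
        exact hxy (Finset.eq_of_subset_of_card_le hsubxy (le_of_eq (h2.2.trans h1.2.symm)))
      · rw [hmem𝒜₁] at h1
        rw [hmem𝒜₂] at h2
        obtain ⟨y', hy', rfl⟩ := h2
        have hxn : (n+1) ∉ x := fun hc => by
          have := h1.1 hc; simp only [mem_Icc] at this; omega
        have hxy' : x ⊆ y' := by
          intro a ha
          rcases mem_insert.mp (hsubxy ha) with rfl | h
          · exact absurd ha hxn
          · exact h
        have hle := card_le_card hxy'
        have hy'c := h𝒜'3 y' hy'
        omega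
      · rw [hmem𝒜₂] at h1
        rw [hmem𝒜₁] at h2
        obtain ⟨x', hx', rfl⟩ := h1
        have : (n+1) ∈ y := hsubxy (mem_insert_self _ _)
        have := h2.1 this
        simp only [mem_Icc] at this; omega
      · rw [hmem𝒜₂] at h1 h2
        obtain ⟨x', hx', rfl⟩ := h1
        obtain ⟨y', hy', rfl⟩ := h2
        have hx'y' : x' ⊆ y' := by
          intro a ha
          have han : a ≠ n+1 := fun hc => h𝒜'n x' hx' (hc ▸ ha)
          rcases mem_insert.mp (hsubxy (mem_insert_of_mem ha)) with h | h
          · exact absurd h han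
          · exact h
        have hne : x' ≠ y' := fun hc => hxy (by rw [hc])
        exact h𝒜'2 x' hx' y' hy' hne hx'y'
    · intro A hA
      rcases mem_union.mp hA with h | h
      · rw [hmem𝒜₁] at h
        omega
      · rw [hmem𝒜₂] at h
        obtain ⟨A', hA', rfl⟩ := h
        have h1 := h𝒜'3 A' hA'
        have h2 := Finset.card_insert_le (n+1) A'
        omega
    · rw [Finset.card_union_of_disjoint hdisj, hcard𝒜₁, hcard𝒜₂, h𝒜'4, hsplit, hT1,
        special_count n L hLn, hT2]



/-- For a binary downset `D` of `B(n)` (an initial segment of the binary order),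
the width of `D` equals the number of special points contained in `D`. -/
theorem width_eq_special (n : ℕ) (D : Finset (Finset ℕ))
    (hD : ∀ A ∈ D, A ⊆ Finset.Icc 1 n)
    (hinit : ∀ A ∈ D, ∀ B ⊆ Finset.Icc 1 n, binLT B A → B ∈ D) :
    width D = (D.filter (fun A => SpecialPoint n A)).card := by
  apply le_antisymm
  · apply Finset.sup_le
    intro 𝒜 h𝒜
    rw [mem_filter, mem_powerset] at h𝒜
    exact upper_bound hD hinit h𝒜.1 h𝒜.2
  · obtain ⟨𝒜, h1, h2, h3, h4⟩ := lower_bound n D hD hinit n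
    have hcount : (D.filter (fun A => SpecialPoint n A ∧ A.card ≤ n))
        = D.filter (fun A => SpecialPoint n A) := by
      apply Finset.filter_congr
      intro A hA
      have hc := card_le_card (hD A hA)
      rw [Nat.card_Icc] at hc
      constructor
      · exact fun h => h.1
      · exact fun h => ⟨h, by omega⟩
    have : (D.filter (fun A => SpecialPoint n A)).card = 𝒜.card := by rw [h4, hcount]
    rw [this]
    apply Finset.le_sup
    rw [mem_filter, mem_powerset]
    exact ⟨h1, h2⟩
end

section
/- For every A ⊆ [n], writing [∅,A) = {B ⊆ [n] : B <_b A} and [∅,A] = [∅,A) ∪ {A}, we have w([∅,A]) = w([∅,A)) + 1 if and only if A is a special point. -/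
open scoped Classical

/-- The strict initial segment `[∅, A)` of the binary order on `B(n)`. -/
noncomputable def binSegLT (n : ℕ) (A : Finset ℕ) : Finset (Finset ℕ) :=
  (Finset.Icc 1 n).powerset.filter (fun B => binLT B A)


def hW (B : Finset ℕ) (t : ℕ) : ℤ := (t : ℤ) - 2 * ((B ∩ Finset.Icc 1 t).card : ℤ)

lemma hW_zero (B : Finset ℕ) : hW B 0 = 0 := by simp [hW]

lemma inter_Icc_succ (B : Finset ℕ) (t : ℕ) :
    B ∩ Finset.Icc 1 (t+1) = (B ∩ Finset.Icc 1 t) ∪ (B ∩ {t+1}) := by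
  ext x
  by_cases hx : x ∈ B <;> simp [hx, Finset.mem_Icc] <;> omega

lemma hW_succ_mem (B : Finset ℕ) (t : ℕ) (h : t + 1 ∈ B) :
    hW B (t+1) = hW B t - 1 := by
  have h2 : B ∩ Finset.Icc 1 (t+1) = insert (t+1) (B ∩ Finset.Icc 1 t) := by
    rw [inter_Icc_succ]
    have h3 : B ∩ {t+1} = {t+1} := by
      ext x; simp only [Finset.mem_inter, Finset.mem_singleton]
      exact ⟨fun h => h.2, fun hx => ⟨hx ▸ h, hx⟩⟩
    rw [h3, Finset.union_comm]; rfl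
  have hnot : t + 1 ∉ B ∩ Finset.Icc 1 t := by simp [Finset.mem_Icc]
  rw [hW, hW, h2, Finset.card_insert_of_notMem hnot]
  push_cast; ring

lemma hW_succ_notMem (B : Finset ℕ) (t : ℕ) (h : t + 1 ∉ B) :
    hW B (t+1) = hW B t + 1 := by
  have h2 : B ∩ Finset.Icc 1 (t+1) = B ∩ Finset.Icc 1 t := by
    rw [inter_Icc_succ]
    have h3 : B ∩ {t+1} = ∅ := by
      ext x; simp only [Finset.mem_inter, Finset.mem_singleton, Finset.notMem_empty,
        iff_false, not_and]
      rintro hx rfl; exact h hx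
    rw [h3, Finset.union_empty]
  rw [hW, hW, h2]; push_cast; ring

lemma hW_step (B : Finset ℕ) (t : ℕ) :
    hW B (t+1) = hW B t - 1 ∨ hW B (t+1) = hW B t + 1 := by
  by_cases h : t + 1 ∈ B
  · exact Or.inl (hW_succ_mem B t h)
  · exact Or.inr (hW_succ_notMem B t h)

/-- positions of "unmatched ones": record minima of the walk. -/
def recOnes (B : Finset ℕ) : Finset ℕ := B.filter (fun i => ∀ s < i, hW B i < hW B s)

def mu (B : Finset ℕ) : Finset ℕ := B \ recOnes B

def Rcnt (B : Finset ℕ) (t : ℕ) : ℕ := (recOnes B ∩ Finset.Icc 1 t).card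

lemma recOnes_subset (B : Finset ℕ) : recOnes B ⊆ B := Finset.filter_subset _ _

lemma mu_subset (B : Finset ℕ) : mu B ⊆ B := Finset.sdiff_subset

lemma mu_union_rec (B : Finset ℕ) : mu B ∪ recOnes B = B := by
  rw [mu]; exact Finset.sdiff_union_of_subset (recOnes_subset B)

lemma Rcnt_succ (B : Finset ℕ) (t : ℕ) :
    Rcnt B (t+1) = Rcnt B t + (if t+1 ∈ recOnes B then 1 else 0) := by
  rw [Rcnt, Rcnt, inter_Icc_succ]
  have hd : Disjoint (recOnes B ∩ Finset.Icc 1 t) (recOnes B ∩ {t+1}) := by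
    rw [Finset.disjoint_left]
    intro x hx hx2
    simp only [Finset.mem_inter, Finset.mem_Icc, Finset.mem_singleton] at hx hx2
    omega
  rw [Finset.card_union_of_disjoint hd]
  by_cases h : t+1 ∈ recOnes B
  · have : recOnes B ∩ {t+1} = {t+1} := by
      ext x; simp only [Finset.mem_inter, Finset.mem_singleton]
      exact ⟨fun h => h.2, fun hx => ⟨hx ▸ h, hx⟩⟩
    simp [this, h]
  · have : recOnes B ∩ {t+1} = ∅ := by
      ext x; simp only [Finset.mem_inter, Finset.mem_singleton, Finset.notMem_empty, iff_false,
        not_and]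
      rintro hx rfl; exact h hx
    simp [this, h]

lemma Rcnt_mono (B : Finset ℕ) {s t : ℕ} (h : s ≤ t) : Rcnt B s ≤ Rcnt B t := by
  apply Finset.card_le_card
  intro x hx
  simp only [Finset.mem_inter, Finset.mem_Icc] at hx ⊢
  exact ⟨hx.1, hx.2.1, hx.2.2.trans h⟩

/-- K1: the walk stays above minus the number of records so far. -/
lemma hW_ge_neg_Rcnt (B : Finset ℕ) : ∀ t, -(Rcnt B t : ℤ) ≤ hW B t := by
  intro t
  induction t using Nat.strong_induction_on with
  | _ t ih =>
    match t with
    | 0 => simp [hW_zero, Rcnt]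
    | (t+1) =>
      by_cases hmem : t+1 ∈ B
      · by_cases hrec : t+1 ∈ recOnes B
        · rw [hW_succ_mem B t hmem, Rcnt_succ]
          have := ih t (by omega)
          simp only [hrec, if_pos]
          push_cast; omega
        · -- not a record: exists s < t+1 with hW B s ≤ hW B (t+1)
          have hex : ∃ s, s < t+1 ∧ hW B s ≤ hW B (t+1) := by
            by_contra hc
            push_neg at hc
            exact hrec (Finset.mem_filter.2 ⟨hmem, fun s hs => hc s hs⟩)
          obtain ⟨s, hs, hle⟩ := hex
          have h1 := ih s hs
          have h2 : Rcnt B s ≤ Rcnt B (t+1) := Rcnt_mono B (by omega)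
          push_cast at *
          omega
      · rw [hW_succ_notMem B t hmem]
        have := ih t (by omega)
        have h2 : Rcnt B t ≤ Rcnt B (t+1) := Rcnt_mono B (by omega)
        push_cast at *
        omega

lemma hW_mu (B : Finset ℕ) (t : ℕ) : hW (mu B) t = hW B t + 2 * (Rcnt B t : ℤ) := by
  have hset : mu B ∩ Finset.Icc 1 t = (B ∩ Finset.Icc 1 t) \ (recOnes B ∩ Finset.Icc 1 t) := by
    ext x
    simp only [mu, Finset.mem_inter, Finset.mem_sdiff, Finset.mem_Icc]
    tauto
  have hsub : recOnes B ∩ Finset.Icc 1 t ⊆ B ∩ Finset.Icc 1 t :=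
    Finset.inter_subset_inter (recOnes_subset B) (le_refl _)
  have hcard : (mu B ∩ Finset.Icc 1 t).card
      = (B ∩ Finset.Icc 1 t).card - (recOnes B ∩ Finset.Icc 1 t).card := by
    rw [hset, Finset.card_sdiff_of_subset hsub]
  have hle : (recOnes B ∩ Finset.Icc 1 t).card ≤ (B ∩ Finset.Icc 1 t).card :=
    Finset.card_le_card hsub
  rw [hW, hW, hcard, Rcnt]
  push_cast [hle]
  ring

/-- μ(B) is special (its walk is nonnegative). -/
lemma mu_nonneg (B : Finset ℕ) (t : ℕ) : 0 ≤ hW (mu B) t := by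
  have h1 := hW_ge_neg_Rcnt B t
  rw [hW_mu]
  omega

section
variable {n : ℕ} {B : Finset ℕ}

/-- K2: value of the walk at a record. -/
lemma rec_val (hB : ∀ x ∈ B, 1 ≤ x) : ∀ i ∈ recOnes B, hW B i = -(Rcnt B i : ℤ) := by
  intro i
  induction i using Nat.strong_induction_on with
  | _ i ih =>
    intro hi
    obtain ⟨hiB, hirec⟩ := Finset.mem_filter.1 hi
    have hi1 : 1 ≤ i := hB i hiB
    set S := (recOnes B).filter (fun x => x < i) with hS
    by_cases hSe : S = ∅
    · have hR : Rcnt B i = 1 := by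
        have : recOnes B ∩ Finset.Icc 1 i = {i} := by
          ext x
          simp only [Finset.mem_inter, Finset.mem_Icc, Finset.mem_singleton]
          constructor
          · rintro ⟨hx, hx1, hx2⟩
            by_contra hne
            have hxS : x ∈ S := Finset.mem_filter.2 ⟨hx, by omega⟩
            rw [hSe] at hxS; exact absurd hxS (Finset.notMem_empty x)
          · rintro rfl; exact ⟨hi, hi1, le_refl _⟩
        rw [Rcnt, this, Finset.card_singleton]
      have h1 : hW B i < 0 := by
        have := hirec 0 (by omega)
        rwa [hW_zero] at this
      have h2 := hW_ge_neg_Rcnt B i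
      rw [hR] at h2 ⊢
      push_cast at h2 ⊢
      omega
    · obtain ⟨r', hr'⟩ := Finset.nonempty_of_ne_empty hSe
      have hr'max := Finset.le_max' S r' hr'
      set rm := S.max' (Finset.nonempty_of_ne_empty hSe) with hrm
      have hrmS : rm ∈ S := Finset.max'_mem _ _
      obtain ⟨hrmrec, hrmlt⟩ := Finset.mem_filter.1 hrmS
      have hrm1 : 1 ≤ rm := hB rm (recOnes_subset B hrmrec)
      have hval := ih rm hrmlt hrmrec
      have hsplit : recOnes B ∩ Finset.Icc 1 i
          = insert i (recOnes B ∩ Finset.Icc 1 rm) := by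
        ext x
        simp only [Finset.mem_inter, Finset.mem_Icc, Finset.mem_insert]
        constructor
        · rintro ⟨hx, hx1, hx2⟩
          by_cases hxi : x = i
          · left; exact hxi
          · right
            have hxS : x ∈ S := Finset.mem_filter.2 ⟨hx, by omega⟩
            exact ⟨hx, hx1, Finset.le_max' S x hxS⟩
        · rintro (rfl | ⟨hx, hx1, hx2⟩)
          · exact ⟨hi, hi1, le_refl _⟩
          · exact ⟨hx, hx1, by omega⟩
      have hnotmem : i ∉ recOnes B ∩ Finset.Icc 1 rm := by
        simp only [Finset.mem_inter, Finset.mem_Icc]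
        rintro ⟨-, -, hle⟩; omega
      have hR : Rcnt B i = Rcnt B rm + 1 := by
        rw [Rcnt, hsplit, Finset.card_insert_of_notMem hnotmem, Rcnt]
      have hlt : hW B i < hW B rm := hirec rm hrmlt
      have h2 := hW_ge_neg_Rcnt B i
      rw [hR]
      rw [hval] at hlt
      push_cast at h2 ⊢
      omega

def freeZ (m : ℕ) (g : Finset ℕ) : Finset ℕ :=
  (Finset.Icc 1 m).filter (fun j => j ∉ g ∧ ∀ t, j ≤ t → t ≤ m → hW g j ≤ hW g t)

lemma rec_mem_freeZ (hB : B ⊆ Finset.Icc 1 n) {r : ℕ} (hr : r ∈ recOnes B) :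
    r ∈ freeZ n (mu B) := by
  have hB1 : ∀ x ∈ B, 1 ≤ x := fun x hx => (Finset.mem_Icc.1 (hB hx)).1
  have hrB : r ∈ B := recOnes_subset B hr
  refine Finset.mem_filter.2 ⟨hB hrB, ?_, ?_⟩
  · simp only [mu, Finset.mem_sdiff, not_and, not_not]
    intro _; exact hr
  · intro t hrt htn
    have h1 : hW (mu B) r = (Rcnt B r : ℤ) := by
      rw [hW_mu, rec_val hB1 r hr]; ring
    have h2 : (Rcnt B t : ℤ) ≤ hW (mu B) t := by
      have := hW_ge_neg_Rcnt B t
      rw [hW_mu]; omega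
    have h3 : Rcnt B r ≤ Rcnt B t := Rcnt_mono B hrt
    rw [h1]
    push_cast at *
    omega

/-- down-closedness: a free zero of μB below a record must itself be a record. -/
lemma freeZ_lt_rec_mem (hB : B ⊆ Finset.Icc 1 n) {j r : ℕ}
    (hj : j ∈ freeZ n (mu B)) (hr : r ∈ recOnes B) (hlt : j < r) : j ∈ recOnes B := by
  by_contra hc
  have hB1 : ∀ x ∈ B, 1 ≤ x := fun x hx => (Finset.mem_Icc.1 (hB hx)).1
  obtain ⟨hjIcc, hjmu, hjfree⟩ := Finset.mem_filter.1 hj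
  obtain ⟨hj1, hjn⟩ := Finset.mem_Icc.1 hjIcc
  have hjB : j ∉ B := by
    intro hjB
    have : j ∈ mu B := by
      simp only [mu, Finset.mem_sdiff]; exact ⟨hjB, hc⟩
    exact hjmu this
  set w := Rcnt B j with hw
  -- walk value at j
  have hWj : (1 : ℤ) - w ≤ hW B j := by
    obtain ⟨j', rfl⟩ : ∃ j', j = j' + 1 := ⟨j - 1, by omega⟩
    have h1 := hW_succ_notMem B j' hjB
    have h2 := hW_ge_neg_Rcnt B j'
    have h3 : Rcnt B j' ≤ w := Rcnt_mono B (by omega)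
    push_cast at *
    omega
  -- minimal record above j
  set S := (recOnes B).filter (fun x => j < x) with hSdef
  have hSne : S.Nonempty := ⟨r, Finset.mem_filter.2 ⟨hr, hlt⟩⟩
  set rs := S.min' hSne with hrs
  obtain ⟨hrsrec, hjrs⟩ := Finset.mem_filter.1 (Finset.min'_mem S hSne)
  rw [← hrs] at hrsrec hjrs
  have hrsmin : ∀ x ∈ recOnes B, j < x → rs ≤ x := fun x hx hjx =>
    Finset.min'_le S x (Finset.mem_filter.2 ⟨hx, hjx⟩)
  have hrsn : rs ≤ n := (Finset.mem_Icc.1 (hB (recOnes_subset B hrsrec))).2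
  have hRrs : Rcnt B rs = w + 1 := by
    have : recOnes B ∩ Finset.Icc 1 rs = insert rs (recOnes B ∩ Finset.Icc 1 j) := by
      ext x
      simp only [Finset.mem_inter, Finset.mem_Icc, Finset.mem_insert]
      constructor
      · rintro ⟨hx, hx1, hx2⟩
        by_cases hxj : x ≤ j
        · right; exact ⟨hx, hx1, hxj⟩
        · left; have := hrsmin x hx (by omega); omega
      · rintro (rfl | ⟨hx, hx1, hx2⟩)
        · exact ⟨hrsrec, hB1 _ (recOnes_subset B hrsrec), le_refl _⟩
        · exact ⟨hx, hx1, by omega⟩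
    have hnm : rs ∉ recOnes B ∩ Finset.Icc 1 j := by
      simp only [Finset.mem_inter, Finset.mem_Icc]
      rintro ⟨-, -, h⟩; omega
    rw [Rcnt, this, Finset.card_insert_of_notMem hnm]; rfl
  have hvrs : hW B rs = -(w + 1 : ℤ) := by
    have := rec_val hB1 rs hrsrec
    rw [hRrs] at this
    push_cast at this ⊢
    omega
  -- minimal t in (j, rs] with hW B t ≤ -w
  set T := (Finset.Icc (j+1) rs).filter (fun t => hW B t ≤ -(w : ℤ)) with hTdef
  have hTne : T.Nonempty := by
    refine ⟨rs, Finset.mem_filter.2 ⟨Finset.mem_Icc.2 ⟨by omega, le_refl _⟩, ?_⟩⟩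
    rw [hvrs]; push_cast; omega
  set t0 := T.min' hTne with ht0
  obtain ⟨ht0Icc, ht0le⟩ := Finset.mem_filter.1 (Finset.min'_mem T hTne)
  rw [← ht0] at ht0Icc ht0le
  obtain ⟨ht0l, ht0r⟩ := Finset.mem_Icc.1 ht0Icc
  have ht0min : ∀ x ∈ T, t0 ≤ x := fun x hx => Finset.min'_le T x hx
  -- hW B (t0 - 1) > -w
  have hprev : -(w : ℤ) < hW B (t0 - 1) := by
    by_cases hcase : t0 - 1 = j
    · rw [hcase]; omega
    · by_contra hcon
      push_neg at hcon
      have : t0 - 1 ∈ T := Finset.mem_filter.2 ⟨Finset.mem_Icc.2 ⟨by omega, by omega⟩, hcon⟩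
      have := ht0min _ this
      omega
  have ht0val : hW B t0 = -(w : ℤ) := by
    obtain ⟨t', ht'⟩ : ∃ t', t0 = t' + 1 := ⟨t0 - 1, by omega⟩
    have hstep := hW_step B t'
    rw [← ht'] at hstep
    have : t' = t0 - 1 := by omega
    rw [this] at hstep
    rcases hstep with h | h <;> omega
  -- no records in (j, t0]
  have hnorec : ∀ s, j < s → s ≤ t0 → s ∉ recOnes B := by
    intro s hjs hst0 hsrec
    have hRs : w + 1 ≤ Rcnt B s := by
      have hsub : insert s (recOnes B ∩ Finset.Icc 1 j) ⊆ recOnes B ∩ Finset.Icc 1 s := by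
        intro x hx
        simp only [Finset.mem_insert, Finset.mem_inter, Finset.mem_Icc] at hx ⊢
        rcases hx with rfl | ⟨hx, hx1, hx2⟩
        · exact ⟨hsrec, hB1 _ (recOnes_subset B hsrec), le_refl _⟩
        · exact ⟨hx, hx1, by omega⟩
      have hcard := Finset.card_le_card hsub
      have hnm : s ∉ recOnes B ∩ Finset.Icc 1 j := by
        simp only [Finset.mem_inter, Finset.mem_Icc]
        rintro ⟨-, -, h⟩; omega
      rw [Finset.card_insert_of_notMem hnm] at hcard
      exact hcard
    have hvs : hW B s = -(Rcnt B s : ℤ) := rec_val hB1 s hsrec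
    have hvs2 : hW B s ≤ -(w + 1 : ℤ) := by
      rw [hvs]; push_cast; omega
    have hsT : s ∈ T := by
      refine Finset.mem_filter.2 ⟨Finset.mem_Icc.2 ⟨by omega, ?_⟩, by omega⟩
      exact le_trans hst0 ht0r
    have := ht0min s hsT
    -- s ≤ t0 and t0 ≤ s, so s = t0; but hW B t0 = -w contradicts hvs2
    have hseq : s = t0 := by omega
    rw [hseq, ht0val] at hvs2
    omega
  have hRt0 : Rcnt B t0 = w := by
    have : recOnes B ∩ Finset.Icc 1 t0 = recOnes B ∩ Finset.Icc 1 j := by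
      ext x
      simp only [Finset.mem_inter, Finset.mem_Icc]
      constructor
      · rintro ⟨hx, hx1, hx2⟩
        refine ⟨hx, hx1, ?_⟩
        by_contra hxj
        exact hnorec x (by omega) hx2 hx
      · rintro ⟨hx, hx1, hx2⟩
        exact ⟨hx, hx1, by omega⟩
    rw [Rcnt, this]; rfl
  -- contradiction with freeness of j
  have h1 : hW (mu B) t0 = (w : ℤ) := by
    rw [hW_mu, ht0val, hRt0]; ring
  have h2 : (w : ℤ) + 1 ≤ hW (mu B) j := by
    rw [hW_mu, ← hw]; omega
  have h3 := hjfree t0 (by omega) (by omega)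
  omega

/-- two down-closed subsets of a finset are nested. -/
lemma downclosed_nested {F S1 S2 : Finset ℕ} (h1 : S1 ⊆ F) (h2 : S2 ⊆ F)
    (d1 : ∀ x ∈ F, ∀ y ∈ S1, x < y → x ∈ S1) (d2 : ∀ x ∈ F, ∀ y ∈ S2, x < y → x ∈ S2) :
    S1 ⊆ S2 ∨ S2 ⊆ S1 := by
  by_cases hss : S1 ⊆ S2
  · exact Or.inl hss
  · right
    obtain ⟨x, hx1, hx2⟩ := Finset.not_subset.1 hss
    intro y hy
    rcases lt_trichotomy x y with h | h | h
    · exact absurd (d2 x (h1 hx1) y hy h) hx2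
    · rw [← h] at hy; exact absurd hy hx2
    · exact d1 y (h2 hy) x hx1 h

lemma mu_eq_comparable {B1 B2 : Finset ℕ} (h1 : B1 ⊆ Finset.Icc 1 n) (h2 : B2 ⊆ Finset.Icc 1 n)
    (hmu : mu B1 = mu B2) : B1 ⊆ B2 ∨ B2 ⊆ B1 := by
  have hr1 : recOnes B1 ⊆ freeZ n (mu B1) := fun r hr => rec_mem_freeZ h1 hr
  have hr2 : recOnes B2 ⊆ freeZ n (mu B1) := by
    rw [hmu]; exact fun r hr => rec_mem_freeZ h2 hr
  have hd1 : ∀ x ∈ freeZ n (mu B1), ∀ y ∈ recOnes B1, x < y → x ∈ recOnes B1 :=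
    fun x hx y hy hxy => freeZ_lt_rec_mem h1 hx hy hxy
  have hd2 : ∀ x ∈ freeZ n (mu B1), ∀ y ∈ recOnes B2, x < y → x ∈ recOnes B2 := by
    rw [hmu]
    exact fun x hx y hy hxy => freeZ_lt_rec_mem h2 hx hy hxy
  rcases downclosed_nested hr1 hr2 hd1 hd2 with h | h
  · left
    rw [← mu_union_rec B1, ← mu_union_rec B2, hmu]
    exact Finset.union_subset_union (le_refl _) h
  · right
    rw [← mu_union_rec B1, ← mu_union_rec B2, hmu]
    exact Finset.union_subset_union (le_refl _) h
end

section
variable {m : ℕ} {g : Finset ℕ}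

lemma mem_freeZ_iff {j : ℕ} : j ∈ freeZ m g ↔
    (1 ≤ j ∧ j ≤ m) ∧ j ∉ g ∧ ∀ t, j ≤ t → t ≤ m → hW g j ≤ hW g t := by
  simp [freeZ, Finset.mem_Icc]

/-- discrete intermediate value theorem for the walk. -/
lemma hW_ivt (B : Finset ℕ) (c : ℤ) :
    ∀ t2 t1, t1 ≤ t2 → hW B t1 ≤ c → c ≤ hW B t2 → ∃ t, t1 ≤ t ∧ t ≤ t2 ∧ hW B t = c := by
  intro t2
  induction t2 with
  | zero =>
    intro t1 h1 h2 h3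
    have ht1 : t1 = 0 := by omega
    subst ht1
    exact ⟨0, le_refl _, le_refl _, le_antisymm h2 h3⟩
  | succ t ih =>
    intro t1 h1 h2 h3
    by_cases he : hW B (t+1) = c
    · exact ⟨t+1, by omega, le_refl _, he⟩
    · by_cases ht1 : t1 = t + 1
      · subst ht1; omega
      · have hstep := hW_step B t
        have hc : c ≤ hW B t := by omega
        obtain ⟨t', ht'1, ht'2, ht'3⟩ := ih t1 (by omega) h2 hc
        exact ⟨t', ht'1, by omega, ht'3⟩

variable (hsp : ∀ t, t ≤ m → 0 ≤ hW g t)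

include hsp in
lemma exists_freeZ_val (c : ℤ) (hc : 0 ≤ c) (hcm : c < hW g m) :
    ∃ j ∈ freeZ m g, hW g j = c + 1 := by
  have hLne : ((Finset.Icc 0 m).filter (fun t => hW g t = c)).Nonempty := by
    obtain ⟨t, ht1, ht2, ht3⟩ := hW_ivt g c m 0 (by omega) (by rw [hW_zero]; omega) (by omega)
    exact ⟨t, Finset.mem_filter.2 ⟨Finset.mem_Icc.2 ⟨by omega, ht2⟩, ht3⟩⟩
  obtain ⟨tc, htcm, htcval, htcmax⟩ :
      ∃ tc, tc ≤ m ∧ hW g tc = c ∧ ∀ x, x ≤ m → hW g x = c → x ≤ tc := by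
    refine ⟨((Finset.Icc 0 m).filter (fun t => hW g t = c)).max' hLne, ?_, ?_, ?_⟩
    · have := Finset.max'_mem _ hLne
      exact (Finset.mem_Icc.1 (Finset.mem_filter.1 this).1).2
    · exact (Finset.mem_filter.1 (Finset.max'_mem _ hLne)).2
    · exact fun x hx1 hx2 =>
        Finset.le_max' _ x (Finset.mem_filter.2 ⟨Finset.mem_Icc.2 ⟨by omega, hx1⟩, hx2⟩)
  have htclt : tc < m := by
    rcases eq_or_lt_of_le htcm with h | h
    · rw [h] at htcval; omega
    · exact h
  have hval : hW g (tc + 1) = c + 1 := by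
    rcases hW_step g tc with h | h
    · exfalso
      obtain ⟨x, hx1, hx2, hx3⟩ := hW_ivt g c m (tc+1) (by omega) (by omega) (by omega)
      have := htcmax x hx2 hx3
      omega
    · omega
  have hjg : tc + 1 ∉ g := by
    intro hmem
    have := hW_succ_mem g tc hmem
    omega
  refine ⟨tc + 1, mem_freeZ_iff.2 ⟨⟨by omega, by omega⟩, hjg, ?_⟩, hval⟩
  intro t hjt htm
  by_contra hcon
  push_neg at hcon
  have hWt : hW g t ≤ c := by omega
  obtain ⟨x, hx1, hx2, hx3⟩ := hW_ivt g c m t htm hWt (by omega)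
  have := htcmax x hx2 hx3
  omega

lemma freeZ_strictmono {j1 j2 : ℕ} (h1 : j1 ∈ freeZ m g) (h2 : j2 ∈ freeZ m g)
    (hlt : j1 < j2) : hW g j1 < hW g j2 := by
  obtain ⟨⟨hj1a, hj1b⟩, hj1g, hj1f⟩ := mem_freeZ_iff.1 h1
  obtain ⟨⟨hj2a, hj2b⟩, hj2g, hj2f⟩ := mem_freeZ_iff.1 h2
  have hle : hW g j1 ≤ hW g j2 := hj1f j2 (by omega) hj2b
  rcases eq_or_lt_of_le hle with he | h
  · exfalso
    obtain ⟨t', rfl⟩ : ∃ t', j2 = t' + 1 := ⟨j2 - 1, by omega⟩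
    have hstep := hW_succ_notMem g t' hj2g
    have := hj1f t' (by omega) (by omega)
    omega
  · exact h

include hsp in
/-- K3: the walk value at a free zero equals one plus the number of smaller free zeros. -/
lemma freeZ_val : ∀ j, j ∈ freeZ m g → hW g j = 1 + ((freeZ m g ∩ Finset.Ico 1 j).card : ℤ) := by
  intro j
  induction j using Nat.strong_induction_on with
  | _ j ih =>
    intro hj
    obtain ⟨⟨hj1, hjm⟩, hjg, hjf⟩ := mem_freeZ_iff.1 hj
    have hjpos : 1 ≤ hW g j := by
      obtain ⟨t', rfl⟩ : ∃ t', j = t' + 1 := ⟨j - 1, by omega⟩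
      have := hW_succ_notMem g t' hjg
      have := hsp t' (by omega)
      omega
    have hWm : hW g j ≤ hW g m := hjf m hjm (le_refl _)
    set S := freeZ m g ∩ Finset.Ico 1 j with hS
    by_cases hSe : S = ∅
    · have : hW g j = 1 := by
        by_contra hcon
        have h2 : 2 ≤ hW g j := by omega
        obtain ⟨j0, hj0, hj0val⟩ := exists_freeZ_val hsp 0 (le_refl _) (by omega)
        have hj0lt : j0 < j := by
          rcases lt_trichotomy j0 j with h | h | h
          · exact h
          · exfalso; rw [h] at hj0val; omega
          · exfalso
            have := freeZ_strictmono hj hj0 h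
            omega
        have : j0 ∈ S := by
          rw [hS]
          refine Finset.mem_inter.2 ⟨hj0, Finset.mem_Ico.2 ⟨(mem_freeZ_iff.1 hj0).1.1, hj0lt⟩⟩
        rw [hSe] at this
        exact absurd this (Finset.notMem_empty j0)
      rw [this, hSe]
      simp
    · set js := S.max' (Finset.nonempty_of_ne_empty hSe) with hjs
      have hjsS : js ∈ S := Finset.max'_mem _ _
      obtain ⟨hjsfree, hjsIco⟩ := Finset.mem_inter.1 hjsS
      have hjslt : js < j := (Finset.mem_Ico.1 hjsIco).2
      have hIH := ih js hjslt hjsfree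
      have hstrict : hW g js < hW g j := freeZ_strictmono hjsfree hj hjslt
      have hgap : hW g j = hW g js + 1 := by
        by_contra hcon
        have h2 : hW g js + 2 ≤ hW g j := by omega
        have hjs0 : 0 ≤ hW g js := hsp js (by omega)
        obtain ⟨j', hj', hj'val⟩ := exists_freeZ_val hsp (hW g js) hjs0 (by omega)
        have h1 : js < j' := by
          rcases lt_trichotomy j' js with h | h | h
          · have := freeZ_strictmono hj' hjsfree h; omega
          · rw [h] at hj'val; omega
          · exact h
        have h2' : j' < j := by
          rcases lt_trichotomy j' j with h | h | h
          · exact h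
          · rw [h] at hj'val; omega
          · have := freeZ_strictmono hj hj' h; omega
        have : j' ∈ S := by
          rw [hS]
          refine Finset.mem_inter.2 ⟨hj', Finset.mem_Ico.2 ⟨(mem_freeZ_iff.1 hj').1.1, h2'⟩⟩
        have := Finset.le_max' S j' this
        omega
      have hcnt : S.card = (freeZ m g ∩ Finset.Ico 1 js).card + 1 := by
        have hset : S = insert js (freeZ m g ∩ Finset.Ico 1 js) := by
          ext x
          simp only [hS, Finset.mem_inter, Finset.mem_Ico, Finset.mem_insert]
          constructor
          · rintro ⟨hx, hx1, hx2⟩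
            by_cases hxj : x = js
            · left; exact hxj
            · right
              have : x ≤ js := Finset.le_max' S x (by
                rw [hS]; exact Finset.mem_inter.2 ⟨hx, Finset.mem_Ico.2 ⟨hx1, hx2⟩⟩)
              exact ⟨hx, hx1, by omega⟩
          · rintro (rfl | ⟨hx, hx1, hx2⟩)
            · exact ⟨hjsfree, (Finset.mem_Ico.1 hjsIco).1, hjslt⟩
            · exact ⟨hx, hx1, by omega⟩
        rw [hset, Finset.card_insert_of_notMem (by
          simp only [Finset.mem_inter, Finset.mem_Ico]
          rintro ⟨-, -, h⟩; omega)]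
      rw [hgap, hIH, hcnt]
      push_cast
      ring

include hsp in
/-- K4: the walk dominates the number of free zeros so far. -/
lemma hW_ge_freeZ_cnt (s : ℕ) (hs : s ≤ m) :
    ((freeZ m g ∩ Finset.Icc 1 s).card : ℤ) ≤ hW g s := by
  set S := freeZ m g ∩ Finset.Icc 1 s with hS
  by_cases hSe : S = ∅
  · rw [hSe]
    simpa using hsp s hs
  · set js := S.max' (Finset.nonempty_of_ne_empty hSe) with hjs
    have hjsS : js ∈ S := Finset.max'_mem _ _
    obtain ⟨hjsfree, hjsIcc⟩ := Finset.mem_inter.1 hjsS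
    obtain ⟨hjs1, hjss⟩ := Finset.mem_Icc.1 hjsIcc
    have hfree := (mem_freeZ_iff.1 hjsfree).2.2
    have h1 : hW g js ≤ hW g s := hfree s hjss hs
    have h2 := freeZ_val hsp js hjsfree
    have h3 : S ⊆ insert js (freeZ m g ∩ Finset.Ico 1 js) := by
      intro x hx
      obtain ⟨hxf, hxIcc⟩ := Finset.mem_inter.1 hx
      by_cases hxj : x = js
      · rw [hxj]; exact Finset.mem_insert_self _ _
      · have hxle : x ≤ js := Finset.le_max' S x hx
        exact Finset.mem_insert.2 (Or.inr (Finset.mem_inter.2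
          ⟨hxf, Finset.mem_Ico.2 ⟨(Finset.mem_Icc.1 hxIcc).1, by omega⟩⟩))
    have h4 := Finset.card_le_card h3
    have h5 := Finset.card_insert_le js (freeZ m g ∩ Finset.Ico 1 js)
    push_cast
    omega

include hsp in
lemma card_freeZ_ge : hW g m ≤ ((freeZ m g).card : ℤ) := by
  by_contra hcon
  push_neg at hcon
  obtain ⟨j, hj, hjval⟩ := exists_freeZ_val hsp ((freeZ m g).card : ℤ) (by positivity) hcon
  have h2 := freeZ_val hsp j hj
  have h3 : freeZ m g ∩ Finset.Ico 1 j ⊆ freeZ m g \ {j} := by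
    intro x hx
    obtain ⟨hxf, hxI⟩ := Finset.mem_inter.1 hx
    refine Finset.mem_sdiff.2 ⟨hxf, ?_⟩
    simp only [Finset.mem_singleton]
    have := (Finset.mem_Ico.1 hxI).2
    omega
  have h4 := Finset.card_le_card h3
  have h5 : (freeZ m g \ {j}).card = (freeZ m g).card - 1 := by
    rw [Finset.card_sdiff_of_subset (by simpa using hj)]
    simp
  have h6 : 1 ≤ (freeZ m g).card := Finset.card_pos.2 ⟨j, hj⟩
  omega
end

section
variable {m : ℕ} {g F : Finset ℕ}

lemma freeZ_subset_Icc : freeZ m g ⊆ Finset.Icc 1 m := Finset.filter_subset _ _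

lemma freeZ_disj_g : ∀ x ∈ freeZ m g, x ∉ g := fun x hx => (mem_freeZ_iff.1 hx).2.1

lemma hW_union_of_disj (hFg : ∀ x ∈ F, x ∉ g) (t : ℕ) :
    hW (g ∪ F) t = hW g t - 2 * ((F ∩ Finset.Icc 1 t).card : ℤ) := by
  have hset : (g ∪ F) ∩ Finset.Icc 1 t = (g ∩ Finset.Icc 1 t) ∪ (F ∩ Finset.Icc 1 t) := by
    rw [Finset.union_inter_distrib_right]
  have hdisj : Disjoint (g ∩ Finset.Icc 1 t) (F ∩ Finset.Icc 1 t) := by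
    rw [Finset.disjoint_left]
    intro x hx1 hx2
    exact hFg x (Finset.mem_inter.1 hx2).1 (Finset.mem_inter.1 hx1).1
  rw [hW, hW, hset, Finset.card_union_of_disjoint hdisj]
  push_cast
  ring

variable (hg : g ⊆ Finset.Icc 1 m)
variable (hsp : ∀ t, t ≤ m → 0 ≤ hW g t)
variable (hF : F ⊆ freeZ m g)
variable (hdc : ∀ x ∈ freeZ m g, ∀ y ∈ F, x < y → x ∈ F)

include hg hsp hF hdc in
lemma rec_union_eq : recOnes (g ∪ F) = F := by
  have hFg : ∀ x ∈ F, x ∉ g := fun x hx => freeZ_disj_g x (hF hx)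
  have hWB := hW_union_of_disj hFg
  -- value at an element of F
  have hvalF : ∀ j ∈ F, hW (g ∪ F) j = -((F ∩ Finset.Icc 1 j).card : ℤ) := by
    intro j hj
    have hjfree := hF hj
    obtain ⟨⟨hj1, hjm⟩, hjg, hjf⟩ := mem_freeZ_iff.1 hjfree
    have hFicc : F ∩ Finset.Icc 1 j = freeZ m g ∩ Finset.Icc 1 j := by
      apply Finset.Subset.antisymm
      · exact Finset.inter_subset_inter hF (le_refl _)
      · intro x hx
        obtain ⟨hxf, hxI⟩ := Finset.mem_inter.1 hx
        obtain ⟨hx1, hx2⟩ := Finset.mem_Icc.1 hxI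
        refine Finset.mem_inter.2 ⟨?_, hxI⟩
        rcases eq_or_lt_of_le hx2 with h | h
        · rwa [h]
        · exact hdc x hxf j hj h
    have hIccIco : freeZ m g ∩ Finset.Icc 1 j
        = insert j (freeZ m g ∩ Finset.Ico 1 j) := by
      ext x
      simp only [Finset.mem_inter, Finset.mem_Icc, Finset.mem_Ico, Finset.mem_insert]
      constructor
      · rintro ⟨hx, hx1, hx2⟩
        rcases eq_or_lt_of_le hx2 with h | h
        · left; exact h
        · right; exact ⟨hx, hx1, h⟩
      · rintro (rfl | ⟨hx, hx1, hx2⟩)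
        · exact ⟨hjfree, hj1, le_refl _⟩
        · exact ⟨hx, hx1, by omega⟩
    have hnotm : j ∉ freeZ m g ∩ Finset.Ico 1 j := by
      simp only [Finset.mem_inter, Finset.mem_Ico]
      rintro ⟨-, -, h⟩; omega
    have hcard : (freeZ m g ∩ Finset.Icc 1 j).card
        = (freeZ m g ∩ Finset.Ico 1 j).card + 1 := by
      rw [hIccIco, Finset.card_insert_of_notMem hnotm]
    have hval := freeZ_val hsp j hjfree
    rw [hWB j, hFicc, hcard, hval]
    push_cast
    ring
  ext i
  simp only [recOnes, Finset.mem_filter, Finset.mem_union]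
  constructor
  · rintro ⟨hiB, hirec⟩
    by_contra hiF
    have hig : i ∈ g := by tauto
    obtain ⟨hi1, him⟩ := Finset.mem_Icc.1 (hg hig)
    have hK4 : ((freeZ m g ∩ Finset.Icc 1 i).card : ℤ) ≤ hW g i := hW_ge_freeZ_cnt hsp i him
    have hFfz : (F ∩ Finset.Icc 1 i).card ≤ (freeZ m g ∩ Finset.Icc 1 i).card :=
      Finset.card_le_card (Finset.inter_subset_inter hF (le_refl _))
    by_cases hFc : (F ∩ Finset.Icc 1 i) = ∅
    · have h1 : hW (g ∪ F) i = hW g i := by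
        rw [hWB i, hFc]
        simp
      have h2 := hirec 0 (by omega)
      rw [hW_zero] at h2
      have := hsp i him
      omega
    · set j := (F ∩ Finset.Icc 1 i).max' (Finset.nonempty_of_ne_empty hFc) with hj
      have hjmem : j ∈ F ∩ Finset.Icc 1 i := Finset.max'_mem _ _
      obtain ⟨hjF, hjI⟩ := Finset.mem_inter.1 hjmem
      have hjne : j ≠ i := fun h => hFg j hjF (h ▸ hig)
      have hjlt : j < i := by
        have := (Finset.mem_Icc.1 hjI).2
        omega
      have hFeq : F ∩ Finset.Icc 1 j = F ∩ Finset.Icc 1 i := by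
        apply Finset.Subset.antisymm
        · intro x hx
          obtain ⟨hxF, hxI⟩ := Finset.mem_inter.1 hx
          obtain ⟨hx1, hx2⟩ := Finset.mem_Icc.1 hxI
          exact Finset.mem_inter.2 ⟨hxF, Finset.mem_Icc.2 ⟨hx1, by omega⟩⟩
        · intro x hx
          obtain ⟨hxF, hxI⟩ := Finset.mem_inter.1 hx
          obtain ⟨hx1, hx2⟩ := Finset.mem_Icc.1 hxI
          have : x ≤ j := Finset.le_max' _ x hx
          exact Finset.mem_inter.2 ⟨hxF, Finset.mem_Icc.2 ⟨hx1, this⟩⟩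
      have hvj := hvalF j hjF
      rw [hFeq] at hvj
      have h2 := hirec j hjlt
      rw [hvj, hWB i] at h2
      push_cast at h2
      omega
  · intro hiF
    refine ⟨Or.inr hiF, ?_⟩
    intro s hs
    have hjval := hvalF i hiF
    have hFsub : F ∩ Finset.Icc 1 s ⊆ (F ∩ Finset.Icc 1 i).erase i := by
      intro x hx
      obtain ⟨hxF, hxI⟩ := Finset.mem_inter.1 hx
      obtain ⟨hx1, hx2⟩ := Finset.mem_Icc.1 hxI
      refine Finset.mem_erase.2 ⟨by omega, Finset.mem_inter.2 ⟨hxF, Finset.mem_Icc.2 ⟨hx1, by omega⟩⟩⟩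
    have hmem : i ∈ F ∩ Finset.Icc 1 i := by
      have hjfree := hF hiF
      have hj1 := (mem_freeZ_iff.1 hjfree).1.1
      exact Finset.mem_inter.2 ⟨hiF, Finset.mem_Icc.2 ⟨hj1, le_refl _⟩⟩
    have hcard : (F ∩ Finset.Icc 1 s).card ≤ (F ∩ Finset.Icc 1 i).card - 1 := by
      have h1 := Finset.card_le_card hFsub
      have h2 : ((F ∩ Finset.Icc 1 i).erase i).card = (F ∩ Finset.Icc 1 i).card - 1 :=
        Finset.card_erase_of_mem hmem
      omega
    have hspos : 1 ≤ (F ∩ Finset.Icc 1 i).card := Finset.card_pos.2 ⟨i, hmem⟩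
    -- lower bound for hW B s
    have hk4 : ((freeZ m g ∩ Finset.Icc 1 s).card : ℤ) ≤ hW g s := by
      apply hW_ge_freeZ_cnt hsp
      have him : i ≤ m := (mem_freeZ_iff.1 (hF hiF)).1.2
      omega
    have hFfz : (F ∩ Finset.Icc 1 s).card ≤ (freeZ m g ∩ Finset.Icc 1 s).card :=
      Finset.card_le_card (Finset.inter_subset_inter hF (le_refl _))
    have h1 : hW (g ∪ F) s = hW g s - 2 * ((F ∩ Finset.Icc 1 s).card : ℤ) := hWB s
    rw [h1, hjval]
    push_cast
    omega
end

lemma exists_downclosed (s : Finset ℕ) (u : ℕ) (hu : u ≤ s.card) :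
    ∃ F, F ⊆ s ∧ F.card = u ∧ ∀ x ∈ s, ∀ y ∈ F, x < y → x ∈ F := by
  induction u with
  | zero => exact ⟨∅, Finset.empty_subset s, rfl, by simp⟩
  | succ u ih =>
    obtain ⟨F, hFs, hFc, hFdc⟩ := ih (by omega)
    have hne : (s \ F).Nonempty := by
      rw [← Finset.card_pos, Finset.card_sdiff_of_subset hFs]
      omega
    set x := (s \ F).min' hne with hx
    obtain ⟨hxs, hxF⟩ := Finset.mem_sdiff.1 (Finset.min'_mem _ hne)
    rw [← hx] at hxs hxF
    refine ⟨insert x F, ?_, ?_, ?_⟩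
    · exact Finset.insert_subset hxs hFs
    · rw [Finset.card_insert_of_notMem hxF, hFc]
    · intro z hz y hy hzy
      rcases Finset.mem_insert.1 hy with hyx | hyF
      · by_cases hzF : z ∈ F
        · exact Finset.mem_insert.2 (Or.inr hzF)
        · exfalso
          have : x ≤ z := Finset.min'_le _ z (Finset.mem_sdiff.2 ⟨hz, hzF⟩)
          omega
      · exact Finset.mem_insert.2 (Or.inr (hFdc z hz y hyF hzy))

noncomputable def pickF (s : Finset ℕ) (u : ℕ) : Finset ℕ :=
  if h : u ≤ s.card then (exists_downclosed s u h).choose else ∅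

lemma pickF_spec (s : Finset ℕ) (u : ℕ) (h : u ≤ s.card) :
    pickF s u ⊆ s ∧ (pickF s u).card = u ∧ ∀ x ∈ s, ∀ y ∈ pickF s u, x < y → x ∈ pickF s u := by
  rw [pickF, dif_pos h]
  exact (exists_downclosed s u h).choose_spec

noncomputable def eSet (g : Finset ℕ) (m lam : ℕ) : Finset ℕ :=
  g ∪ pickF (freeZ m g) (lam - g.card)

section
variable {m lam : ℕ} {g : Finset ℕ}
variable (hg : g ⊆ Finset.Icc 1 m) (hsp : ∀ t, t ≤ m → 0 ≤ hW g t)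
variable (hlam1 : g.card ≤ lam) (hlam2 : lam + g.card ≤ m)

include hg hsp hlam2 in
lemma pick_le_card : lam - g.card ≤ (freeZ m g).card := by
  have h1 := card_freeZ_ge hsp
  have h2 : hW g m = (m : ℤ) - 2 * g.card := by
    rw [hW]
    congr 2
    rw [Finset.inter_eq_left.2 hg]
  rw [h2] at h1
  omega

include hg hsp hlam1 hlam2 in
lemma eSet_card : (eSet g m lam).card = lam := by
  obtain ⟨hs, hc, _⟩ := pickF_spec (freeZ m g) (lam - g.card) (pick_le_card hg hsp hlam2)
  have hdisj : Disjoint g (pickF (freeZ m g) (lam - g.card)) := by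
    rw [Finset.disjoint_right]
    exact fun x hx => freeZ_disj_g x (hs hx)
  rw [eSet, Finset.card_union_of_disjoint hdisj, hc]
  omega

include hg hsp hlam2 in
lemma mu_eSet : mu (eSet g m lam) = g := by
  obtain ⟨hs, hc, hdc⟩ := pickF_spec (freeZ m g) (lam - g.card) (pick_le_card hg hsp hlam2)
  have hrec := rec_union_eq hg hsp hs hdc
  rw [eSet, mu, hrec]
  apply Finset.Subset.antisymm
  · intro x hx
    obtain ⟨hx1, hx2⟩ := Finset.mem_sdiff.1 hx
    rcases Finset.mem_union.1 hx1 with h | h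
    · exact h
    · exact absurd h hx2
  · intro x hx
    exact Finset.mem_sdiff.2 ⟨Finset.mem_union_left _ hx, fun hc' => freeZ_disj_g x (hs hc') hx⟩

include hg in
lemma eSet_subset : eSet g m lam ⊆ Finset.Icc 1 m := by
  rw [eSet]
  apply Finset.union_subset hg
  intro x hx
  rcases Nat.le_total (lam - g.card) (freeZ m g).card with h | h
  · exact freeZ_subset_Icc ((pickF_spec (freeZ m g) _ h).1 hx)
  · rcases eq_or_lt_of_le h with he | hlt
    · exact freeZ_subset_Icc ((pickF_spec (freeZ m g) _ (le_of_eq he.symm)).1 hx)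
    · rw [pickF, dif_neg (by omega)] at hx
      exact absurd hx (Finset.notMem_empty x)
end

lemma binLT_irrefl (B : Finset ℕ) : ¬ binLT B B := by
  rintro ⟨k, h1, h2, -⟩
  exact h2 h1

lemma ssubset_binLT {C B : Finset ℕ} (h : C ⊂ B) : binLT C B := by
  obtain ⟨hsub, hne⟩ := Finset.ssubset_iff_subset_ne.1 h
  have hne' : (B \ C).Nonempty := by
    rw [← Finset.card_pos, Finset.card_sdiff_of_subset hsub]
    have := Finset.card_lt_card h
    omega
  set k := (B \ C).max' hne' with hk
  obtain ⟨hkB, hkC⟩ := Finset.mem_sdiff.1 (Finset.max'_mem _ hne')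
  rw [← hk] at hkB hkC
  refine ⟨k, hkB, hkC, ?_⟩
  intro j hj
  constructor
  · exact fun hjC => hsub hjC
  · intro hjB
    by_contra hjC
    have : j ≤ k := Finset.le_max' _ j (Finset.mem_sdiff.2 ⟨hjB, hjC⟩)
    omega

lemma binLT_trans {A B C : Finset ℕ} (h1 : binLT A B) (h2 : binLT B C) : binLT A C := by
  obtain ⟨k1, hk1B, hk1A, hk1⟩ := h1
  obtain ⟨k2, hk2C, hk2B, hk2⟩ := h2
  rcases lt_trichotomy k1 k2 with h | h | h
  · refine ⟨k2, hk2C, ?_, ?_⟩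
    · intro hk2A
      exact hk2B ((hk1 k2 h).1 hk2A)
    · intro j hj
      rw [hk1 j (by omega), hk2 j hj]
  · subst h
    refine ⟨k1, hk2C, hk1A, ?_⟩
    intro j hj
    rw [hk1 j hj, hk2 j hj]
  · refine ⟨k1, ?_, hk1A, ?_⟩
    · exact (hk2 k1 h).1 hk1B
    · intro j hj
      rw [hk1 j hj, hk2 j (by omega)]

lemma specialPoint_iff_hW {n : ℕ} {A : Finset ℕ} :
    SpecialPoint n A ↔ ∀ t, t ≤ n → 0 ≤ hW A t := by
  constructor
  · intro h t htn
    rcases Nat.eq_zero_or_pos t with rfl | ht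
    · rw [hW_zero]
    · have := h t (Finset.mem_Icc.2 ⟨ht, htn⟩)
      rw [hW]
      push_cast
      omega
  · intro h t ht
    obtain ⟨ht1, ht2⟩ := Finset.mem_Icc.1 ht
    have := h t ht2
    rw [hW] at this
    push_cast at this
    omega

section
variable (n : ℕ) (A : Finset ℕ)

/-- special points in the block of `a`. -/
noncomputable def SBlk (a : ℕ) : Finset (Finset ℕ) :=
  (Finset.Icc 1 n).powerset.filter
    (fun m => SpecialPoint n m ∧ a ∉ m ∧ ∀ j, a < j → (j ∈ m ↔ j ∈ A))

/-- elements of `A` whose block contains a special point. -/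
noncomputable def NB : Finset ℕ := A.filter (fun a => (SBlk n A a).Nonempty)

noncomputable def kap (a : ℕ) : ℕ := (SBlk n A a).sup (fun m => (m ∩ Finset.Icc 1 (a-1)).card)

noncomputable def lamF (a : ℕ) : ℕ :=
  if h : (((NB n A).filter (fun b => a ≤ b)).image
      (fun b => b - 1 - kap n A b - (A ∩ Finset.Ioc a b).card)).Nonempty
  then (((NB n A).filter (fun b => a ≤ b)).image
      (fun b => b - 1 - kap n A b - (A ∩ Finset.Ioc a b).card)).min' h
  else 0

end

section
variable {n : ℕ} {A : Finset ℕ} (hA : A ⊆ Finset.Icc 1 n)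

lemma mem_SBlk_iff {a : ℕ} {m : Finset ℕ} : m ∈ SBlk n A a ↔
    m ⊆ Finset.Icc 1 n ∧ SpecialPoint n m ∧ a ∉ m ∧ ∀ j, a < j → (j ∈ m ↔ j ∈ A) := by
  simp [SBlk, Finset.mem_powerset, and_assoc]

include hA in
lemma SBlk_card_bound {a b : ℕ} (haA : a ∈ A) (hbA : b ∈ A) (hab : a < b)
    {m : Finset ℕ} (hm : m ∈ SBlk n A a) :
    2 * ((m ∩ Finset.Icc 1 (a-1)).card + (A ∩ Finset.Ioc a b).card) ≤ b := by
  obtain ⟨hmI, hmsp, ham, hagree⟩ := mem_SBlk_iff.1 hm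
  have hbn : b ≤ n := (Finset.mem_Icc.1 (hA hbA)).2
  have hsplit : m ∩ Finset.Icc 1 b = (m ∩ Finset.Icc 1 (a-1)) ∪ (A ∩ Finset.Ioc a b) := by
    ext x
    simp only [Finset.mem_inter, Finset.mem_Icc, Finset.mem_union, Finset.mem_Ioc]
    constructor
    · rintro ⟨hxm, hx1, hxb⟩
      rcases lt_trichotomy x a with h | rfl | h
      · left; exact ⟨hxm, hx1, by omega⟩
      · exact absurd hxm ham
      · right; exact ⟨(hagree x h).1 hxm, h, hxb⟩
    · rintro (⟨hxm, hx1, hxa⟩ | ⟨hxA, hxa, hxb⟩)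
      · have ha1 : 1 ≤ a := (Finset.mem_Icc.1 (hA haA)).1
        exact ⟨hxm, hx1, by omega⟩
      · refine ⟨(hagree x hxa).2 hxA, ?_, hxb⟩
        exact (Finset.mem_Icc.1 (hA hxA)).1
  have hdisj : Disjoint (m ∩ Finset.Icc 1 (a-1)) (A ∩ Finset.Ioc a b) := by
    rw [Finset.disjoint_left]
    intro x hx1 hx2
    simp only [Finset.mem_inter, Finset.mem_Icc, Finset.mem_Ioc] at hx1 hx2
    omega
  have hcard : (m ∩ Finset.Icc 1 b).card
      = (m ∩ Finset.Icc 1 (a-1)).card + (A ∩ Finset.Ioc a b).card := by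
    rw [hsplit, Finset.card_union_of_disjoint hdisj]
  have := hmsp b (Finset.mem_Icc.2 ⟨by omega, hbn⟩)
  omega

include hA in
lemma SBlk_card_self {a : ℕ} (haA : a ∈ A) {m : Finset ℕ} (hm : m ∈ SBlk n A a) :
    2 * (m ∩ Finset.Icc 1 (a-1)).card ≤ a - 1 := by
  obtain ⟨hmI, hmsp, ham, hagree⟩ := mem_SBlk_iff.1 hm
  obtain ⟨ha1, han⟩ := Finset.mem_Icc.1 (hA haA)
  rcases Nat.eq_or_lt_of_le ha1 with h1 | h2
  · have : m ∩ Finset.Icc 1 (a-1) = ∅ := by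
      rw [← h1]
      simp
    rw [this]
    simp
  · have hsp := hmsp (a-1) (Finset.mem_Icc.2 ⟨by omega, by omega⟩)
    have : m ∩ Finset.Icc 1 (a-1) ∩ Finset.Icc 1 (a-1) = m ∩ Finset.Icc 1 (a-1) := by
      rw [Finset.inter_assoc, Finset.inter_self]
    omega

include hA in
lemma kap_bound_self {a : ℕ} (haA : a ∈ A) : 2 * kap n A a ≤ a - 1 := by
  have h : kap n A a ≤ (a-1)/2 := by
    apply Finset.sup_le
    intro m hm
    have := SBlk_card_self hA haA hm
    omega
  omega

include hA in
lemma kap_sum_bound {a b : ℕ} (ha : a ∈ NB n A) (hb : b ∈ NB n A) (hab : a ≤ b) :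
    kap n A a + (A ∩ Finset.Ioc a b).card + kap n A b ≤ b - 1 := by
  obtain ⟨haA, -⟩ := Finset.mem_filter.1 ha
  obtain ⟨hbA, hbne⟩ := Finset.mem_filter.1 hb
  obtain ⟨haA', hane⟩ := Finset.mem_filter.1 ha
  rcases Nat.eq_or_lt_of_le hab with rfl | hlt
  · have h1 := kap_bound_self hA haA
    have h2 : A ∩ Finset.Ioc a a = ∅ := by simp
    rw [h2]
    simp only [Finset.card_empty, add_zero]
    omega
  · -- kap a attained by some member
    obtain ⟨ma, hma, hmaval⟩ :=
      Finset.exists_mem_eq_sup (SBlk n A a) hane (fun m => (m ∩ Finset.Icc 1 (a-1)).card)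
    have hk : kap n A a = (ma ∩ Finset.Icc 1 (a-1)).card := hmaval
    have h1 := SBlk_card_bound hA haA hbA hlt hma
    have h2 := kap_bound_self hA hbA
    have hb1 : 1 ≤ b := (Finset.mem_Icc.1 (hA hbA)).1
    omega

include hA in
lemma lam_ne_nonempty {a : ℕ} (ha : a ∈ NB n A) :
    (((NB n A).filter (fun b => a ≤ b)).image
      (fun b => b - 1 - kap n A b - (A ∩ Finset.Ioc a b).card)).Nonempty := by
  refine ⟨_, Finset.mem_image.2 ⟨a, Finset.mem_filter.2 ⟨ha, le_refl a⟩, rfl⟩⟩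

include hA in
lemma lam_le_term {a b : ℕ} (ha : a ∈ NB n A) (hb : b ∈ NB n A) (hab : a ≤ b) :
    lamF n A a ≤ b - 1 - kap n A b - (A ∩ Finset.Ioc a b).card := by
  rw [lamF, dif_pos (lam_ne_nonempty hA ha)]
  apply Finset.min'_le
  exact Finset.mem_image.2 ⟨b, Finset.mem_filter.2 ⟨hb, hab⟩, rfl⟩

include hA in
lemma lam_exists_term {a : ℕ} (ha : a ∈ NB n A) :
    ∃ b ∈ NB n A, a ≤ b ∧ lamF n A a = b - 1 - kap n A b - (A ∩ Finset.Ioc a b).card := by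
  rw [lamF, dif_pos (lam_ne_nonempty hA ha)]
  have hmem := Finset.min'_mem _ (lam_ne_nonempty hA ha)
  obtain ⟨b, hbmem, hbeq⟩ := Finset.mem_image.1 hmem
  obtain ⟨hbNB, hble⟩ := Finset.mem_filter.1 hbmem
  exact ⟨b, hbNB, hble, hbeq.symm⟩

include hA in
lemma kap_le_lam {a : ℕ} (ha : a ∈ NB n A) : kap n A a ≤ lamF n A a := by
  rw [lamF, dif_pos (lam_ne_nonempty hA ha)]
  apply Finset.le_min'
  intro y hy
  obtain ⟨b, hbmem, hbeq⟩ := Finset.mem_image.1 hy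
  obtain ⟨hbNB, hble⟩ := Finset.mem_filter.1 hbmem
  have := kap_sum_bound hA ha hbNB hble
  omega

include hA in
lemma lam_add_kap_le {a : ℕ} (ha : a ∈ NB n A) : lamF n A a + kap n A a ≤ a - 1 := by
  have h1 := lam_le_term hA ha ha (le_refl a)
  have h2 : A ∩ Finset.Ioc a a = ∅ := by simp
  rw [h2] at h1
  have h3 := kap_sum_bound hA ha ha (le_refl a)
  rw [h2] at h3
  simp only [Finset.card_empty, Nat.sub_zero, add_zero] at h1 h3
  omega

include hA in
lemma lam_drop {a' a : ℕ} (ha' : a' ∈ NB n A) (ha : a ∈ NB n A) (hlt : a' < a) :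
    lamF n A a' + (A ∩ Finset.Ioc a' a).card ≤ lamF n A a := by
  obtain ⟨b0, hb0, hab0, heq⟩ := lam_exists_term hA ha
  have h1 := lam_le_term hA ha' hb0 (by omega)
  have hsplit : (A ∩ Finset.Ioc a' b0).card
      = (A ∩ Finset.Ioc a' a).card + (A ∩ Finset.Ioc a b0).card := by
    have : A ∩ Finset.Ioc a' b0 = (A ∩ Finset.Ioc a' a) ∪ (A ∩ Finset.Ioc a b0) := by
      ext x
      simp only [Finset.mem_inter, Finset.mem_Ioc, Finset.mem_union]
      constructor
      · rintro ⟨hx, h1', h2'⟩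
        by_cases hxa : x ≤ a
        · left; exact ⟨hx, h1', hxa⟩
        · right; exact ⟨hx, by omega, h2'⟩
      · rintro (⟨hx, h1', h2'⟩ | ⟨hx, h1', h2'⟩)
        · exact ⟨hx, h1', by omega⟩
        · exact ⟨hx, by omega, h2'⟩
    rw [this, Finset.card_union_of_disjoint]
    rw [Finset.disjoint_left]
    intro x hx1 hx2
    simp only [Finset.mem_inter, Finset.mem_Ioc] at hx1 hx2
    omega
  have h4 := kap_sum_bound hA ha' hb0 (by omega)
  have h5 := kap_sum_bound hA ha hb0 hab0
  omega

include hA in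
lemma lam_special (hsp : SpecialPoint n A) {a : ℕ} (ha : a ∈ NB n A) :
    (A ∩ Finset.Icc 1 (a-1)).card + 1 ≤ lamF n A a := by
  obtain ⟨haA, -⟩ := Finset.mem_filter.1 ha
  obtain ⟨ha1, han⟩ := Finset.mem_Icc.1 (hA haA)
  rw [lamF, dif_pos (lam_ne_nonempty hA ha)]
  apply Finset.le_min'
  intro y hy
  obtain ⟨b, hbmem, hbeq⟩ := Finset.mem_image.1 hy
  obtain ⟨hbNB, hble⟩ := Finset.mem_filter.1 hbmem
  obtain ⟨hbA, -⟩ := Finset.mem_filter.1 hbNB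
  obtain ⟨hb1, hbn⟩ := Finset.mem_Icc.1 (hA hbA)
  have hspb := hsp b (Finset.mem_Icc.2 ⟨hb1, hbn⟩)
  have hsplit : (A ∩ Finset.Icc 1 b).card
      = (A ∩ Finset.Icc 1 (a-1)).card + 1 + (A ∩ Finset.Ioc a b).card := by
    have hset : A ∩ Finset.Icc 1 b
        = (A ∩ Finset.Icc 1 (a-1)) ∪ ({a} ∪ (A ∩ Finset.Ioc a b)) := by
      ext x
      simp only [Finset.mem_inter, Finset.mem_Icc, Finset.mem_union, Finset.mem_singleton,
        Finset.mem_Ioc]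
      constructor
      · rintro ⟨hx, hx1, hxb⟩
        rcases lt_trichotomy x a with h | rfl | h
        · left; exact ⟨hx, hx1, by omega⟩
        · right; left; rfl
        · right; right; exact ⟨hx, h, hxb⟩
      · rintro (⟨hx, hx1, hxa⟩ | rfl | ⟨hx, hxa, hxb⟩)
        · exact ⟨hx, hx1, by omega⟩
        · exact ⟨haA, ha1, hble⟩
        · exact ⟨hx, by omega, hxb⟩
    have hd1 : Disjoint (A ∩ Finset.Icc 1 (a-1)) ({a} ∪ (A ∩ Finset.Ioc a b)) := by
      rw [Finset.disjoint_left]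
      intro x hx1 hx2
      simp only [Finset.mem_inter, Finset.mem_Icc, Finset.mem_union, Finset.mem_singleton,
        Finset.mem_Ioc] at hx1 hx2
      omega
    have hd2 : Disjoint ({a} : Finset ℕ) (A ∩ Finset.Ioc a b) := by
      rw [Finset.disjoint_left]
      intro x hx1 hx2
      simp only [Finset.mem_singleton] at hx1
      simp only [Finset.mem_inter, Finset.mem_Ioc] at hx2
      omega
    rw [hset, Finset.card_union_of_disjoint hd1, Finset.card_union_of_disjoint hd2]
    simp only [Finset.card_singleton]
    omega
  have h2 := kap_bound_self hA hbA
  rw [← hbeq]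
  omega
end

lemma kap_ge {n a : ℕ} {A m : Finset ℕ} (hm : m ∈ SBlk n A a) :
    (m ∩ Finset.Icc 1 (a-1)).card ≤ kap n A a := by
  exact Finset.le_sup (f := fun m => (m ∩ Finset.Icc 1 (a-1)).card) hm


noncomputable def phi (n : ℕ) (A : Finset ℕ) (a : ℕ) (m : Finset ℕ) : Finset ℕ :=
  A.filter (fun j => a < j) ∪ eSet (m ∩ Finset.Icc 1 (a-1)) (a-1) (lamF n A a)

noncomputable def WB (n : ℕ) (A : Finset ℕ) (a : ℕ) : Finset (Finset ℕ) :=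
  (SBlk n A a).image (phi n A a)

noncomputable def Wo (n : ℕ) (A : Finset ℕ) : Finset (Finset ℕ) :=
  (NB n A).biUnion (WB n A)

section
variable {n : ℕ} {A : Finset ℕ} (hA : A ⊆ Finset.Icc 1 n)

lemma blk_decomp {x : Finset ℕ} {a : ℕ} (hx : x ⊆ Finset.Icc 1 n) (hax : a ∉ x)
    (hagree : ∀ j, a < j → (j ∈ x ↔ j ∈ A)) :
    x = (x ∩ Finset.Icc 1 (a-1)) ∪ A.filter (fun j => a < j) := by
  ext e
  simp only [Finset.mem_union, Finset.mem_inter, Finset.mem_Icc, Finset.mem_filter]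
  constructor
  · intro he
    obtain ⟨he1, he2⟩ := Finset.mem_Icc.1 (hx he)
    rcases lt_trichotomy e a with h | rfl | h
    · left; exact ⟨he, he1, by omega⟩
    · exact absurd he hax
    · right; exact ⟨(hagree e h).1 he, h⟩
  · rintro (⟨he, -, -⟩ | ⟨heA, hae⟩)
    · exact he
    · exact (hagree e hae).2 heA

include hA in
lemma SBlk_g_facts {a : ℕ} {m : Finset ℕ} (haA : a ∈ A) (hm : m ∈ SBlk n A a) :
    (m ∩ Finset.Icc 1 (a-1)) ⊆ Finset.Icc 1 (a-1)
    ∧ (∀ t, t ≤ a - 1 → 0 ≤ hW (m ∩ Finset.Icc 1 (a-1)) t) := by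
  obtain ⟨hmI, hmsp, ham, hagree⟩ := mem_SBlk_iff.1 hm
  refine ⟨Finset.inter_subset_right, ?_⟩
  intro t ht
  have hseteq : (m ∩ Finset.Icc 1 (a-1)) ∩ Finset.Icc 1 t = m ∩ Finset.Icc 1 t := by
    ext x
    simp only [Finset.mem_inter, Finset.mem_Icc]
    constructor
    · rintro ⟨⟨h1, -⟩, h3⟩; exact ⟨h1, h3⟩
    · rintro ⟨h1, h2, h3⟩; exact ⟨⟨h1, h2, by omega⟩, h2, h3⟩
  have hWeq : hW (m ∩ Finset.Icc 1 (a-1)) t = hW m t := by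
    rw [hW, hW, hseteq]
  rw [hWeq]
  have han : a ≤ n := (Finset.mem_Icc.1 (hA haA)).2
  exact specialPoint_iff_hW.1 hmsp t (by omega)

include hA in
lemma mem_WB_props {a : ℕ} {x : Finset ℕ} (ha : a ∈ NB n A) (hx : x ∈ WB n A a) :
    x ⊆ Finset.Icc 1 n ∧ a ∉ x ∧ (∀ j, a < j → (j ∈ x ↔ j ∈ A))
    ∧ (x ∩ Finset.Icc 1 (a-1)).card = lamF n A a := by
  obtain ⟨haA, -⟩ := Finset.mem_filter.1 ha
  obtain ⟨ha1, han⟩ := Finset.mem_Icc.1 (hA haA)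
  obtain ⟨m, hm, rfl⟩ := Finset.mem_image.1 hx
  obtain ⟨hg, hgsp⟩ := SBlk_g_facts hA haA hm
  have hgcard : (m ∩ Finset.Icc 1 (a-1)).card ≤ kap n A a := kap_ge hm
  have hlam1 : (m ∩ Finset.Icc 1 (a-1)).card ≤ lamF n A a :=
    le_trans hgcard (kap_le_lam hA ha)
  have hlam2 : lamF n A a + (m ∩ Finset.Icc 1 (a-1)).card ≤ a - 1 := by
    have := lam_add_kap_le hA ha
    omega
  have hEsub : eSet (m ∩ Finset.Icc 1 (a-1)) (a-1) (lamF n A a) ⊆ Finset.Icc 1 (a-1) :=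
    eSet_subset hg
  have hEcard : (eSet (m ∩ Finset.Icc 1 (a-1)) (a-1) (lamF n A a)).card = lamF n A a :=
    eSet_card hg hgsp hlam1 hlam2
  have hTn : A.filter (fun j => a < j) ⊆ Finset.Icc 1 n :=
    le_trans (Finset.filter_subset _ _) hA
  constructor
  · rw [phi]
    apply Finset.union_subset hTn
    intro e he
    have := Finset.mem_Icc.1 (hEsub he)
    exact Finset.mem_Icc.2 ⟨this.1, by omega⟩
  constructor
  · rw [phi]
    intro hmem
    rcases Finset.mem_union.1 hmem with h | h
    · exact absurd (Finset.mem_filter.1 h).2 (lt_irrefl a)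
    · have := Finset.mem_Icc.1 (hEsub h)
      omega
  constructor
  · intro j hj
    rw [phi]
    simp only [Finset.mem_union, Finset.mem_filter]
    constructor
    · rintro (⟨hjA, -⟩ | hE)
      · exact hjA
      · have := Finset.mem_Icc.1 (hEsub hE)
        omega
    · intro hjA
      left; exact ⟨hjA, hj⟩
  · have hxE : phi n A a m ∩ Finset.Icc 1 (a-1)
        = eSet (m ∩ Finset.Icc 1 (a-1)) (a-1) (lamF n A a) := by
      rw [phi]
      ext e
      simp only [Finset.mem_inter, Finset.mem_union, Finset.mem_filter, Finset.mem_Icc]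
      constructor
      · rintro ⟨(⟨heA, hae⟩ | hE), he1, he2⟩
        · omega
        · exact hE
      · intro hE
        have := Finset.mem_Icc.1 (hEsub hE)
        exact ⟨Or.inr hE, this.1, this.2⟩
    rw [hxE, hEcard]

include hA in
lemma WB_card {a : ℕ} (ha : a ∈ NB n A) : (WB n A a).card = (SBlk n A a).card := by
  obtain ⟨haA, -⟩ := Finset.mem_filter.1 ha
  obtain ⟨ha1, han⟩ := Finset.mem_Icc.1 (hA haA)
  rw [WB]
  apply Finset.card_image_of_injOn
  intro m1 hm1 m2 hm2 heq
  obtain ⟨hg1, hgsp1⟩ := SBlk_g_facts hA haA hm1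
  obtain ⟨hg2, hgsp2⟩ := SBlk_g_facts hA haA hm2
  have hlam2 : ∀ m, m ∈ SBlk n A a → lamF n A a + (m ∩ Finset.Icc 1 (a-1)).card ≤ a - 1 := by
    intro m hm
    have h1 := kap_ge hm
    have := lam_add_kap_le hA ha
    omega
  -- intersecting phi with Icc 1 (a-1) recovers eSet
  have hxE : ∀ m, m ∈ SBlk n A a → phi n A a m ∩ Finset.Icc 1 (a-1)
      = eSet (m ∩ Finset.Icc 1 (a-1)) (a-1) (lamF n A a) := by
    intro m hm
    obtain ⟨hg, hgsp⟩ := SBlk_g_facts hA haA hm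
    have hEsub : eSet (m ∩ Finset.Icc 1 (a-1)) (a-1) (lamF n A a) ⊆ Finset.Icc 1 (a-1) :=
      eSet_subset hg
    rw [phi]
    ext e
    simp only [Finset.mem_inter, Finset.mem_union, Finset.mem_filter, Finset.mem_Icc]
    constructor
    · rintro ⟨(⟨heA, hae⟩ | hE), he1, he2⟩
      · omega
      · exact hE
    · intro hE
      have := Finset.mem_Icc.1 (hEsub hE)
      exact ⟨Or.inr hE, this.1, this.2⟩
  have hE12 : eSet (m1 ∩ Finset.Icc 1 (a-1)) (a-1) (lamF n A a)
      = eSet (m2 ∩ Finset.Icc 1 (a-1)) (a-1) (lamF n A a) := by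
    rw [← hxE m1 hm1, ← hxE m2 hm2, heq]
  have hgg : m1 ∩ Finset.Icc 1 (a-1) = m2 ∩ Finset.Icc 1 (a-1) := by
    have h1 := mu_eSet hg1 hgsp1 (hlam2 m1 hm1)
    have h2 := mu_eSet hg2 hgsp2 (hlam2 m2 hm2)
    rw [← h1, ← h2, hE12]
  obtain ⟨hmI1, hmsp1, ham1, hagree1⟩ := mem_SBlk_iff.1 hm1
  obtain ⟨hmI2, hmsp2, ham2, hagree2⟩ := mem_SBlk_iff.1 hm2
  rw [blk_decomp hmI1 ham1 hagree1, blk_decomp hmI2 ham2 hagree2, hgg]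

include hA in
lemma WB_mem_has_other {a a' : ℕ} {x : Finset ℕ} (ha : a ∈ NB n A) (ha' : a' ∈ NB n A)
    (hlt : a < a') (hx : x ∈ WB n A a) : a' ∈ x := by
  obtain ⟨-, -, hagree, -⟩ := mem_WB_props hA ha hx
  obtain ⟨ha'A, -⟩ := Finset.mem_filter.1 ha'
  exact (hagree a' hlt).2 ha'A

include hA in
lemma WB_disj {a a' : ℕ} (ha : a ∈ NB n A) (ha' : a' ∈ NB n A) (hne : a ≠ a') :
    Disjoint (WB n A a) (WB n A a') := by
  rw [Finset.disjoint_left]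
  intro x hx hx'
  rcases lt_trichotomy a a' with h | h | h
  · have h1 := WB_mem_has_other hA ha ha' h hx
    obtain ⟨-, h2, -, -⟩ := mem_WB_props hA ha' hx'
    exact h2 h1
  · exact hne h
  · have h1 := WB_mem_has_other hA ha' ha h hx'
    obtain ⟨-, h2, -, -⟩ := mem_WB_props hA ha hx
    exact h2 h1

include hA in
lemma WB_not_subset_cross {a a' : ℕ} {x y : Finset ℕ} (ha : a ∈ NB n A) (ha' : a' ∈ NB n A)
    (hlt : a' < a) (hx : x ∈ WB n A a) (hy : y ∈ WB n A a') : ¬ x ⊆ y := by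
  intro hsub
  obtain ⟨hxI, hax, hagreex, hcardx⟩ := mem_WB_props hA ha hx
  obtain ⟨hyI, hay, hagreey, hcardy⟩ := mem_WB_props hA ha' hy
  obtain ⟨haA, -⟩ := Finset.mem_filter.1 ha
  obtain ⟨ha'A, -⟩ := Finset.mem_filter.1 ha'
  have ha1 : 1 ≤ a' := (Finset.mem_Icc.1 (hA ha'A)).1
  -- y ∩ Icc 1 (a-1) decomposes
  have hset : y ∩ Finset.Icc 1 (a-1)
      = (y ∩ Finset.Icc 1 (a'-1)) ∪ (A ∩ Finset.Ioc a' (a-1)) := by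
    ext e
    simp only [Finset.mem_inter, Finset.mem_Icc, Finset.mem_union, Finset.mem_Ioc]
    constructor
    · rintro ⟨he, he1, he2⟩
      rcases lt_trichotomy e a' with h | rfl | h
      · left; exact ⟨he, he1, by omega⟩
      · exact absurd he hay
      · right; exact ⟨(hagreey e h).1 he, h, he2⟩
    · rintro (⟨he, he1, he2⟩ | ⟨heA, he1, he2⟩)
      · exact ⟨he, he1, by omega⟩
      · refine ⟨(hagreey e he1).2 heA, ?_, he2⟩
        exact (Finset.mem_Icc.1 (hA heA)).1
  have hdisj : Disjoint (y ∩ Finset.Icc 1 (a'-1)) (A ∩ Finset.Ioc a' (a-1)) := by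
    rw [Finset.disjoint_left]
    intro e he1 he2
    simp only [Finset.mem_inter, Finset.mem_Icc, Finset.mem_Ioc] at he1 he2
    omega
  have hcard1 : (y ∩ Finset.Icc 1 (a-1)).card
      = lamF n A a' + (A ∩ Finset.Ioc a' (a-1)).card := by
    rw [hset, Finset.card_union_of_disjoint hdisj, hcardy]
  -- Ioc a' a = Ioc a' (a-1) ∪ {a}
  have hIoc : A ∩ Finset.Ioc a' a = insert a (A ∩ Finset.Ioc a' (a-1)) := by
    ext e
    simp only [Finset.mem_inter, Finset.mem_Ioc, Finset.mem_insert]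
    constructor
    · rintro ⟨he, he1, he2⟩
      rcases eq_or_lt_of_le he2 with h | h
      · left; exact h
      · right; exact ⟨he, he1, by omega⟩
    · rintro (rfl | ⟨he, he1, he2⟩)
      · exact ⟨haA, hlt, le_refl _⟩
      · exact ⟨he, he1, by omega⟩
  have hIoccard : (A ∩ Finset.Ioc a' a).card = (A ∩ Finset.Ioc a' (a-1)).card + 1 := by
    rw [hIoc, Finset.card_insert_of_notMem (by
      simp only [Finset.mem_inter, Finset.mem_Ioc]
      rintro ⟨-, -, h⟩; omega)]
  -- x ∩ Icc 1 (a-1) ⊆ y ∩ Icc 1 (a-1)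
  have hsub2 : x ∩ Finset.Icc 1 (a-1) ⊆ y ∩ Finset.Icc 1 (a-1) :=
    Finset.inter_subset_inter hsub (le_refl _)
  have hle := Finset.card_le_card hsub2
  have hdrop := lam_drop hA ha' ha hlt
  omega

include hA in
lemma Wo_antichain : ∀ x ∈ Wo n A, ∀ y ∈ Wo n A, x ≠ y → ¬ x ⊆ y := by
  intro x hx y hy hne hsub
  obtain ⟨a, ha, hxa⟩ := Finset.mem_biUnion.1 hx
  obtain ⟨a', ha', hya⟩ := Finset.mem_biUnion.1 hy
  rcases lt_trichotomy a a' with h | rfl | h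
  · -- a < a' : a' ∈ x ⊆ y but a' ∉ y
    have h1 := WB_mem_has_other hA ha ha' h hxa
    obtain ⟨-, h2, -, -⟩ := mem_WB_props hA ha' hya
    exact h2 (hsub h1)
  · -- same block
    obtain ⟨haA, -⟩ := Finset.mem_filter.1 ha
    obtain ⟨ha1, han⟩ := Finset.mem_Icc.1 (hA haA)
    obtain ⟨hxI, hax, hagreex, hcardx⟩ := mem_WB_props hA ha hxa
    obtain ⟨hyI, hay, hagreey, hcardy⟩ := mem_WB_props hA ha hya
    have hEsub : x ∩ Finset.Icc 1 (a-1) ⊆ y ∩ Finset.Icc 1 (a-1) :=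
      Finset.inter_subset_inter hsub (le_refl _)
    have hEeq : x ∩ Finset.Icc 1 (a-1) = y ∩ Finset.Icc 1 (a-1) :=
      Finset.eq_of_subset_of_card_le hEsub (by omega)
    have := blk_decomp (A := A) hxI hax hagreex
    rw [this, blk_decomp (A := A) hyI hay hagreey, hEeq] at hne
    exact hne rfl
  · exact WB_not_subset_cross hA ha ha' h hxa hya hsub

include hA in
lemma Wo_subset_seg : Wo n A ⊆ binSegLT n A := by
  intro x hx
  obtain ⟨a, ha, hxa⟩ := Finset.mem_biUnion.1 hx
  obtain ⟨hxI, hax, hagree, -⟩ := mem_WB_props hA ha hxa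
  obtain ⟨haA, -⟩ := Finset.mem_filter.1 ha
  refine Finset.mem_filter.2 ⟨Finset.mem_powerset.2 hxI, ⟨a, haA, hax, ?_⟩⟩
  intro j hj
  exact hagree j hj

include hA in
lemma A_vs_WB (hsp : SpecialPoint n A) {a : ℕ} {x : Finset ℕ} (ha : a ∈ NB n A)
    (hx : x ∈ WB n A a) : ¬ x ⊆ A ∧ ¬ A ⊆ x ∧ x ≠ A := by
  obtain ⟨hxI, hax, hagree, hcardx⟩ := mem_WB_props hA ha hx
  obtain ⟨haA, -⟩ := Finset.mem_filter.1 ha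
  have h2 : ¬ A ⊆ x := fun h => hax (h haA)
  refine ⟨?_, h2, fun h => h2 (le_of_eq h.symm)⟩
  intro hsub
  have hsub2 : x ∩ Finset.Icc 1 (a-1) ⊆ A ∩ Finset.Icc 1 (a-1) :=
    Finset.inter_subset_inter hsub (le_refl _)
  have hle := Finset.card_le_card hsub2
  have := lam_special hA hsp ha
  omega

include hA in
lemma A_notmem_Wo : A ∉ Wo n A := by
  intro hmem
  obtain ⟨a, ha, hxa⟩ := Finset.mem_biUnion.1 hmem
  obtain ⟨-, hax, -, -⟩ := mem_WB_props hA ha hxa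
  obtain ⟨haA, -⟩ := Finset.mem_filter.1 ha
  exact hax haA

include hA in
lemma SBlk_disj {a a' : ℕ} (ha : a ∈ A) (ha' : a' ∈ A) (hne : a ≠ a') :
    Disjoint (SBlk n A a) (SBlk n A a') := by
  rw [Finset.disjoint_left]
  intro m hm hm'
  obtain ⟨-, -, ham, hagree⟩ := mem_SBlk_iff.1 hm
  obtain ⟨-, -, ham', hagree'⟩ := mem_SBlk_iff.1 hm'
  rcases lt_trichotomy a a' with h | h | h
  · exact ham' ((hagree a' h).2 ha')
  · exact hne h
  · exact ham ((hagree' a h).2 ha)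

include hA in
lemma SpecO_eq : (binSegLT n A).filter (SpecialPoint n) = (NB n A).biUnion (SBlk n A) := by
  ext m
  simp only [Finset.mem_filter, binSegLT, Finset.mem_powerset, Finset.mem_biUnion]
  constructor
  · rintro ⟨⟨hmI, k, hkA, hkm, hagree⟩, hmsp⟩
    have hmblk : m ∈ SBlk n A k := mem_SBlk_iff.2 ⟨hmI, hmsp, hkm, fun j hj => hagree j hj⟩
    exact ⟨k, Finset.mem_filter.2 ⟨hkA, ⟨m, hmblk⟩⟩, hmblk⟩
  · rintro ⟨a, ha, hm⟩
    obtain ⟨haA, -⟩ := Finset.mem_filter.1 ha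
    obtain ⟨hmI, hmsp, ham, hagree⟩ := mem_SBlk_iff.1 hm
    exact ⟨⟨hmI, a, haA, ham, fun j hj => hagree j hj⟩, hmsp⟩

include hA in
lemma Wo_card : (Wo n A).card = ((binSegLT n A).filter (SpecialPoint n)).card := by
  rw [SpecO_eq hA, Wo]
  have h1 : ((NB n A).biUnion (WB n A)).card = ∑ a ∈ NB n A, (WB n A a).card :=
    Finset.card_biUnion (fun a ha a' ha' hne => WB_disj hA ha ha' hne)
  have h2 : ((NB n A).biUnion (SBlk n A)).card = ∑ a ∈ NB n A, (SBlk n A a).card :=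
    Finset.card_biUnion (fun a ha a' ha' hne =>
      SBlk_disj hA (Finset.mem_filter.1 ha).1 (Finset.mem_filter.1 ha').1 hne)
  rw [h1, h2]
  exact Finset.sum_congr rfl (fun a ha => WB_card hA ha)
end

section
variable {n : ℕ} {A : Finset ℕ} (hA : A ⊆ Finset.Icc 1 n)

lemma mem_seg_iff {B : Finset ℕ} : B ∈ binSegLT n A ↔ B ⊆ Finset.Icc 1 n ∧ binLT B A := by
  simp [binSegLT, Finset.mem_powerset]

lemma mu_special (B : Finset ℕ) : SpecialPoint n (mu B) :=
  specialPoint_iff_hW.2 (fun t _ => mu_nonneg B t)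

lemma mu_binLT {B : Finset ℕ} (h : binLT B A) : binLT (mu B) A := by
  rcases eq_or_ne (mu B) B with he | hne
  · rwa [he]
  · exact binLT_trans (ssubset_binLT (Finset.ssubset_iff_subset_ne.2 ⟨mu_subset B, hne⟩)) h

include hA in
lemma anti_le_specO {G : Finset (Finset ℕ)} (hG : G ⊆ binSegLT n A)
    (hanti : ∀ x ∈ G, ∀ y ∈ G, x ≠ y → ¬ x ⊆ y) :
    G.card ≤ ((binSegLT n A).filter (SpecialPoint n)).card := by
  apply Finset.card_le_card_of_injOn mu
  · intro B hB
    obtain ⟨hBI, hBlt⟩ := mem_seg_iff.1 (hG hB)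
    refine Finset.mem_filter.2 ⟨mem_seg_iff.2 ⟨le_trans (mu_subset B) hBI, mu_binLT hBlt⟩,
      mu_special B⟩
  · intro B1 hB1 B2 hB2 heq
    by_contra hne
    have hI1 := (mem_seg_iff.1 (hG hB1)).1
    have hI2 := (mem_seg_iff.1 (hG hB2)).1
    rcases mu_eq_comparable hI1 hI2 heq with h | h
    · exact hanti B1 hB1 B2 hB2 hne h
    · exact hanti B2 hB2 B1 hB1 (fun hc => hne hc.symm) h

include hA in
lemma anti_le_specC {G : Finset (Finset ℕ)} (hG : G ⊆ binSegLT n A ∪ {A})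
    (hanti : ∀ x ∈ G, ∀ y ∈ G, x ≠ y → ¬ x ⊆ y) :
    G.card ≤ ((binSegLT n A ∪ {A}).filter (SpecialPoint n)).card := by
  have hIcc : ∀ B ∈ G, B ⊆ Finset.Icc 1 n := by
    intro B hB
    rcases Finset.mem_union.1 (hG hB) with h | h
    · exact (mem_seg_iff.1 h).1
    · rw [Finset.mem_singleton.1 h]; exact hA
  apply Finset.card_le_card_of_injOn mu
  · intro B hB
    refine Finset.mem_filter.2 ⟨?_, mu_special B⟩
    rcases Finset.mem_union.1 (hG hB) with h | h
    · exact Finset.mem_union_left _ (mem_seg_iff.2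
        ⟨le_trans (mu_subset B) (hIcc B hB), mu_binLT (mem_seg_iff.1 h).2⟩)
    · rw [Finset.mem_singleton.1 h]
      rcases eq_or_ne (mu A) A with he | hne
      · exact Finset.mem_union_right _ (Finset.mem_singleton.2 he)
      · refine Finset.mem_union_left _ (mem_seg_iff.2 ⟨le_trans (mu_subset A) hA, ?_⟩)
        exact ssubset_binLT (Finset.ssubset_iff_subset_ne.2 ⟨mu_subset A, hne⟩)
  · intro B1 hB1 B2 hB2 heq
    by_contra hne
    rcases mu_eq_comparable (hIcc B1 hB1) (hIcc B2 hB2) heq with h | h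
    · exact hanti B1 hB1 B2 hB2 hne h
    · exact hanti B2 hB2 B1 hB1 (fun hc => hne hc.symm) h

lemma width_le_of {F : Finset (Finset ℕ)} {c : ℕ}
    (h : ∀ G : Finset (Finset ℕ), G ⊆ F → (∀ x ∈ G, ∀ y ∈ G, x ≠ y → ¬ x ⊆ y) → G.card ≤ c) :
    width F ≤ c := by
  apply Finset.sup_le
  intro G hG
  obtain ⟨hG1, hG2⟩ := Finset.mem_filter.1 hG
  exact h G (Finset.mem_powerset.1 hG1) hG2

lemma width_ge_of {F W : Finset (Finset ℕ)} (hW : W ⊆ F)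
    (hanti : ∀ x ∈ W, ∀ y ∈ W, x ≠ y → ¬ x ⊆ y) : W.card ≤ width F :=
  Finset.le_sup (Finset.mem_filter.2 ⟨Finset.mem_powerset.2 hW, hanti⟩)

include hA in
lemma width_oseg : width (binSegLT n A) = ((binSegLT n A).filter (SpecialPoint n)).card := by
  apply le_antisymm
  · exact width_le_of (fun G hG hanti => anti_le_specO hA hG hanti)
  · rw [← Wo_card hA]
    exact width_ge_of (Wo_subset_seg hA) (Wo_antichain hA)

include hA in
lemma A_notmem_seg : A ∉ binSegLT n A := by
  intro h
  exact binLT_irrefl A (mem_seg_iff.1 h).2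

include hA in
lemma specC_eq_pos (hsp : SpecialPoint n A) :
    ((binSegLT n A ∪ {A}).filter (SpecialPoint n))
      = insert A ((binSegLT n A).filter (SpecialPoint n)) := by
  ext m
  simp only [Finset.mem_filter, Finset.mem_union, Finset.mem_singleton, Finset.mem_insert]
  constructor
  · rintro ⟨h1 | h2, hm⟩
    · right; exact ⟨h1, hm⟩
    · left; exact h2
  · rintro (rfl | ⟨h1, h2⟩)
    · exact ⟨Or.inr rfl, hsp⟩
    · exact ⟨Or.inl h1, h2⟩

include hA in
lemma specC_eq_neg (hsp : ¬ SpecialPoint n A) :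
    ((binSegLT n A ∪ {A}).filter (SpecialPoint n))
      = (binSegLT n A).filter (SpecialPoint n) := by
  ext m
  simp only [Finset.mem_filter, Finset.mem_union, Finset.mem_singleton]
  constructor
  · rintro ⟨h1 | h2, hm⟩
    · exact ⟨h1, hm⟩
    · subst h2; exact absurd hm hsp
  · rintro ⟨h1, h2⟩
    exact ⟨Or.inl h1, h2⟩

include hA in
lemma width_cseg_pos (hsp : SpecialPoint n A) :
    width (binSegLT n A ∪ {A}) = ((binSegLT n A).filter (SpecialPoint n)).card + 1 := by
  have hAn : A ∉ (binSegLT n A).filter (SpecialPoint n) := by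
    intro h
    exact A_notmem_seg hA (Finset.mem_filter.1 h).1
  have hcard : ((binSegLT n A ∪ {A}).filter (SpecialPoint n)).card
      = ((binSegLT n A).filter (SpecialPoint n)).card + 1 := by
    rw [specC_eq_pos hA hsp, Finset.card_insert_of_notMem hAn]
  apply le_antisymm
  · rw [← hcard]
    exact width_le_of (fun G hG hanti => anti_le_specC hA hG hanti)
  · -- witness : insert A (Wo n A)
    have hsubW : insert A (Wo n A) ⊆ binSegLT n A ∪ {A} := by
      intro x hx
      rcases Finset.mem_insert.1 hx with rfl | hx2
      · exact Finset.mem_union_right _ (Finset.mem_singleton.2 rfl)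
      · exact Finset.mem_union_left _ (Wo_subset_seg hA hx2)
    have hanti : ∀ x ∈ insert A (Wo n A), ∀ y ∈ insert A (Wo n A), x ≠ y → ¬ x ⊆ y := by
      intro x hx y hy hne
      rcases Finset.mem_insert.1 hx with rfl | hx2
      · rcases Finset.mem_insert.1 hy with rfl | hy2
        · exact absurd rfl hne
        · obtain ⟨a, ha, hya⟩ := Finset.mem_biUnion.1 hy2
          exact fun hsub => (A_vs_WB hA hsp ha hya).2.1 hsub
      · rcases Finset.mem_insert.1 hy with rfl | hy2
        · obtain ⟨a, ha, hxa⟩ := Finset.mem_biUnion.1 hx2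
          exact fun hsub => (A_vs_WB hA hsp ha hxa).1 hsub
        · exact Wo_antichain hA x hx2 y hy2 hne
    have hc : (insert A (Wo n A)).card = ((binSegLT n A).filter (SpecialPoint n)).card + 1 := by
      rw [Finset.card_insert_of_notMem (A_notmem_Wo hA), Wo_card hA]
    rw [← hc]
    exact width_ge_of hsubW hanti

include hA in
lemma width_cseg_neg (hsp : ¬ SpecialPoint n A) :
    width (binSegLT n A ∪ {A}) = ((binSegLT n A).filter (SpecialPoint n)).card := by
  apply le_antisymm
  · have := specC_eq_neg hA hsp
    rw [← this]
    exact width_le_of (fun G hG hanti => anti_le_specC hA hG hanti)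
  · rw [← Wo_card hA]
    exact width_ge_of (fun x hx => Finset.mem_union_left _ (Wo_subset_seg hA hx))
      (Wo_antichain hA)

end

/-- Adding `A` to the binary initial segment `[∅, A)` increases the width
exactly when `A` is a special point. -/
theorem width_increase_iff_special (n : ℕ) (A : Finset ℕ) (hA : A ⊆ Finset.Icc 1 n) :
    width (binSegLT n A ∪ {A}) = width (binSegLT n A) + 1 ↔ SpecialPoint n A := by
  by_cases hsp : SpecialPoint n A
  · simp only [hsp, iff_true]
    rw [width_cseg_pos hA hsp, width_oseg hA]
  · simp only [hsp, iff_false]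
    rw [width_cseg_neg hA hsp, width_oseg hA]
    omega
end

section
/- For every binary downset D of B(n), we have w(D)·2^n ≥ |D|·C(n, ⌊n/2⌋); that is, w(D)/|D| ≥ C(n, ⌊n/2⌋)/2^n, so among binary downsets the ratio of width to size is minimized by the whole Boolean lattice B(n). -/
open scoped Classical

open Finset

/-- every nonempty binary downset contains the empty set -/
lemma empty_mem_of_downset (n : ℕ) (D : Finset (Finset ℕ))
    (hinit : ∀ A ∈ D, ∀ B ⊆ Finset.Icc 1 n, binLT B A → B ∈ D)
    (hne : D.Nonempty) : ∅ ∈ D := by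
  obtain ⟨A, hA⟩ := hne
  rcases eq_or_ne A ∅ with rfl | hAne
  · exact hA
  · have hAne' : A.Nonempty := Finset.nonempty_iff_ne_empty.2 hAne
    refine hinit A hA ∅ (Finset.empty_subset _) ?_
    refine ⟨A.max' hAne', A.max'_mem hAne', Finset.notMem_empty _, fun j hj => ?_⟩
    exact iff_of_false (Finset.notMem_empty j)
      (fun hjA => absurd (A.le_max' j hjA) (not_le.2 hj))

lemma card_le_pow (n : ℕ) (D : Finset (Finset ℕ))
    (hD : ∀ A ∈ D, A ⊆ Finset.Icc 1 n) : D.card ≤ 2 ^ n := by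
  have h : D ⊆ (Finset.Icc 1 n).powerset := fun A hA => Finset.mem_powerset.2 (hD A hA)
  calc D.card ≤ (Finset.Icc 1 n).powerset.card := Finset.card_le_card h
    _ = 2 ^ n := by simp

lemma zero_case (n : ℕ) (D : Finset (Finset ℕ))
    (hD : ∀ A ∈ D, A ⊆ Finset.Icc 1 n)
    (hinit : ∀ A ∈ D, ∀ B ⊆ Finset.Icc 1 n, binLT B A → B ∈ D) :
    ∃ A : Finset (Finset ℕ), A ⊆ D ∧ (∀ x ∈ A, ∀ y ∈ A, x ≠ y → ¬ x ⊆ y) ∧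
      (∀ X ∈ A, X.card ≤ 0) ∧ Nat.choose n 0 * D.card ≤ 2 ^ n * A.card := by
  rcases D.eq_empty_or_nonempty with rfl | hne
  · exact ⟨∅, Finset.empty_subset _, by simp, by simp, by simp⟩
  · refine ⟨{∅}, ?_, ?_, ?_, ?_⟩
    · simpa using empty_mem_of_downset n D hinit hne
    · intro x hx y hy hxy
      simp only [Finset.mem_singleton] at hx hy
      exact absurd (hx.trans hy.symm) hxy
    · intro X hX; simp only [Finset.mem_singleton] at hX; simp [hX]
    · simpa using card_le_pow n D hD

lemma key (n : ℕ) : ∀ t, ∀ D : Finset (Finset ℕ), 2 * t ≤ n →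
    (∀ A ∈ D, A ⊆ Finset.Icc 1 n) →
    (∀ A ∈ D, ∀ B ⊆ Finset.Icc 1 n, binLT B A → B ∈ D) →
    ∃ A : Finset (Finset ℕ), A ⊆ D ∧ (∀ x ∈ A, ∀ y ∈ A, x ≠ y → ¬ x ⊆ y) ∧
      (∀ X ∈ A, X.card ≤ t) ∧ Nat.choose n t * D.card ≤ 2 ^ n * A.card := by
  induction n with
  | zero =>
    intro t D ht hD hinit
    have : t = 0 := by omega
    subst this
    exact zero_case 0 D hD hinit
  | succ n IH =>
    intro t D ht hD hinit
    rcases Nat.eq_zero_or_pos t with rfl | htpos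
    · exact zero_case (n+1) D hD hinit
    obtain ⟨s, rfl⟩ := Nat.exists_eq_succ_of_ne_zero (Nat.pos_iff_ne_zero.mp htpos)
    have hIccSub : Finset.Icc 1 n ⊆ Finset.Icc 1 (n+1) :=
      Finset.Icc_subset_Icc le_rfl (Nat.le_succ n)
    have hnot_top : ∀ B : Finset ℕ, B ⊆ Finset.Icc 1 n → (n+1) ∉ B := by
      intro B hB hmem
      have := hB hmem
      simp [Finset.mem_Icc] at this
    by_cases hB : ∃ A ∈ D, n+1 ∈ A
    · -- Case B : D contains the full B(n) plus a lifted downset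
      obtain ⟨A₀, hA₀D, hA₀n⟩ := hB
      have claim1 : ∀ B : Finset ℕ, B ⊆ Finset.Icc 1 n → B ∈ D := by
        intro B hBsub
        refine hinit A₀ hA₀D B (hBsub.trans hIccSub) ⟨n+1, hA₀n, hnot_top B hBsub, ?_⟩
        intro j hj
        constructor
        · intro hjB
          have := hBsub hjB; simp [Finset.mem_Icc] at this; omega
        · intro hjA
          have := hD A₀ hA₀D hjA; simp [Finset.mem_Icc] at this; omega
      set D1 : Finset (Finset ℕ) := D.filter (fun A => n+1 ∈ A) with hD1def
      set D0 : Finset (Finset ℕ) := D.filter (fun A => ¬ n+1 ∈ A) with hD0def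
      -- D0 is the full powerset of Icc 1 n
      have hD0 : D0 = (Finset.Icc 1 n).powerset := by
        ext A
        simp only [hD0def, Finset.mem_filter, Finset.mem_powerset]
        constructor
        · rintro ⟨hAD, hAn⟩
          intro x hx
          have h1 := hD A hAD hx
          simp only [Finset.mem_Icc] at h1 ⊢
          have : x ≠ n+1 := fun h => hAn (h ▸ hx)
          omega
        · intro hsub
          exact ⟨claim1 A hsub, hnot_top A hsub⟩
      have hcardD : D.card = D1.card + 2 ^ n := by
        have hsplit : D1.card + D0.card = D.card := by
          rw [hD1def, hD0def]
          exact Finset.card_filter_add_card_filter_not _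
        have h0 : D0.card = 2 ^ n := by rw [hD0]; simp
        omega
      -- the compressed downset D'
      set D' : Finset (Finset ℕ) := D1.image (fun A => A.erase (n+1)) with hD'def
      have hD1mem : ∀ A ∈ D1, A ∈ D ∧ n+1 ∈ A := by
        intro A hA; simpa [hD1def, Finset.mem_filter] using hA
      have hD'card : D'.card = D1.card := by
        apply Finset.card_image_of_injOn
        intro A hA B hB hAB
        simp only [Finset.mem_coe] at hA hB
        have hAB' : A.erase (n+1) = B.erase (n+1) := hAB
        have hA' := (hD1mem A hA).2
        have hB' := (hD1mem B hB).2
        rw [← Finset.insert_erase hA', ← Finset.insert_erase hB', hAB']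
      have hD'sub : ∀ A ∈ D', A ⊆ Finset.Icc 1 n := by
        intro A hA
        obtain ⟨C, hC, rfl⟩ := Finset.mem_image.1 hA
        obtain ⟨hCD, _⟩ := hD1mem C hC
        intro x hx
        have hxC := Finset.mem_of_mem_erase hx
        have hxne := Finset.ne_of_mem_erase hx
        have := hD C hCD hxC
        simp only [Finset.mem_Icc] at this ⊢
        omega
      have hD'init : ∀ A ∈ D', ∀ B ⊆ Finset.Icc 1 n, binLT B A → B ∈ D' := by
        intro A hA B hBsub hlt
        obtain ⟨C, hC, rfl⟩ := Finset.mem_image.1 hA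
        obtain ⟨hCD, hCn⟩ := hD1mem C hC
        obtain ⟨k, hkA, hkB, hk⟩ := hlt
        have hkC : k ∈ C := Finset.mem_of_mem_erase hkA
        have hkne : k ≠ n+1 := Finset.ne_of_mem_erase hkA
        have hBn : n+1 ∉ B := hnot_top B hBsub
        have hins : insert (n+1) B ∈ D := by
          refine hinit C hCD (insert (n+1) B) ?_ ⟨k, hkC, ?_, ?_⟩
          · intro x hx
            rcases Finset.mem_insert.1 hx with rfl | hxB
            · simp [Finset.mem_Icc]
            · exact hIccSub (hBsub hxB)
          · simp only [Finset.mem_insert]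
            push_neg
            exact ⟨hkne, hkB⟩
          · intro j hj
            rcases eq_or_ne j (n+1) with rfl | hjne
            · simp [hCn]
            · simp only [Finset.mem_insert, hjne, false_or]
              rw [hk j hj]
              constructor
              · exact fun h => Finset.mem_of_mem_erase h
              · intro h; exact Finset.mem_erase.2 ⟨hjne, h⟩
        refine Finset.mem_image.2 ⟨insert (n+1) B, ?_, ?_⟩
        · simp only [hD1def, Finset.mem_filter]
          exact ⟨hins, Finset.mem_insert_self _ _⟩
        · exact Finset.erase_insert hBn
      -- apply IH
      obtain ⟨A', hA'D', hA'anti, hA'size, hA'count⟩ := IH s D' (by omega) hD'sub hD'init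
      have hA'notn : ∀ X ∈ A', n+1 ∉ X := fun X hX => hnot_top X (hD'sub X (hA'D' hX))
      -- construct the antichain
      set L : Finset (Finset ℕ) := Finset.powersetCard (s+1) (Finset.Icc 1 n) with hLdef
      have hLmem : ∀ S ∈ L, S ⊆ Finset.Icc 1 n ∧ S.card = s + 1 := by
        intro S hS; simpa [hLdef, Finset.mem_powersetCard] using hS
      set lift : Finset (Finset ℕ) := A'.image (insert (n+1)) with hliftdef
      have hliftmem : ∀ X ∈ lift, ∃ B ∈ A', X = insert (n+1) B := by
        intro X hX
        obtain ⟨B, hB, rfl⟩ := Finset.mem_image.1 hX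
        exact ⟨B, hB, rfl⟩
      have hliftcard : lift.card = A'.card := by
        apply Finset.card_image_of_injOn
        intro X hX Y hY hXY
        have := hA'notn X hX
        have := hA'notn Y hY
        rw [← Finset.erase_insert (hA'notn X hX), ← Finset.erase_insert (hA'notn Y hY), hXY]
      refine ⟨L ∪ lift, ?_, ?_, ?_, ?_⟩
      · -- subset of D
        intro X hX
        rcases Finset.mem_union.1 hX with hX | hX
        · exact claim1 X (hLmem X hX).1
        · obtain ⟨B, hB, rfl⟩ := hliftmem X hX
          obtain ⟨C, hC, hCe⟩ := Finset.mem_image.1 (hA'D' hB)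
          obtain ⟨hCD, hCn⟩ := hD1mem C hC
          have : insert (n+1) B = C := by rw [← hCe, Finset.insert_erase hCn]
          rw [this]; exact hCD
      · -- antichain
        intro x hx y hy hxy hsubxy
        rcases Finset.mem_union.1 hx with hx | hx <;> rcases Finset.mem_union.1 hy with hy | hy
        · -- both in L
          have h1 := (hLmem x hx).2
          have h2 := (hLmem y hy).2
          exact hxy (Finset.eq_of_subset_of_card_le hsubxy (by omega))
        · -- x in L, y lifted
          obtain ⟨B, hB, rfl⟩ := hliftmem y hy
          have hxB : x ⊆ B := by
            intro a ha
            have han : a ≠ n+1 := fun h => hnot_top x (hLmem x hx).1 (h ▸ ha)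
            rcases Finset.mem_insert.1 (hsubxy ha) with h | h
            · exact absurd h han
            · exact h
          have := Finset.card_le_card hxB
          have := hA'size B hB
          have := (hLmem x hx).2
          omega
        · -- x lifted, y in L
          obtain ⟨B, hB, rfl⟩ := hliftmem x hx
          exact hnot_top y (hLmem y hy).1 (hsubxy (Finset.mem_insert_self _ _))
        · -- both lifted
          obtain ⟨B1, hB1, rfl⟩ := hliftmem x hx
          obtain ⟨B2, hB2, rfl⟩ := hliftmem y hy
          have hne : B1 ≠ B2 := fun h => hxy (by rw [h])
          have hsub : B1 ⊆ B2 := by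
            intro a ha
            have han : a ≠ n+1 := fun h => hA'notn B1 hB1 (h ▸ ha)
            rcases Finset.mem_insert.1 (hsubxy (Finset.mem_insert_of_mem ha)) with h | h
            · exact absurd h han
            · exact h
          exact hA'anti B1 hB1 B2 hB2 hne hsub
      · -- sizes
        intro X hX
        rcases Finset.mem_union.1 hX with hX | hX
        · exact (hLmem X hX).2.le
        · obtain ⟨B, hB, rfl⟩ := hliftmem X hX
          have := Finset.card_insert_le (n+1) B
          have := hA'size B hB
          omega
      · -- the count
        have hdisj : Disjoint L lift := by
          rw [Finset.disjoint_left]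
          intro X hXL hXlift
          obtain ⟨B, hB, rfl⟩ := hliftmem X hXlift
          exact hnot_top _ (hLmem _ hXL).1 (Finset.mem_insert_self _ _)
        have hcardU : (L ∪ lift).card = n.choose (s+1) + A'.card := by
          rw [Finset.card_union_of_disjoint hdisj, hliftcard, hLdef]
          simp
        have hd'le : D'.card ≤ 2 ^ n := by
          have h : D' ⊆ (Finset.Icc 1 n).powerset := fun A hA => Finset.mem_powerset.2 (hD'sub A hA)
          calc D'.card ≤ (Finset.Icc 1 n).powerset.card := Finset.card_le_card h
            _ = 2 ^ n := by simp
        have hmono : n.choose s ≤ n.choose (s+1) := by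
          by_cases hcase : 2 * (s+1) ≤ n
          · exact Nat.choose_le_succ_of_lt_half_left (by omega)
          · have hn : n = 2 * s + 1 := by omega
            have h1 : n - (s+1) = s := by omega
            have := Nat.choose_symm (n := n) (k := s+1) (by omega)
            rw [h1] at this
            omega
        have hps : (n+1).choose (s+1) = n.choose s + n.choose (s+1) := Nat.choose_succ_succ n s
        rw [hcardU, hcardD, ← hD'card, hps]
        have hkey : n.choose s * 2 ^ n + n.choose (s+1) * D'.card ≤
            n.choose s * D'.card + n.choose (s+1) * 2 ^ n :=
          mul_add_mul_le_mul_add_mul hmono hd'le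
        have hA'count2 : n.choose s * D'.card ≤ 2 ^ n * A'.card := hA'count
        rw [pow_succ]
        nlinarith [hA'count2, hkey]

    · -- Case A : D ⊆ B(n)
      push_neg at hB
      have hD' : ∀ A ∈ D, A ⊆ Finset.Icc 1 n := by
        intro A hA x hx
        have h1 := hD A hA hx
        have h2 : x ≠ n+1 := fun h => hB A hA (h ▸ hx)
        simp [Finset.mem_Icc] at h1 ⊢
        omega
      have hinit' : ∀ A ∈ D, ∀ B ⊆ Finset.Icc 1 n, binLT B A → B ∈ D := by
        intro A hA B hBsub hlt
        exact hinit A hA B (hBsub.trans hIccSub) hlt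
      by_cases h2t : 2 * (s+1) ≤ n
      · obtain ⟨A, hAD, hanti, hsize, hcount⟩ := IH (s+1) D h2t hD' hinit'
        refine ⟨A, hAD, hanti, hsize, ?_⟩
        have hmono : n.choose s ≤ n.choose (s+1) := by
          apply Nat.choose_le_succ_of_lt_half_left
          omega
        have hps : (n+1).choose (s+1) = n.choose s + n.choose (s+1) := Nat.choose_succ_succ n s
        calc (n+1).choose (s+1) * D.card = (n.choose s + n.choose (s+1)) * D.card := by rw [hps]
          _ ≤ (n.choose (s+1) + n.choose (s+1)) * D.card := by
              exact Nat.mul_le_mul_right _ (by omega)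
          _ = 2 * (n.choose (s+1) * D.card) := by ring
          _ ≤ 2 * (2 ^ n * A.card) := Nat.mul_le_mul_left _ hcount
          _ = 2 ^ (n+1) * A.card := by ring
      · -- n = 2s+1
        have hn : n = 2 * s + 1 := by omega
        obtain ⟨A, hAD, hanti, hsize, hcount⟩ := IH s D (by omega) hD' hinit'
        refine ⟨A, hAD, hanti, fun X hX => (hsize X hX).trans (Nat.le_succ s), ?_⟩
        have hsymm : n.choose (s+1) = n.choose s := by
          have h1 : n - (s+1) = s := by omega
          have := Nat.choose_symm (n := n) (k := s+1) (by omega)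
          rw [h1] at this
          exact this.symm
        have hps : (n+1).choose (s+1) = n.choose s + n.choose (s+1) := Nat.choose_succ_succ n s
        calc (n+1).choose (s+1) * D.card = 2 * (n.choose s * D.card) := by
              rw [hps, hsymm]; ring
          _ ≤ 2 * (2 ^ n * A.card) := Nat.mul_le_mul_left _ hcount
          _ = 2 ^ (n+1) * A.card := by ring

/-- For every binary downset `D` of `B(n)` (an initial segment of the binary order),
`w(D)/|D| ≥ C(n, ⌊n/2⌋)/2^n`. -/
theorem width_ratio_binary_downset (n : ℕ) (D : Finset (Finset ℕ))
    (hD : ∀ A ∈ D, A ⊆ Finset.Icc 1 n)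
    (hinit : ∀ A ∈ D, ∀ B ⊆ Finset.Icc 1 n, binLT B A → B ∈ D) :
    D.card * Nat.choose n (n / 2) ≤ width D * 2 ^ n := by
  obtain ⟨A, hAD, hanti, -, hcount⟩ := key n (n / 2) D (by omega) hD hinit
  have hw : A.card ≤ width D := by
    apply Finset.le_sup (f := Finset.card)
    simp only [Finset.mem_filter, Finset.mem_powerset]
    exact ⟨hAD, hanti⟩
  calc D.card * Nat.choose n (n / 2) = Nat.choose n (n / 2) * D.card := mul_comm _ _
    _ ≤ 2 ^ n * A.card := hcount
    _ ≤ 2 ^ n * width D := Nat.mul_le_mul_left _ hw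
    _ = width D * 2 ^ n := mul_comm _ _
end

section
/- Let D be a downset in B(n) and let 𝐂 be an SD-partition of D. For each i with 1 ≤ i ≤ n, the set M_i of pairs {X, Y} with X ∈ D of size i−1, Y ∈ D of size i, X ⊂ Y, and X, Y belonging to the same chain of 𝐂, is a maximum matching in the bipartite containment graph G_i on parts D ∩ L_{i−1} and D ∩ L_i. -/
open scoped Classical

/-- A skipless chain: totally ordered by inclusion, cardinalities forming an
interval of integers. -/
def IsSkiplessChain (C : Finset (Finset ℕ)) : Prop :=
  (∀ X ∈ C, ∀ Y ∈ C, X ⊆ Y ∨ Y ⊆ X) ∧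
  (∀ X ∈ C, ∀ Y ∈ C, ∀ m, X.card ≤ m → m ≤ Y.card → ∃ Z ∈ C, Z.card = m)

/-- An SD-partition of `D`: a partition of `D` into exactly `w(D)` skipless chains. -/
def IsSDPartition (D : Finset (Finset ℕ)) (P : Finset (Finset (Finset ℕ))) : Prop :=
  P.card = width D ∧
  (∀ c ∈ P, c.Nonempty ∧ IsSkiplessChain c) ∧
  (∀ c ∈ P, ∀ c' ∈ P, c ≠ c' → Disjoint c c') ∧
  P.biUnion id = D

/-- A matching in the bipartite containment graph `G_i` on the parts
`D ∩ L_{i-1}` and `D ∩ L_i`: a set of edges `(X, Y)` with `X, Y ∈ D`,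
`|X| = i - 1`, `|Y| = i`, `X ⊂ Y`, no two edges sharing an endpoint. -/
def IsMatching (D : Finset (Finset ℕ)) (i : ℕ) (M : Finset (Finset ℕ × Finset ℕ)) : Prop :=
  (∀ e ∈ M, e.1 ∈ D ∧ e.2 ∈ D ∧ e.1.card + 1 = i ∧ e.2.card = i ∧ e.1 ⊂ e.2) ∧
  (∀ e ∈ M, ∀ f ∈ M, e ≠ f → e.1 ≠ f.1 ∧ e.2 ≠ f.2)

/-- The width of a family is attained by some antichain contained in it. -/
lemma exists_max_antichain (D : Finset (Finset ℕ)) :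
    ∃ A, A ⊆ D ∧ (∀ x ∈ A, ∀ y ∈ A, x ≠ y → ¬ x ⊆ y) ∧ A.card = width D := by
  have hne : (D.powerset.filter (fun A => ∀ x ∈ A, ∀ y ∈ A, x ≠ y → ¬ x ⊆ y)).Nonempty := by
    refine ⟨∅, ?_⟩
    simp
  obtain ⟨A, hA, hc⟩ := Finset.exists_mem_eq_sup _ hne Finset.card
  rw [Finset.mem_filter, Finset.mem_powerset] at hA
  exact ⟨A, hA.1, hA.2, by rw [width, hc]⟩

/-- For a downset `D` with an SD-partition `CC`, the pairs of consecutive-level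
members of a common chain form a maximum matching in each bipartite containment
graph `G_i` between levels `i-1` and `i` of `D`. -/
theorem sd_partition_gives_max_matchings (n : ℕ) (D : Finset (Finset ℕ))
    (hD : ∀ A ∈ D, A ⊆ Finset.Icc 1 n)
    (hdown : ∀ A ∈ D, ∀ B ⊆ A, B ∈ D)
    (CC : Finset (Finset (Finset ℕ))) (hCC : IsSDPartition D CC)
    (i : ℕ) (hi : i ∈ Finset.Icc 1 n) :
    IsMatching D i
      ((D ×ˢ D).filter (fun e =>
        e.1.card + 1 = i ∧ e.2.card = i ∧ e.1 ⊂ e.2 ∧ ∃ c ∈ CC, e.1 ∈ c ∧ e.2 ∈ c)) ∧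
    ∀ M : Finset (Finset ℕ × Finset ℕ), IsMatching D i M →
      M.card ≤ ((D ×ˢ D).filter (fun e =>
        e.1.card + 1 = i ∧ e.2.card = i ∧ e.1 ⊂ e.2 ∧ ∃ c ∈ CC, e.1 ∈ c ∧ e.2 ∈ c)).card := by
  classical
  obtain ⟨hPcard, hchains, hdisj, hunion⟩ := hCC
  rw [Finset.mem_Icc] at hi
  obtain ⟨hi1, -⟩ := hi
  set Mc := (D ×ˢ D).filter (fun e =>
        e.1.card + 1 = i ∧ e.2.card = i ∧ e.1 ⊂ e.2 ∧ ∃ c ∈ CC, e.1 ∈ c ∧ e.2 ∈ c) with hMcDef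
  -- basic facts about the chains
  have hsub : ∀ c ∈ CC, c ⊆ D := by
    intro c hc Z hZ
    rw [← hunion]
    exact Finset.mem_biUnion.mpr ⟨c, hc, hZ⟩
  have htot : ∀ c ∈ CC, ∀ X ∈ c, ∀ Y ∈ c, X ⊆ Y ∨ Y ⊆ X :=
    fun c hc => ((hchains c hc).2).1
  have hskip : ∀ c ∈ CC, ∀ X ∈ c, ∀ Y ∈ c, ∀ m, X.card ≤ m → m ≤ Y.card →
      ∃ Z ∈ c, Z.card = m := fun c hc => ((hchains c hc).2).2
  have hmono : ∀ c ∈ CC, ∀ X ∈ c, ∀ Y ∈ c, X.card ≤ Y.card → X ⊆ Y := by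
    intro c hc X hX Y hY h
    rcases htot c hc X hX Y hY with h1 | h1
    · exact h1
    · have hxy := Finset.eq_of_subset_of_card_le h1 h
      rw [hxy]
  have hcardinj : ∀ c ∈ CC, ∀ X ∈ c, ∀ Y ∈ c, X.card = Y.card → X = Y := by
    intro c hc X hX Y hY h
    exact Finset.Subset.antisymm (hmono c hc X hX Y hY h.le) (hmono c hc Y hY X hX h.ge)
  have chain_unique : ∀ Z : Finset ℕ, ∀ c ∈ CC, ∀ c' ∈ CC, Z ∈ c → Z ∈ c' → c = c' := by
    intro Z c hc c' hc' h1 h2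
    by_contra hne
    exact (Finset.disjoint_left.mp (hdisj c hc c' hc' hne)) h1 h2
  have hexists : ∀ Z ∈ D, ∃ c, c ∈ CC ∧ Z ∈ c := by
    intro Z hZ
    rw [← hunion] at hZ
    obtain ⟨c, hc, hZc⟩ := Finset.mem_biUnion.mp hZ
    exact ⟨c, hc, hZc⟩
  -- the chain containing a given member of D
  set chainOf : Finset ℕ → Finset (Finset ℕ) := fun Z =>
    if h : ∃ c, c ∈ CC ∧ Z ∈ c then h.choose else ∅ with hchainOfDef
  have chainOf_spec : ∀ Z ∈ D, chainOf Z ∈ CC ∧ Z ∈ chainOf Z := by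
    intro Z hZ
    have h := hexists Z hZ
    simp only [hchainOfDef, dif_pos h]
    exact h.choose_spec
  -- a maximum antichain
  obtain ⟨A, hAD, hAanti, hAcard⟩ := exists_max_antichain D
  -- every chain contains an element of A
  have hAchain : ∀ c ∈ CC, ∃ a ∈ A, a ∈ c := by
    have hinj : Set.InjOn chainOf ↑A := by
      intro a ha b hb hab
      rw [Finset.mem_coe] at ha hb
      by_contra hne
      obtain ⟨h1, h2⟩ := chainOf_spec a (hAD ha)
      obtain ⟨h3, h4⟩ := chainOf_spec b (hAD hb)
      have hbc : b ∈ chainOf a := by rw [hab]; exact h4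
      rcases htot _ h1 a h2 b hbc with h | h
      · exact hAanti a ha b hb hne h
      · exact hAanti b hb a ha (Ne.symm hne) h
    have himg : A.image chainOf = CC := by
      apply Finset.eq_of_subset_of_card_le
      · intro c hc
        obtain ⟨a, ha, rfl⟩ := Finset.mem_image.mp hc
        exact (chainOf_spec a (hAD ha)).1
      · rw [Finset.card_image_of_injOn hinj, hAcard, hPcard]
    intro c hc
    rw [← himg] at hc
    obtain ⟨a, ha, hac⟩ := Finset.mem_image.mp hc
    exact ⟨a, ha, hac ▸ (chainOf_spec a (hAD ha)).2⟩
  -- the picked vertex in each chain meeting levels i-1 or i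
  set pick : Finset (Finset ℕ) → Finset ℕ := fun c =>
    if ∃ a ∈ c, a ∈ A ∧ a.card + 1 ≤ i then
      (if h : ∃ Z ∈ c, Z.card + 1 = i then h.choose else ∅)
    else
      (if h : ∃ Z ∈ c, Z.card = i then h.choose else ∅) with hpickDef
  have pick_spec : ∀ c ∈ CC, (∃ Z ∈ c, Z.card + 1 = i ∨ Z.card = i) →
      pick c ∈ c ∧
      (((pick c).card + 1 = i ∧ ∃ a ∈ A, a ∈ c ∧ a ⊆ pick c) ∨
       ((pick c).card = i ∧ ∃ a ∈ A, a ∈ c ∧ pick c ⊆ a)) := by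
    intro c hc hz
    obtain ⟨z, hzc, hzcard⟩ := hz
    by_cases hb : ∃ a ∈ c, a ∈ A ∧ a.card + 1 ≤ i
    · obtain ⟨a, hac, haA, hacard⟩ := hb
      have hex : ∃ Z ∈ c, Z.card + 1 = i := by
        obtain ⟨Z, hZc, hZcard⟩ := hskip c hc a hac z hzc (i - 1) (by omega) (by omega)
        exact ⟨Z, hZc, by omega⟩
      have hpc : pick c = hex.choose := by
        simp only [hpickDef]
        rw [if_pos ⟨a, hac, haA, hacard⟩, dif_pos hex]
      obtain ⟨h1, h2⟩ := hex.choose_spec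
      rw [hpc]
      refine ⟨h1, Or.inl ⟨h2, a, haA, hac, ?_⟩⟩
      exact hmono c hc a hac _ h1 (by omega)
    · obtain ⟨a, haA, hac⟩ := hAchain c hc
      have hacard : i ≤ a.card := by
        by_contra h
        exact hb ⟨a, hac, haA, by omega⟩
      have hex : ∃ Z ∈ c, Z.card = i :=
        hskip c hc z hzc a hac i (by omega) hacard
      have hpc : pick c = hex.choose := by
        simp only [hpickDef]
        rw [if_neg hb, dif_pos hex]
      obtain ⟨h1, h2⟩ := hex.choose_spec
      rw [hpc]
      exact ⟨h1, Or.inr ⟨h2, a, haA, hac, hmono c hc _ h1 a hac (by omega)⟩⟩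
  set ST := CC.filter (fun c => ∃ Z ∈ c, Z.card + 1 = i ∨ Z.card = i) with hSTdef
  set A' := ST.image pick with hA'Def
  set I := CC.filter (fun c => (∃ W ∈ c, W.card + 1 = i) ∧ (∃ W ∈ c, W.card = i)) with hIdef
  -- A' is an antichain between the two levels
  have antiA' : ∀ X ∈ A', ∀ Y ∈ A', X.card + 1 = i → Y.card = i → ¬ X ⊆ Y := by
    intro X hX Y hY hXc hYc hXY
    rw [hA'Def] at hX hY
    obtain ⟨c, hcST, rfl⟩ := Finset.mem_image.mp hX
    obtain ⟨c', hc'ST, rfl⟩ := Finset.mem_image.mp hY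
    rw [hSTdef, Finset.mem_filter] at hcST hc'ST
    obtain ⟨hc, hcz⟩ := hcST
    obtain ⟨hc', hc'z⟩ := hc'ST
    obtain ⟨hmem, hcs⟩ := pick_spec c hc hcz
    obtain ⟨hmem', hcs'⟩ := pick_spec c' hc' hc'z
    rcases hcs with ⟨-, a, haA, hac, hsub1⟩ | ⟨h, -⟩
    · rcases hcs' with ⟨h, -⟩ | ⟨-, a', ha'A, ha'c, hsub2⟩
      · omega
      · have hne : c ≠ c' := by
          intro h
          subst h
          omega
        have hane : a ≠ a' := by
          intro h
          subst h
          exact (Finset.disjoint_left.mp (hdisj c hc c' hc' hne)) hac ha'c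
        exact hAanti a haA a' ha'A hane (hsub1.trans (hXY.trans hsub2))
    · omega
  -- a vertex of either level not in A' lives in a chain meeting both levels
  have L2 : ∀ Z ∈ D, (Z.card + 1 = i ∨ Z.card = i) → Z ∉ A' → chainOf Z ∈ I := by
    intro Z hZD hZlev hZA'
    obtain ⟨hcCC, hZmem⟩ := chainOf_spec Z hZD
    have hcST : chainOf Z ∈ ST := by
      rw [hSTdef, Finset.mem_filter]
      exact ⟨hcCC, Z, hZmem, hZlev⟩
    have hpickA' : pick (chainOf Z) ∈ A' := by
      rw [hA'Def]
      exact Finset.mem_image_of_mem pick hcST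
    obtain ⟨hpmem, hpcs⟩ := pick_spec (chainOf Z) hcCC ⟨Z, hZmem, hZlev⟩
    rw [hIdef, Finset.mem_filter]
    refine ⟨hcCC, ?_, ?_⟩
    · rcases hZlev with h | h
      · exact ⟨Z, hZmem, h⟩
      · rcases hpcs with ⟨hp, -⟩ | ⟨hp, -⟩
        · exact ⟨pick (chainOf Z), hpmem, hp⟩
        · have : pick (chainOf Z) = Z := hcardinj _ hcCC _ hpmem Z hZmem (by omega)
          rw [this] at hpickA'
          exact absurd hpickA' hZA'
    · rcases hZlev with h | h
      · rcases hpcs with ⟨hp, -⟩ | ⟨hp, -⟩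
        · have : pick (chainOf Z) = Z := hcardinj _ hcCC _ hpmem Z hZmem (by omega)
          rw [this] at hpickA'
          exact absurd hpickA' hZA'
        · exact ⟨pick (chainOf Z), hpmem, hp⟩
      · exact ⟨Z, hZmem, h⟩
  -- same chain and same card forces equality
  have key : ∀ X Y : Finset ℕ, X ∈ D → Y ∈ D → chainOf X = chainOf Y → X.card = Y.card →
      X = Y := by
    intro X Y hX hY hch hcd
    obtain ⟨h1, h2⟩ := chainOf_spec X hX
    have h3 : Y ∈ chainOf X := by
      rw [hch]
      exact (chainOf_spec Y hY).2
    exact hcardinj _ h1 X h2 Y h3 hcd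
  -- two blocked vertices at different levels cannot share a chain
  have key2 : ∀ X Y : Finset ℕ, X ∈ D → Y ∈ D → X.card + 1 = i → Y.card = i →
      X ∉ A' → Y ∉ A' → chainOf X ≠ chainOf Y := by
    intro X Y hX hY hXc hYc hXA hYA hch
    obtain ⟨h1, h2⟩ := chainOf_spec X hX
    have h3 : Y ∈ chainOf X := by
      rw [hch]
      exact (chainOf_spec Y hY).2
    have hcST : chainOf X ∈ ST := by
      rw [hSTdef, Finset.mem_filter]
      exact ⟨h1, X, h2, Or.inl hXc⟩
    have hpickA' : pick (chainOf X) ∈ A' := by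
      rw [hA'Def]
      exact Finset.mem_image_of_mem pick hcST
    obtain ⟨hpmem, hpcs⟩ := pick_spec (chainOf X) h1 ⟨X, h2, Or.inl hXc⟩
    rcases hpcs with ⟨hp, -⟩ | ⟨hp, -⟩
    · have : pick (chainOf X) = X := hcardinj _ h1 _ hpmem X h2 (by omega)
      rw [this] at hpickA'
      exact hXA hpickA'
    · have : pick (chainOf X) = Y := hcardinj _ h1 _ hpmem Y h3 (by omega)
      rw [this] at hpickA'
      exact hYA hpickA'
  -- any matching injects into I
  have hMIneq : ∀ M : Finset (Finset ℕ × Finset ℕ), IsMatching D i M → M.card ≤ I.card := by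
    intro M hM
    obtain ⟨hM1, hM2⟩ := hM
    have hZ : ∀ e ∈ M, (if e.1 ∈ A' then e.2 else e.1) ∉ A' ∧
        (if e.1 ∈ A' then e.2 else e.1) ∈ D ∧
        (((if e.1 ∈ A' then e.2 else e.1) = e.1 ∧ e.1.card + 1 = i) ∨
         ((if e.1 ∈ A' then e.2 else e.1) = e.2 ∧ e.2.card = i)) := by
      intro e he
      obtain ⟨h1D, h2D, h1c, h2c, hss⟩ := hM1 e he
      by_cases h : e.1 ∈ A'
      · rw [if_pos h]
        refine ⟨?_, h2D, Or.inr ⟨rfl, h2c⟩⟩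
        intro h2
        exact antiA' e.1 h e.2 h2 h1c h2c hss.subset
      · rw [if_neg h]
        exact ⟨h, h1D, Or.inl ⟨rfl, h1c⟩⟩
    apply Finset.card_le_card_of_injOn (fun e => chainOf (if e.1 ∈ A' then e.2 else e.1))
    · intro e he
      obtain ⟨hnA, hD', hcases⟩ := hZ e he
      refine L2 _ hD' ?_ hnA
      rcases hcases with ⟨heq, hc⟩ | ⟨heq, hc⟩
      · rw [heq]; exact Or.inl hc
      · rw [heq]; exact Or.inr hc
    · intro e he f' hf' hef
      rw [Finset.mem_coe] at he hf'
      dsimp only at hef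
      by_contra hne
      obtain ⟨hne1, hne2⟩ := hM2 e he f' hf' hne
      obtain ⟨hnAe, hDe, hce⟩ := hZ e he
      obtain ⟨hnAf, hDf, hcf⟩ := hZ f' hf'
      rcases hce with ⟨heq, hc⟩ | ⟨heq, hc⟩ <;> rcases hcf with ⟨heq', hc'⟩ | ⟨heq', hc'⟩
      · have := key _ _ hDe hDf hef (by rw [heq, heq']; omega)
        rw [heq, heq'] at this
        exact hne1 this
      · exact key2 _ _ hDe hDf (by rw [heq]; exact hc) (by rw [heq']; exact hc')
          hnAe hnAf hef
      · exact key2 _ _ hDf hDe (by rw [heq']; exact hc') (by rw [heq]; exact hc)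
          hnAf hnAe hef.symm
      · have := key _ _ hDe hDf hef (by rw [heq, heq']; omega)
        rw [heq, heq'] at this
        exact hne2 this
  -- I injects into the chain matching
  have hIMc : I.card ≤ Mc.card := by
    apply Finset.card_le_card_of_injOn (fun c =>
      ((if h : ∃ Z ∈ c, Z.card + 1 = i then h.choose else ∅),
       (if h : ∃ Z ∈ c, Z.card = i then h.choose else ∅)))
    · intro c hc
      rw [hIdef, Finset.mem_coe, Finset.mem_filter] at hc
      obtain ⟨hcCC, h1, h2⟩ := hc
      beta_reduce
      rw [dif_pos h1, dif_pos h2]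
      obtain ⟨hx, hxc⟩ := h1.choose_spec
      obtain ⟨hy, hyc⟩ := h2.choose_spec
      rw [hMcDef]
      refine Finset.mem_filter.mpr ⟨Finset.mem_product.mpr ⟨hsub c hcCC hx, hsub c hcCC hy⟩,
        hxc, hyc, ?_, c, hcCC, hx, hy⟩
      show h1.choose ⊂ h2.choose
      rw [Finset.ssubset_iff_subset_ne]
      refine ⟨hmono c hcCC _ hx _ hy (by omega), ?_⟩
      intro h
      rw [h] at hxc
      omega
    · intro c hc c' hc' hcc
      rw [Finset.mem_coe, hIdef, Finset.mem_filter] at hc hc'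
      obtain ⟨hcCC, h1, h2⟩ := hc
      obtain ⟨hc'CC, h1', h2'⟩ := hc'
      dsimp only at hcc
      rw [dif_pos h1, dif_pos h2, dif_pos h1', dif_pos h2', Prod.mk.injEq] at hcc
      obtain ⟨hx, -⟩ := h1.choose_spec
      obtain ⟨hx', -⟩ := h1'.choose_spec
      rw [hcc.1] at hx
      exact chain_unique _ c hcCC c' hc'CC hx hx'
  constructor
  · constructor
    · intro e he
      rw [hMcDef, Finset.mem_filter] at he
      obtain ⟨hp, h1, h2, h3, -⟩ := he
      rw [Finset.mem_product] at hp
      exact ⟨hp.1, hp.2, h1, h2, h3⟩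
    · intro e he f' hf' hne
      rw [hMcDef, Finset.mem_filter] at he hf'
      obtain ⟨hp, h1c, h2c, hss, c, hcCC, he1, he2⟩ := he
      obtain ⟨hp', h1c', h2c', hss', c', hc'CC, hf1, hf2⟩ := hf'
      constructor
      · intro h
        have hcc : c = c' := chain_unique e.1 c hcCC c' hc'CC he1 (by rw [h]; exact hf1)
        have h2 : e.2 = f'.2 := by
          refine hcardinj c hcCC e.2 he2 f'.2 ?_ (by omega)
          rw [hcc]
          exact hf2
        exact hne (Prod.ext h h2)
      · intro h
        have hcc : c = c' := chain_unique e.2 c hcCC c' hc'CC he2 (by rw [h]; exact hf2)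
        have h1 : e.1 = f'.1 := by
          refine hcardinj c hcCC e.1 he1 f'.1 ?_ (by omega)
          rw [hcc]
          exact hf1
        exact hne (Prod.ext h1 h)
  · intro M hM
    exact le_trans (hMIneq M hM) hIMc
end

section
/- Let m ≥ 1 and 1 ≤ k ≤ n−1. There is no convex subset T of B(n) with T ⊆ L_{k−1} ∪ L_k ∪ L_{k+1} such that T can be partitioned into m skipless three-element chains C_i ⊂ B_i ⊂ A_i (with |C_i| = k−1, |B_i| = k, |A_i| = k+1 for each i = 1,…,m) and w(T) = m. -/
open scoped Classical

/-- There is no three-level convex subset `T` of `B(n)` (lying in levels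
`k-1`, `k`, `k+1`) of width `m` that can be partitioned into `m` skipless
three-element chains `C_i ⊂ B_i ⊂ A_i`. -/
theorem no_three_level_convex (n m k : ℕ) (hm : 1 ≤ m) (hk : 1 ≤ k) (hkn : k + 1 ≤ n)
    (A B C : Fin m → Finset ℕ)
    (hAsub : ∀ i, A i ⊆ Finset.Icc 1 n)
    (hCcard : ∀ i, (C i).card + 1 = k)
    (hBcard : ∀ i, (B i).card = k)
    (hAcard : ∀ i, (A i).card = k + 1)
    (hCB : ∀ i, C i ⊂ B i) (hBA : ∀ i, B i ⊂ A i)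
    (hAinj : Function.Injective A)
    (hBinj : Function.Injective B)
    (hCinj : Function.Injective C)
    (T : Finset (Finset ℕ))
    (hT : T = Finset.univ.image C ∪ Finset.univ.image B ∪ Finset.univ.image A)
    (hconv : ∀ X ∈ T, ∀ Y ∈ T, ∀ Z, X ⊆ Z → Z ⊆ Y → Z ∈ T)
    (hwidth : width T = m) :
    False := by
  classical
  -- memberships
  have hCT : ∀ i, C i ∈ T := by
    intro i
    rw [hT]
    exact Finset.mem_union_left _ (Finset.mem_union_left _
      (Finset.mem_image.2 ⟨i, Finset.mem_univ i, rfl⟩))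
  have hBT : ∀ i, B i ∈ T := by
    intro i
    rw [hT]
    exact Finset.mem_union_left _ (Finset.mem_union_right _
      (Finset.mem_image.2 ⟨i, Finset.mem_univ i, rfl⟩))
  have hAT : ∀ i, A i ∈ T := by
    intro i
    rw [hT]
    exact Finset.mem_union_right _ (Finset.mem_image.2 ⟨i, Finset.mem_univ i, rfl⟩)
  -- every member of T of cardinality k is one of the B i
  have hclass : ∀ S : Finset ℕ, S ∈ T → S.card = k → ∃ l, B l = S := by
    intro S hS hcard
    rw [hT] at hS
    rcases Finset.mem_union.1 hS with hS' | hSA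
    · rcases Finset.mem_union.1 hS' with hSC | hSB
      · rcases Finset.mem_image.1 hSC with ⟨l, -, hl⟩
        have h1 := hCcard l
        rw [hl] at h1
        omega
      · rcases Finset.mem_image.1 hSB with ⟨l, -, hl⟩
        exact ⟨l, hl⟩
    · rcases Finset.mem_image.1 hSA with ⟨l, -, hl⟩
      have h1 := hAcard l
      rw [hl] at h1
      omega
  -- Claim 1: for each i, #{j : B i ⊆ A j} + 1 ≤ #{j : C i ⊆ B j}
  have claim1 : ∀ i : Fin m,
      (Finset.univ.filter (fun j => B i ⊆ A j)).card + 1 ≤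
      (Finset.univ.filter (fun j => C i ⊆ B j)).card := by
    intro i
    have hiV : i ∈ Finset.univ.filter (fun j => C i ⊆ B j) :=
      Finset.mem_filter.2 ⟨Finset.mem_univ i, (hCB i).subset⟩
    have key : ∀ j : Fin m, ∃ l : Fin m, j ∈ Finset.univ.filter (fun j => B i ⊆ A j) →
        (l ∈ (Finset.univ.filter (fun j => C i ⊆ B j)).erase i ∧
          A j = B i ∪ (B l \ C i)) := by
      intro j
      by_cases hj : B i ⊆ A j
      · have hcard1 : (A j \ B i).card = 1 := by
          rw [Finset.card_sdiff_of_subset hj, hAcard, hBcard]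
          omega
        obtain ⟨w, hw⟩ := Finset.card_eq_one.1 hcard1
        have hwmem : w ∈ A j \ B i := by rw [hw]; exact Finset.mem_singleton_self w
        have hwA : w ∈ A j := (Finset.mem_sdiff.1 hwmem).1
        have hwB : w ∉ B i := (Finset.mem_sdiff.1 hwmem).2
        have hwC : w ∉ C i := fun h => hwB ((hCB i).subset h)
        have hsub1 : C i ⊆ insert w (C i) := Finset.subset_insert w (C i)
        have hsub2 : insert w (C i) ⊆ A j :=
          Finset.insert_subset hwA (subset_trans (hCB i).subset hj)
        have hST : insert w (C i) ∈ T := hconv (C i) (hCT i) (A j) (hAT j) _ hsub1 hsub2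
        have hSk : (insert w (C i)).card = k := by
          rw [Finset.card_insert_of_notMem hwC]
          exact hCcard i
        obtain ⟨l, hl⟩ := hclass _ hST hSk
        have hBlBi : B l ≠ B i := by
          rw [hl]
          intro hEq
          exact hwB (hEq ▸ Finset.mem_insert_self w (C i))
        have hli : l ≠ i := fun h => hBlBi (by rw [h])
        have hlV : l ∈ Finset.univ.filter (fun j => C i ⊆ B j) :=
          Finset.mem_filter.2 ⟨Finset.mem_univ l, by rw [hl]; exact hsub1⟩
        have hrec : B l \ C i = {w} := by
          rw [hl]
          ext x
          simp only [Finset.mem_sdiff, Finset.mem_insert, Finset.mem_singleton]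
          constructor
          · rintro ⟨h1 | h1, h2⟩
            · exact h1
            · exact absurd h1 h2
          · rintro rfl
            exact ⟨Or.inl rfl, hwC⟩
        refine ⟨l, fun _ => ⟨Finset.mem_erase.2 ⟨hli, hlV⟩, ?_⟩⟩
        rw [hrec, ← hw]
        exact (Finset.union_sdiff_of_subset hj).symm
      · exact ⟨i, fun hjU => absurd (Finset.mem_filter.1 hjU).2 hj⟩
    choose f hf using key
    have hinj : (Finset.univ.filter (fun j => B i ⊆ A j)).card ≤
        ((Finset.univ.filter (fun j => C i ⊆ B j)).erase i).card := by
      apply Finset.card_le_card_of_injOn f (fun j hj => (hf j hj).1)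
      intro j1 h1 j2 h2 heq
      apply hAinj
      rw [(hf j1 h1).2, (hf j2 h2).2, heq]
    have herase : ((Finset.univ.filter (fun j => C i ⊆ B j)).erase i).card =
        (Finset.univ.filter (fun j => C i ⊆ B j)).card - 1 :=
      Finset.card_erase_of_mem hiV
    have hpos : 1 ≤ (Finset.univ.filter (fun j => C i ⊆ B j)).card :=
      Finset.card_pos.2 ⟨i, hiV⟩
    omega
  -- Claim 2: for each i, #{j : C j ⊆ B i} + 1 ≤ #{j : B j ⊆ A i}
  have claim2 : ∀ i : Fin m,
      (Finset.univ.filter (fun j => C j ⊆ B i)).card + 1 ≤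
      (Finset.univ.filter (fun j => B j ⊆ A i)).card := by
    intro i
    have hiH : i ∈ Finset.univ.filter (fun j => B j ⊆ A i) :=
      Finset.mem_filter.2 ⟨Finset.mem_univ i, (hBA i).subset⟩
    have hcard1 : (A i \ B i).card = 1 := by
      rw [Finset.card_sdiff_of_subset (hBA i).subset, hAcard, hBcard]
      omega
    obtain ⟨a, ha⟩ := Finset.card_eq_one.1 hcard1
    have hamem : a ∈ A i \ B i := by rw [ha]; exact Finset.mem_singleton_self a
    have haA : a ∈ A i := (Finset.mem_sdiff.1 hamem).1
    have haB : a ∉ B i := (Finset.mem_sdiff.1 hamem).2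
    have key : ∀ j : Fin m, ∃ l : Fin m, j ∈ Finset.univ.filter (fun j => C j ⊆ B i) →
        (l ∈ (Finset.univ.filter (fun j => B j ⊆ A i)).erase i ∧
          C j = B l \ (A i \ B i)) := by
      intro j
      by_cases hj : C j ⊆ B i
      · have haC : a ∉ C j := fun h => haB (hj h)
        have hsub1 : C j ⊆ insert a (C j) := Finset.subset_insert a (C j)
        have hsub2 : insert a (C j) ⊆ A i :=
          Finset.insert_subset haA (subset_trans hj (hBA i).subset)
        have hST : insert a (C j) ∈ T := hconv (C j) (hCT j) (A i) (hAT i) _ hsub1 hsub2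
        have hSk : (insert a (C j)).card = k := by
          rw [Finset.card_insert_of_notMem haC]
          exact hCcard j
        obtain ⟨l, hl⟩ := hclass _ hST hSk
        have hBlBi : B l ≠ B i := by
          rw [hl]
          intro hEq
          exact haB (hEq ▸ Finset.mem_insert_self a (C j))
        have hli : l ≠ i := fun h => hBlBi (by rw [h])
        have hlH : l ∈ Finset.univ.filter (fun j => B j ⊆ A i) :=
          Finset.mem_filter.2 ⟨Finset.mem_univ l, by rw [hl]; exact hsub2⟩
        have hrec : C j = B l \ (A i \ B i) := by
          rw [ha, hl]
          ext x
          simp only [Finset.mem_sdiff, Finset.mem_insert, Finset.mem_singleton]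
          constructor
          · intro hx
            exact ⟨Or.inr hx, fun hxa => haC (hxa ▸ hx)⟩
          · rintro ⟨h1 | h1, h2⟩
            · exact absurd h1 h2
            · exact h1
        exact ⟨l, fun _ => ⟨Finset.mem_erase.2 ⟨hli, hlH⟩, hrec⟩⟩
      · exact ⟨i, fun hjU => absurd (Finset.mem_filter.1 hjU).2 hj⟩
    choose f hf using key
    have hinj : (Finset.univ.filter (fun j => C j ⊆ B i)).card ≤
        ((Finset.univ.filter (fun j => B j ⊆ A i)).erase i).card := by
      apply Finset.card_le_card_of_injOn f (fun j hj => (hf j hj).1)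
      intro j1 h1 j2 h2 heq
      apply hCinj
      rw [(hf j1 h1).2, (hf j2 h2).2, heq]
    have herase : ((Finset.univ.filter (fun j => B j ⊆ A i)).erase i).card =
        (Finset.univ.filter (fun j => B j ⊆ A i)).card - 1 :=
      Finset.card_erase_of_mem hiH
    have hpos : 1 ≤ (Finset.univ.filter (fun j => B j ⊆ A i)).card :=
      Finset.card_pos.2 ⟨i, hiH⟩
    omega
  -- double counting identities
  have hsum1 : ∑ i : Fin m, (Finset.univ.filter (fun j => B i ⊆ A j)).card =
      ∑ i : Fin m, (Finset.univ.filter (fun j => B j ⊆ A i)).card := by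
    simp only [Finset.card_filter]
    exact Finset.sum_comm
  have hsum2 : ∑ i : Fin m, (Finset.univ.filter (fun j => C j ⊆ B i)).card =
      ∑ i : Fin m, (Finset.univ.filter (fun j => C i ⊆ B j)).card := by
    simp only [Finset.card_filter]
    exact Finset.sum_comm
  -- summing the claims
  have hS1 : (∑ i : Fin m, (Finset.univ.filter (fun j => B i ⊆ A j)).card) + m ≤
      ∑ i : Fin m, (Finset.univ.filter (fun j => C i ⊆ B j)).card := by
    have h := Finset.sum_le_sum (fun i (_ : i ∈ Finset.univ) => claim1 i)
    have hconst : ∑ _i : Fin m, 1 = m := by simp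
    calc (∑ i : Fin m, (Finset.univ.filter (fun j => B i ⊆ A j)).card) + m
        = ∑ i : Fin m, ((Finset.univ.filter (fun j => B i ⊆ A j)).card + 1) := by
          rw [Finset.sum_add_distrib, hconst]
      _ ≤ ∑ i : Fin m, (Finset.univ.filter (fun j => C i ⊆ B j)).card := h
  have hS2 : (∑ i : Fin m, (Finset.univ.filter (fun j => C j ⊆ B i)).card) + m ≤
      ∑ i : Fin m, (Finset.univ.filter (fun j => B j ⊆ A i)).card := by
    have h := Finset.sum_le_sum (fun i (_ : i ∈ Finset.univ) => claim2 i)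
    have hconst : ∑ _i : Fin m, 1 = m := by simp
    calc (∑ i : Fin m, (Finset.univ.filter (fun j => C j ⊆ B i)).card) + m
        = ∑ i : Fin m, ((Finset.univ.filter (fun j => C j ⊆ B i)).card + 1) := by
          rw [Finset.sum_add_distrib, hconst]
      _ ≤ ∑ i : Fin m, (Finset.univ.filter (fun j => B j ⊆ A i)).card := h
  omega
end

section
/- Let r ≥ 1, let T be a heavy family of r-element subsets of [n], and let H = ↓T. If X ∈ H with |X| = k < r, then X has at least 2(r − k) − 1 upper covers in H; that is, |{Y ∈ H : X ⊂ Y and |Y| = k+1}| ≥ 2(r − k) − 1. -/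
open scoped Classical

/-- The downset generated by a family of finite sets. -/
def downGen (T : Finset (Finset ℕ)) : Finset (Finset ℕ) :=
  T.biUnion Finset.powerset

/-- In the downset `H` generated by a heavy family of `r`-sets, every `k`-set
with `k < r` has at least `2(r - k) - 1` upper covers in `H`. -/
theorem heavy_upper_covers (n r k : ℕ) (hr : 1 ≤ r) (T : Finset (Finset ℕ))
    (hT : ∀ A ∈ T, A ⊆ Finset.Icc 1 n)
    (hTr : ∀ A ∈ T, A.card = r)
    (heavy : width (downGen T) ≤ T.card)
    (X : Finset ℕ) (hX : X ∈ downGen T) (hXk : X.card = k) (hkr : k < r) :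
    2 * (r - k) - 1 ≤ ((downGen T).filter (fun Y => X ⊂ Y ∧ Y.card = k + 1)).card := by
  classical
  by_contra hcon
  push_neg at hcon
  set d := r - k with hd
  have hd1 : 1 ≤ d := by omega
  set TX := T.filter (fun A => X ⊆ A) with hTXdef
  have hmemTX : ∀ A, A ∈ TX ↔ A ∈ T ∧ X ⊆ A := by
    intro A; simp [hTXdef]
  obtain ⟨B, hB, hXB⟩ : ∃ B ∈ T, X ⊆ B := by
    simpa [downGen, Finset.mem_biUnion, Finset.mem_powerset] using hX
  have hBTX : B ∈ TX := (hmemTX B).2 ⟨hB, hXB⟩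
  have ht1 : 1 ≤ TX.card := Finset.card_pos.mpr ⟨B, hBTX⟩
  have hTXsub : TX ⊆ T := Finset.filter_subset _ _
  set U := TX.biUnion (fun A => A \ X) with hUdef
  have hmemU : ∀ y, y ∈ U ↔ ∃ A ∈ TX, y ∈ A ∧ y ∉ X := by
    intro y; simp [hUdef, Finset.mem_biUnion, Finset.mem_sdiff]
  have hmemDG : ∀ Y : Finset ℕ, Y ∈ downGen T ↔ ∃ A ∈ T, Y ⊆ A := by
    intro Y; simp [downGen, Finset.mem_biUnion, Finset.mem_powerset]
  -- The covers of X are exactly `insert y X` for `y ∈ U`.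
  have hcov : (downGen T).filter (fun Y => X ⊂ Y ∧ Y.card = k + 1)
      = U.image (fun y => insert y X) := by
    ext Y
    simp only [Finset.mem_filter, Finset.mem_image]
    constructor
    · rintro ⟨hY, hXY, hYc⟩
      obtain ⟨A, hA, hYA⟩ := (hmemDG Y).1 hY
      have hXYsub : X ⊆ Y := hXY.subset
      have hcard : (Y \ X).card = 1 := by
        rw [Finset.card_sdiff_of_subset hXYsub, hYc, hXk]; omega
      obtain ⟨y, hy⟩ := Finset.card_eq_one.1 hcard
      have hyY : y ∈ Y \ X := by rw [hy]; exact Finset.mem_singleton_self y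
      have hynX : y ∉ X := (Finset.mem_sdiff.1 hyY).2
      refine ⟨y, ?_, ?_⟩
      · refine (hmemU y).2 ⟨A, (hmemTX A).2 ⟨hA, hXYsub.trans hYA⟩,
          hYA (Finset.mem_sdiff.1 hyY).1, hynX⟩
      · -- Y = insert y X
        have : Y = X ∪ {y} := by
          rw [← hy]; exact (Finset.union_sdiff_of_subset hXYsub).symm
        rw [this]; ext z; simp [or_comm]
    · rintro ⟨y, hyU, rfl⟩
      obtain ⟨A, hATX, hyA, hynX⟩ := (hmemU y).1 hyU
      obtain ⟨hAT, hXA⟩ := (hmemTX A).1 hATX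
      refine ⟨(hmemDG _).2 ⟨A, hAT, Finset.insert_subset hyA hXA⟩, ?_, ?_⟩
      · exact Finset.ssubset_insert hynX
      · rw [Finset.card_insert_of_notMem hynX, hXk]
  have hUnX : ∀ y ∈ U, y ∉ X := fun y hy => ((hmemU y).1 hy).choose_spec.2.2
  set m := U.card with hmdef
  have hmcov : ((downGen T).filter (fun Y => X ⊂ Y ∧ Y.card = k + 1)).card = m := by
    rw [hcov]
    apply Finset.card_image_of_injOn
    intro y hy y' hy' h
    have hyn := hUnX y hy
    have h2 : insert y X = insert y' X := h
    have : y ∈ insert y' X := h2 ▸ Finset.mem_insert_self y X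
    rcases Finset.mem_insert.1 this with h1 | h1
    · exact h1
    · exact absurd h1 hyn
  have hm : m < 2 * d - 1 := by rw [← hmcov]; exact hcon
  have hdm : d ≤ m := by
    have hsub : B \ X ⊆ U := by
      intro y hy
      exact (hmemU y).2 ⟨B, hBTX, (Finset.mem_sdiff.1 hy).1, (Finset.mem_sdiff.1 hy).2⟩
    have : (B \ X).card = d := by
      rw [Finset.card_sdiff_of_subset hXB, hTr B hB, hXk]
    calc d = (B \ X).card := this.symm
      _ ≤ U.card := Finset.card_le_card hsub
  have hd2 : 2 ≤ d := by omega
  -- Quotient family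
  set F := TX.image (fun A => A \ X) with hFdef
  have hFcard : F.card = TX.card := by
    apply Finset.card_image_of_injOn
    intro A hA A' hA' h
    have hXA : X ⊆ A := ((hmemTX A).1 hA).2
    have hXA' : X ⊆ A' := ((hmemTX A').1 hA').2
    have h' : A \ X = A' \ X := h
    have e1 : A = (A \ X) ∪ X := (Finset.sdiff_union_of_subset hXA).symm
    have e2 : A' = (A' \ X) ∪ X := (Finset.sdiff_union_of_subset hXA').symm
    rw [e1, e2, h']
  have hFmem : ∀ S ∈ F, S ⊆ U ∧ S.card = d ∧ ∃ A ∈ TX, S = A \ X := by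
    intro S hS
    obtain ⟨A, hA, rfl⟩ := Finset.mem_image.1 hS
    obtain ⟨hAT, hXA⟩ := (hmemTX A).1 hA
    refine ⟨?_, ?_, A, hA, rfl⟩
    · intro y hy
      exact (hmemU y).2 ⟨A, hA, (Finset.mem_sdiff.1 hy).1, (Finset.mem_sdiff.1 hy).2⟩
    · rw [Finset.card_sdiff_of_subset hXA, hTr A hAT, hXk]
  set Sh := F.shadow with hShdef
  have hShmem : ∀ S ∈ Sh, S ⊆ U ∧ S.card = d - 1 ∧ ∃ A ∈ TX, S ⊆ A \ X := by
    intro S hS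
    obtain ⟨E, hE, a, haE, rfl⟩ := Finset.mem_shadow_iff.1 hS
    obtain ⟨hEU, hEc, A, hA, hEA⟩ := hFmem E hE
    refine ⟨(Finset.erase_subset a E).trans hEU, ?_, A, hA, ?_⟩
    · rw [Finset.card_erase_of_mem haE, hEc]
    · rw [← hEA]; exact Finset.erase_subset a E
  -- Double counting: TX.card * d ≤ Sh.card * (m - d + 1)
  have hdc : TX.card * d ≤ Sh.card * (m - d + 1) := by
    have h1 : ((F ×ˢ U).filter (fun p => p.2 ∈ p.1)).card = F.card * d := by
      rw [Finset.card_filter, Finset.sum_product]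
      have : ∀ A ∈ F, (∑ y ∈ U, if y ∈ A then 1 else 0) = d := by
        intro A hA
        obtain ⟨hAU, hAc, _⟩ := hFmem A hA
        rw [← Finset.card_filter]
        have : U.filter (fun y => y ∈ A) = A := by
          ext y; simp only [Finset.mem_filter]
          exact ⟨fun h => h.2, fun h => ⟨hAU h, h⟩⟩
        rw [this, hAc]
      rw [Finset.sum_congr rfl this, Finset.sum_const, smul_eq_mul]
    have h2 : ((Sh ×ˢ U).filter (fun q => q.2 ∉ q.1)).card = Sh.card * (m - d + 1) := by
      rw [Finset.card_filter, Finset.sum_product]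
      have : ∀ S ∈ Sh, (∑ y ∈ U, if y ∉ S then 1 else 0) = m - d + 1 := by
        intro S hS
        obtain ⟨hSU, hSc, _⟩ := hShmem S hS
        rw [← Finset.card_filter]
        have : U.filter (fun y => y ∉ S) = U \ S := by
          ext y; simp [Finset.mem_sdiff]
        rw [this, Finset.card_sdiff_of_subset hSU, hSc, ← hmdef]
        omega
      rw [Finset.sum_congr rfl this, Finset.sum_const, smul_eq_mul]
    rw [← hFcard, ← h1, ← h2]
    apply Finset.card_le_card_of_injOn (fun p => (p.1.erase p.2, p.2))
    · rintro ⟨A, a⟩ hp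
      simp only [Finset.mem_coe, Finset.mem_filter, Finset.mem_product] at hp ⊢
      obtain ⟨⟨hAF, haU⟩, haA⟩ := hp
      refine ⟨⟨?_, haU⟩, Finset.notMem_erase a A⟩
      exact Finset.mem_shadow_iff.2 ⟨A, hAF, a, haA, rfl⟩
    · rintro ⟨A, a⟩ hp ⟨A', a'⟩ hp' h
      simp only [Finset.mem_coe, Finset.mem_filter, Finset.mem_product] at hp hp'
      simp only [Prod.mk.injEq] at h
      obtain ⟨h1, h2⟩ := h
      subst h2
      have : A = A' := by
        rw [← Finset.insert_erase hp.2, h1, Finset.insert_erase hp'.2]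
      simp [this]
  have hShcard : TX.card + 1 ≤ Sh.card := by
    by_contra hle
    push_neg at hle
    have h1 : Sh.card * (m - d + 1) ≤ TX.card * (d - 1) := by
      apply Nat.mul_le_mul
      · omega
      · omega
    have h2 : TX.card * (d - 1) < TX.card * d :=
      (Nat.mul_lt_mul_left (by omega)).2 (by omega)
    omega
  -- Build the big antichain
  set W := (T \ TX) ∪ Sh.image (fun S => X ∪ S) with hWdef
  have hXdisj : ∀ S ∈ Sh, Disjoint X S := by
    intro S hS
    obtain ⟨hSU, _, _⟩ := hShmem S hS
    exact Finset.disjoint_left.2 fun x hx hxS => hUnX x (hSU hxS) hx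
  have hcardXS : ∀ S ∈ Sh, (X ∪ S).card = r - 1 := by
    intro S hS
    obtain ⟨_, hSc, _⟩ := hShmem S hS
    rw [Finset.card_union_of_disjoint (hXdisj S hS), hXk, hSc]
    omega
  have hmemW : ∀ Z ∈ W, (Z ∈ T ∧ ¬ X ⊆ Z) ∨ (∃ S ∈ Sh, Z = X ∪ S) := by
    intro Z hZ
    rcases Finset.mem_union.1 hZ with h | h
    · left
      have := Finset.mem_sdiff.1 h
      refine ⟨this.1, fun hc => this.2 ((hmemTX Z).2 ⟨this.1, hc⟩)⟩
    · right
      obtain ⟨S, hS, rfl⟩ := Finset.mem_image.1 h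
      exact ⟨S, hS, rfl⟩
  have hWsub : W ⊆ downGen T := by
    intro Z hZ
    rcases hmemW Z hZ with ⟨hZT, _⟩ | ⟨S, hS, rfl⟩
    · exact (hmemDG Z).2 ⟨Z, hZT, Finset.Subset.refl Z⟩
    · obtain ⟨_, _, A, hA, hSA⟩ := hShmem S hS
      obtain ⟨hAT, hXA⟩ := (hmemTX A).1 hA
      refine (hmemDG _).2 ⟨A, hAT, Finset.union_subset hXA (hSA.trans (Finset.sdiff_subset))⟩
  have hWcardmem : ∀ Z ∈ W, (Z.card = r ∧ ¬ X ⊆ Z) ∨ (Z.card = r - 1 ∧ X ⊆ Z ∧ ∃ S ∈ Sh, Z = X ∪ S) := by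
    intro Z hZ
    rcases hmemW Z hZ with ⟨hZT, hnX⟩ | ⟨S, hS, rfl⟩
    · exact Or.inl ⟨hTr Z hZT, hnX⟩
    · exact Or.inr ⟨hcardXS S hS, Finset.subset_union_left, S, hS, rfl⟩
  have hWanti : ∀ x ∈ W, ∀ y ∈ W, x ≠ y → ¬ x ⊆ y := by
    intro x hx y hy hne hsub
    rcases hWcardmem x hx with ⟨hxc, hxn⟩ | ⟨hxc, hxX, _⟩ <;>
      rcases hWcardmem y hy with ⟨hyc, hyn⟩ | ⟨hyc, hyX, _⟩
    · exact hne (Finset.eq_of_subset_of_card_le hsub (by omega))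
    · have : x.card ≤ y.card := Finset.card_le_card hsub
      omega
    · exact hyn (hxX.trans hsub)
    · exact hne (Finset.eq_of_subset_of_card_le hsub (by omega))
  have hWwidth : W.card ≤ width (downGen T) := by
    apply Finset.le_sup (f := Finset.card)
    simp only [Finset.mem_filter, Finset.mem_powerset]
    exact ⟨hWsub, hWanti⟩
  -- compute W.card
  have himgcard : (Sh.image (fun S => X ∪ S)).card = Sh.card := by
    apply Finset.card_image_of_injOn
    intro S hS S' hS' h
    have e1 : S = (X ∪ S) \ X := by
      rw [Finset.union_sdiff_left, Finset.sdiff_eq_self_of_disjoint (hXdisj S hS).symm]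
    have e2 : S' = (X ∪ S') \ X := by
      rw [Finset.union_sdiff_left, Finset.sdiff_eq_self_of_disjoint (hXdisj S' hS').symm]
    have h' : X ∪ S = X ∪ S' := h
    rw [e1, e2, h']
  have hdisjW : Disjoint (T \ TX) (Sh.image (fun S => X ∪ S)) := by
    rw [Finset.disjoint_left]
    intro Z hZ hZ'
    obtain ⟨S, hS, rfl⟩ := Finset.mem_image.1 hZ'
    have h1 : (X ∪ S).card = r - 1 := hcardXS S hS
    have h2 : (X ∪ S).card = r := hTr _ (Finset.mem_sdiff.1 hZ).1
    omega
  have hWcard : W.card = (T.card - TX.card) + Sh.card := by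
    rw [hWdef, Finset.card_union_of_disjoint hdisjW, himgcard,
      Finset.card_sdiff_of_subset hTXsub]
  have hTXle : TX.card ≤ T.card := Finset.card_le_card hTXsub
  omega
end
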